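/- arXiv:1612.09171 — 9 statements merged into one kernel-verified Lean document; each statement's English description precedes it below -/
import Mathlib

section
/- For any convex Ψ : ℝ → ℝ, any Γ > 0 and any g, x ∈ ℝ, one has Ŵ(g, x, Γ, Ψ) ≥ (Γ/2)·(d̂(g, x, Γ, Ψ))². -/
/-- The proximal function `W(d, g, x, Γ, Ψ) = -g·d - (Γ/2)·d² + Ψ(x) - Ψ(x + d)`. -/
noncomputable def W (d g x Γ : ℝ) (Ψ : ℝ → ℝ) : ℝ :=
  -(g * d) - Γ / 2 * d ^ 2 + Ψ x - Ψ (x + d)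

/-- `Ŵ(g, x, Γ, Ψ) = sup_{d ∈ ℝ} W(d, g, x, Γ, Ψ)`. -/
noncomputable def What (g x Γ : ℝ) (Ψ : ℝ → ℝ) : ℝ := ⨆ d : ℝ, W d g x Γ Ψ

/-- If `dhat` maximizes `d ↦ W(d, g, x, Γ, Ψ)` (i.e. `dhat = d̂(g,x,Γ,Ψ)`), then
`Ŵ(g,x,Γ,Ψ) ≥ (Γ/2)·d̂(g,x,Γ,Ψ)²`. -/
theorem What_ge_half_Gamma_dhat_sq (Ψ : ℝ → ℝ) (hΨ : ConvexOn ℝ Set.univ Ψ)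
    (Γ : ℝ) (hΓ : 0 < Γ) (g x dhat : ℝ)
    (hd : IsMaxOn (fun d : ℝ => W d g x Γ Ψ) Set.univ dhat) :
    What g x Γ Ψ ≥ Γ / 2 * dhat ^ 2 := by
  have hbdd : BddAbove (Set.range fun d => W d g x Γ Ψ) := by
    refine ⟨W dhat g x Γ Ψ, ?_⟩
    rintro _ ⟨d, rfl⟩
    exact hd (Set.mem_univ d)
  have hsup : W dhat g x Γ Ψ ≤ What g x Γ Ψ := le_ciSup hbdd dhat
  -- main step: for all λ ∈ [0,1), λ * (Γ/2 * dhat^2) ≤ W dhat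
  have key : ∀ l : ℝ, 0 ≤ l → l < 1 → l * (Γ / 2 * dhat ^ 2) ≤ W dhat g x Γ Ψ := by
    intro l hl0 hl1
    have hconv := hΨ.2 (Set.mem_univ x) (Set.mem_univ (x + dhat))
      (show (0:ℝ) ≤ 1 - l by linarith) (show (0:ℝ) ≤ l from hl0) (show (1 - l) + l = 1 by ring)
    simp only [smul_eq_mul] at hconv
    have heq : (1 - l) * x + l * (x + dhat) = x + l * dhat := by ring
    rw [heq] at hconv
    have h1 : W (l * dhat) g x Γ Ψ ≤ W dhat g x Γ Ψ := hd (Set.mem_univ (l * dhat))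
    have h2 : l * (W dhat g x Γ Ψ + Γ / 2 * dhat ^ 2) - Γ / 2 * l ^ 2 * dhat ^ 2
        ≤ W (l * dhat) g x Γ Ψ := by
      simp only [W]
      nlinarith [hconv]
    nlinarith [sq_nonneg dhat, sq_nonneg (1 - l)]
  have hW0 : (0 : ℝ) ≤ W dhat g x Γ Ψ := by
    have := key 0 le_rfl one_pos
    linarith
  have hmain : Γ / 2 * dhat ^ 2 ≤ W dhat g x Γ Ψ := by
    set c := Γ / 2 * dhat ^ 2 with hc
    have hc0 : 0 ≤ c := by positivity
    rcases eq_or_lt_of_le hc0 with h | h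
    · linarith
    · by_contra hcon
      push_neg at hcon
      set w := W dhat g x Γ Ψ
      have hwc : w / c < 1 := (div_lt_one h).mpr hcon
      have hwc0 : 0 ≤ w / c := div_nonneg hW0 hc0
      set l := (w / c + 1) / 2 with hl
      have hl0 : 0 ≤ l := by positivity
      have hl1 : l < 1 := by
        rw [hl]; linarith
      have := key l hl0 hl1
      have hlc : w < l * c := by
        have : w / c < l := by rw [hl]; linarith
        calc w = (w / c) * c := by field_simp
        _ < l * c := by exact mul_lt_mul_of_pos_right this h
      linarith
  linarith
end

section
/- For any convex Ψ : ℝ → ℝ, any Γ > 0, any x ∈ ℝ and any g₁, g₂ ∈ ℝ, one has Ŵ(g₂, x, Γ, Ψ) ≤ (3/2)·Ŵ(g₁, x, Γ, Ψ) + (2/Γ)·(g₁ − g₂)². Equivalently, Ŵ(g₁, x, Γ, Ψ) ≥ (2/3)·Ŵ(g₂, x, Γ, Ψ) − (4/(3Γ))·(g₁ − g₂)². -/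
lemma linear_lower (Ψ : ℝ → ℝ) (hΨ : ConvexOn ℝ Set.univ Ψ) (x d : ℝ) :
    Ψ x - Ψ (x + d) ≤ (|Ψ x - Ψ (x - 1)| + |Ψ (x + 1) - Ψ x|) * |d| := by
  set C := |Ψ x - Ψ (x - 1)| + |Ψ (x + 1) - Ψ x| with hC
  rcases lt_trichotomy d 0 with hd | hd | hd
  · have h := hΨ.slope_mono_adjacent (x := x + d) (y := x) (z := x + 1)
      (Set.mem_univ _) (Set.mem_univ _) (by linarith) (by linarith)
    have h1 : (Ψ x - Ψ (x + d)) / (-d) ≤ Ψ (x + 1) - Ψ x := by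
      have : x - (x + d) = -d := by ring
      have : x + 1 - x = 1 := by ring
      simpa [show x - (x + d) = -d by ring, show x + 1 - x = (1:ℝ) by ring] using h
    have habs : |d| = -d := abs_of_neg hd
    have hnd : 0 < -d := by linarith
    have := (div_le_iff₀ hnd).mp h1
    calc Ψ x - Ψ (x + d) ≤ (Ψ (x + 1) - Ψ x) * (-d) := this
      _ ≤ C * |d| := by
        rw [habs]
        have h2 : Ψ (x + 1) - Ψ x ≤ C := by
          have := abs_nonneg (Ψ x - Ψ (x - 1))
          have := le_abs_self (Ψ (x + 1) - Ψ x)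
          linarith
        nlinarith
  · simp [hd]
  · have h := hΨ.slope_mono_adjacent (x := x - 1) (y := x) (z := x + d)
      (Set.mem_univ _) (Set.mem_univ _) (by linarith) (by linarith)
    have h1 : Ψ x - Ψ (x - 1) ≤ (Ψ (x + d) - Ψ x) / d := by
      simpa [show x - (x - 1) = (1:ℝ) by ring, show x + d - x = d by ring] using h
    have habs : |d| = d := abs_of_pos hd
    have := (le_div_iff₀ hd).mp h1
    have h2 : -C ≤ Ψ x - Ψ (x - 1) := by
      have := abs_nonneg (Ψ (x + 1) - Ψ x)
      have := neg_abs_le (Ψ x - Ψ (x - 1))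
      linarith
    calc Ψ x - Ψ (x + d) ≤ -((Ψ x - Ψ (x - 1)) * d) := by linarith
      _ ≤ C * |d| := by rw [habs]; nlinarith

lemma W_bdd (Ψ : ℝ → ℝ) (hΨ : ConvexOn ℝ Set.univ Ψ)
    (Γ : ℝ) (hΓ : 0 < Γ) (x g : ℝ) :
    BddAbove (Set.range fun d => W d g x Γ Ψ) := by
  set C := |Ψ x - Ψ (x - 1)| + |Ψ (x + 1) - Ψ x| with hC
  refine ⟨(|g| + C) ^ 2 / (2 * Γ), ?_⟩
  rintro _ ⟨d, rfl⟩
  have h1 := linear_lower Ψ hΨ x d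
  have h2 : -(g * d) ≤ |g| * |d| := by
    calc -(g * d) ≤ |g * d| := neg_le_abs _
      _ = |g| * |d| := abs_mul g d
  have hCd : 0 ≤ |g| + C := by positivity
  simp only [W]
  rw [le_div_iff₀ (by positivity : (0:ℝ) < 2 * Γ)]
  have h3 : -(g * d) - Γ / 2 * d ^ 2 + Ψ x - Ψ (x + d) ≤ (|g| + C) * |d| - Γ / 2 * d ^ 2 := by
    rw [hC]; linarith
  have h4' : ∀ B e : ℝ, (B * e - Γ / 2 * e ^ 2) * (2 * Γ) ≤ B ^ 2 := by
    intro B e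
    nlinarith [sq_nonneg (Γ * e - B)]
  have h4 : ((|g| + C) * |d| - Γ / 2 * d ^ 2) * (2 * Γ) ≤ (|g| + C) ^ 2 := by
    rw [← sq_abs d]
    exact h4' (|g| + C) |d|
  calc (-(g * d) - Γ / 2 * d ^ 2 + Ψ x - Ψ (x + d)) * (2 * Γ)
      ≤ ((|g| + C) * |d| - Γ / 2 * d ^ 2) * (2 * Γ) :=
        mul_le_mul_of_nonneg_right h3 (by positivity)
    _ ≤ (|g| + C) ^ 2 := h4

/-- For convex `Ψ`, `Γ > 0`, any `x` and any `g₁, g₂`: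
`Ŵ(g₂,x,Γ,Ψ) ≤ (3/2)·Ŵ(g₁,x,Γ,Ψ) + (2/Γ)·(g₁-g₂)²`, or equivalently,
`Ŵ(g₁,x,Γ,Ψ) ≥ (2/3)·Ŵ(g₂,x,Γ,Ψ) - (4/(3Γ))·(g₁-g₂)²`. -/
theorem What_shift (Ψ : ℝ → ℝ) (hΨ : ConvexOn ℝ Set.univ Ψ)
    (Γ : ℝ) (hΓ : 0 < Γ) (x g₁ g₂ : ℝ) :
    What g₂ x Γ Ψ ≤ 3 / 2 * What g₁ x Γ Ψ + 2 / Γ * (g₁ - g₂) ^ 2 ∧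
    What g₁ x Γ Ψ ≥ 2 / 3 * What g₂ x Γ Ψ - 4 / (3 * Γ) * (g₁ - g₂) ^ 2 := by
  have key : What g₂ x Γ Ψ ≤ 3 / 2 * What g₁ x Γ Ψ + 2 / Γ * (g₁ - g₂) ^ 2 := by
    apply ciSup_le
    intro d
    have hle : W (2 / 3 * d) g₁ x Γ Ψ ≤ What g₁ x Γ Ψ :=
      le_ciSup (W_bdd Ψ hΨ Γ hΓ x g₁) (2 / 3 * d)
    have hconv : Ψ (x + 2 / 3 * d) ≤ 1 / 3 * Ψ x + 2 / 3 * Ψ (x + d) := by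
      have h := hΨ.2 (Set.mem_univ x) (Set.mem_univ (x + d))
        (by norm_num : (0:ℝ) ≤ 1/3) (by norm_num : (0:ℝ) ≤ 2/3) (by norm_num)
      rw [smul_eq_mul, smul_eq_mul, smul_eq_mul, smul_eq_mul,
        show (1:ℝ)/3 * x + 2/3 * (x + d) = x + 2/3 * d from by ring] at h
      exact h
    have haux : (g₁ - g₂) * d - Γ / 6 * d ^ 2 ≤ 2 / Γ * (g₁ - g₂) ^ 2 := by
      rw [← sub_nonneg]
      have hkey : 2 / Γ * (g₁ - g₂) ^ 2 - ((g₁ - g₂) * d - Γ / 6 * d ^ 2)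
          = ((Γ * d - 3 * (g₁ - g₂)) ^ 2 + 3 * (g₁ - g₂) ^ 2) / (6 * Γ) := by
        field_simp
        ring
      rw [hkey]
      positivity
    have hpt : W d g₂ x Γ Ψ ≤ 3 / 2 * W (2 / 3 * d) g₁ x Γ Ψ + 2 / Γ * (g₁ - g₂) ^ 2 := by
      simp only [W]
      nlinarith [hconv, haux]
    linarith
  constructor
  · exact key
  · have h5 : 4 / (3 * Γ) * (g₁ - g₂) ^ 2 = 2 / 3 * (2 / Γ * (g₁ - g₂) ^ 2) := by
      field_simp
      ring
    linarith [key]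
end

section
/- Progress of a single proximal coordinate update, first inequality: let j be a coordinate and suppose Γ_j ≥ L_j, where L_j is a constant such that |∇_j f(x + r·e_j) − ∇_j f(x)| ≤ L_j·|r| for all x ∈ ℝⁿ and r ∈ ℝ. Fix x ∈ ℝⁿ, let g := ∇_j f(x), let g̃ ∈ ℝ be arbitrary (a possibly inaccurate gradient value), set d̃ := d̂(g̃, x_j, Γ_j, Ψ_j), and let x' := x + d̃·e_j. Then F(x) − F(x') ≥ (Γ_j/2)·d̃² − |g − g̃|·|d̃|. -/
/-- The `j`-th partial derivative (coordinate of the gradient) of `f` at `x`. -/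
noncomputable def grad {n : ℕ} (f : (Fin n → ℝ) → ℝ) (x : Fin n → ℝ) (j : Fin n) : ℝ :=
  fderiv ℝ f x (Pi.single j 1)

/-- Descent lemma along a coordinate with coordinatewise Lipschitz gradient. -/
lemma descent_lemma {n : ℕ} (f : (Fin n → ℝ) → ℝ) (hf : Differentiable ℝ f)
    (j : Fin n) (Lj : ℝ)
    (hLj : ∀ (x : Fin n → ℝ) (r : ℝ),
      |grad f (x + r • (Pi.single j 1 : Fin n → ℝ)) j - grad f x j| ≤ Lj * |r|)
    (x : Fin n → ℝ) (d : ℝ) :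
    f (x + d • (Pi.single j 1 : Fin n → ℝ)) ≤
      f x + grad f x j * d + Lj / 2 * d ^ 2 := by
  set e : Fin n → ℝ := Pi.single j 1 with he
  set φ' : ℝ → ℝ := fun t => grad f (x + t • e) j with hφ'
  have hL0 : 0 ≤ Lj := by
    have h := hLj x 1
    have h0 := abs_nonneg (grad f (x + (1:ℝ) • e) j - grad f x j)
    simp only [abs_one, mul_one] at h
    linarith
  have hline : ∀ t : ℝ, HasDerivAt (fun s => f (x + s • e)) (φ' t) t := by
    intro t
    have h1 : HasDerivAt (fun s : ℝ => x + s • e) e t := by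
      simpa using ((hasDerivAt_id t).smul_const e).const_add x
    have h2 := (hf (x + t • e)).hasFDerivAt
    exact h2.comp_hasDerivAt t h1
  have hlip : ∀ s t : ℝ, |φ' t - φ' s| ≤ Lj * |t - s| := by
    intro s t
    have h := hLj (x + s • e) (t - s)
    have harg : x + s • e + (t - s) • e = x + t • e := by
      rw [add_assoc, ← add_smul]; ring_nf
    rw [harg] at h
    exact h
  have hcont : Continuous φ' := by
    have : LipschitzWith (Real.toNNReal Lj) φ' := by
      apply LipschitzWith.of_dist_le_mul
      intro a b
      rw [Real.dist_eq, Real.dist_eq, Real.coe_toNNReal Lj hL0]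
      exact hlip b a
    exact this.continuous
  have hg0 : φ' 0 = grad f x j := by simp [hφ']
  have hbound : ∀ t : ℝ, |φ' t - grad f x j| ≤ Lj * |t| := by
    intro t
    have := hlip 0 t
    simpa [hg0] using this
  have hint1 : IntervalIntegrable (fun t => φ' t - grad f x j) MeasureTheory.volume 0 d :=
    (hcont.sub continuous_const).intervalIntegrable 0 d
  have hftc : ∫ t in (0:ℝ)..d, φ' t = f (x + d • e) - f x := by
    have := intervalIntegral.integral_eq_sub_of_hasDerivAt
      (f := fun s => f (x + s • e)) (f' := φ') (a := 0) (b := d)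
      (fun t _ => hline t) (hcont.intervalIntegrable 0 d)
    simpa using this
  have hkey : f (x + d • e) - f x - grad f x j * d
      = ∫ t in (0:ℝ)..d, (φ' t - grad f x j) := by
    rw [intervalIntegral.integral_sub (hcont.intervalIntegrable 0 d)
      (intervalIntegrable_const), hftc, intervalIntegral.integral_const]
    simp [smul_eq_mul]; ring
  have hineq : ∫ t in (0:ℝ)..d, (φ' t - grad f x j) ≤ Lj / 2 * d ^ 2 := by
    rcases le_or_gt 0 d with hd0 | hd0
    · have hmono : ∫ t in (0:ℝ)..d, (φ' t - grad f x j) ≤ ∫ t in (0:ℝ)..d, Lj * t := by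
        apply intervalIntegral.integral_mono_on hd0 hint1
          ((continuous_const.mul continuous_id).intervalIntegrable 0 d)
        intro t ht
        have h1 := hbound t
        have h2 : |t| = t := abs_of_nonneg ht.1
        rw [h2] at h1
        calc φ' t - grad f x j ≤ |φ' t - grad f x j| := le_abs_self _
          _ ≤ Lj * t := h1
      have : ∫ t in (0:ℝ)..d, Lj * t = Lj / 2 * d ^ 2 := by
        rw [intervalIntegral.integral_const_mul, integral_id]
        ring
      linarith
    · have hsymm : ∫ t in (0:ℝ)..d, (φ' t - grad f x j)
          = -∫ t in d..(0:ℝ), (φ' t - grad f x j) := by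
        rw [intervalIntegral.integral_symm]
      rw [hsymm]
      have hint1' : IntervalIntegrable (fun t => φ' t - grad f x j)
          MeasureTheory.volume d 0 := hint1.symm
      have hmono : ∫ t in d..(0:ℝ), (Lj * t) ≤ ∫ t in d..(0:ℝ), (φ' t - grad f x j) := by
        apply intervalIntegral.integral_mono_on hd0.le
          ((continuous_const.mul continuous_id).intervalIntegrable d 0) hint1'
        intro t ht
        have h1 := hbound t
        have h2 : |t| = -t := abs_of_nonpos ht.2
        rw [h2] at h1
        have := neg_abs_le (φ' t - grad f x j)
        show Lj * t ≤ φ' t - grad f x j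
        nlinarith
      have hval : ∫ t in d..(0:ℝ), (Lj * t) = -(Lj / 2 * d ^ 2) := by
        rw [intervalIntegral.integral_const_mul, integral_id]
        ring
      linarith [hmono]
  linarith [hkey ▸ hineq]

/-- Strong maximality: value of `W` at its maximizer dominates `(Γ/2)d²` worth of slack. -/
lemma max_strong (Ψj : ℝ → ℝ) (hΨ : ConvexOn ℝ Set.univ Ψj) (g xj Γ d : ℝ) (hΓ : 0 < Γ)
    (hd : IsMaxOn (fun d : ℝ => W d g xj Γ Ψj) Set.univ d) :
    Γ * d ^ 2 ≤ -(g * d) + Ψj xj - Ψj (xj + d) := by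
  set c : ℝ := -(g * d) + Ψj xj - Ψj (xj + d) with hc
  have key : ∀ t ∈ Set.Ioc (0:ℝ) 1, Γ / 2 * d ^ 2 * (2 - t) ≤ c := by
    rintro t ⟨ht0, ht1⟩
    have hmax := hd (Set.mem_univ ((1 - t) * d))
    have hconv := hΨ.2 (Set.mem_univ (xj + d)) (Set.mem_univ xj)
      (by linarith : (0:ℝ) ≤ 1 - t) ht0.le (by ring)
    have harg : (1 - t) • (xj + d) + t • xj = xj + (1 - t) * d := by
      simp only [smul_eq_mul]; ring
    rw [harg] at hconv
    simp only [W, Set.mem_setOf_eq] at hmax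
    simp only [smul_eq_mul] at hconv
    have h5 : t * (Γ / 2 * d ^ 2 * (2 - t)) ≤ t * c := by
      rw [hc]; nlinarith [hmax, hconv]
    exact le_of_mul_le_mul_left h5 ht0
  have hten : Filter.Tendsto (fun t : ℝ => Γ / 2 * d ^ 2 * (2 - t))
      (nhdsWithin 0 (Set.Ioi 0)) (nhds (Γ * d ^ 2)) := by
    have h1 : Filter.Tendsto (fun t : ℝ => Γ / 2 * d ^ 2 * (2 - t))
        (nhds 0) (nhds (Γ / 2 * d ^ 2 * (2 - 0))) := by
      exact (Continuous.tendsto (by continuity) 0)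
    have h2 : Γ / 2 * d ^ 2 * (2 - 0) = Γ * d ^ 2 := by ring
    rw [h2] at h1
    exact h1.mono_left nhdsWithin_le_nhds
  have hev : ∀ᶠ t in nhdsWithin 0 (Set.Ioi 0), Γ / 2 * d ^ 2 * (2 - t) ≤ c :=
    Filter.eventually_of_mem (Ioc_mem_nhdsGT_of_mem (by norm_num : (0:ℝ) ∈ Set.Ico 0 1)) key
  exact le_of_tendsto hten hev

/-- Progress of a single proximal coordinate update, first inequality:
for `Γⱼ ≥ Lⱼ`, with `g = ∇ⱼ f(x)`, `g̃` arbitrary, `d̃ = d̂(g̃, xⱼ, Γⱼ, Ψⱼ)` and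
`x' = x + d̃·eⱼ`, we have `F(x) - F(x') ≥ (Γⱼ/2)·d̃² - |g - g̃|·|d̃|`. -/
theorem single_update_progress_one {n : ℕ}
    (f : (Fin n → ℝ) → ℝ) (hf : Differentiable ℝ f) (hfc : ConvexOn ℝ Set.univ f)
    (Ψ : Fin n → ℝ → ℝ) (hΨ : ∀ k, ConvexOn ℝ Set.univ (Ψ k))
    (F : (Fin n → ℝ) → ℝ) (hF : ∀ y, F y = f y + ∑ k, Ψ k (y k))
    (j : Fin n) (Lj Γj : ℝ)
    (hLj : ∀ (x : Fin n → ℝ) (r : ℝ),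
      |grad f (x + r • (Pi.single j 1 : Fin n → ℝ)) j - grad f x j| ≤ Lj * |r|)
    (hΓpos : 0 < Γj) (hΓL : Γj ≥ Lj)
    (x : Fin n → ℝ) (gtilde dtilde : ℝ)
    (hd : IsMaxOn (fun d : ℝ => W d gtilde (x j) Γj (Ψ j)) Set.univ dtilde) :
    F x - F (x + dtilde • (Pi.single j 1 : Fin n → ℝ)) ≥
      Γj / 2 * dtilde ^ 2 - |grad f x j - gtilde| * |dtilde| := by
  set e : Fin n → ℝ := Pi.single j 1 with he
  set x' : Fin n → ℝ := x + dtilde • e with hx'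
  have hdesc : f x' ≤ f x + grad f x j * dtilde + Γj / 2 * dtilde ^ 2 := by
    have h := descent_lemma f hf j Lj hLj x dtilde
    nlinarith [sq_nonneg dtilde]
  have hstr : Γj * dtilde ^ 2 ≤ -(gtilde * dtilde) + Ψ j (x j) - Ψ j (x j + dtilde) :=
    max_strong (Ψ j) (hΨ j) gtilde (x j) Γj dtilde hΓpos hd
  have hxk : ∀ k, x' k = if k = j then x j + dtilde else x k := by
    intro k
    by_cases hk : k = j
    · subst hk; simp [hx', he, Pi.single_apply]
    · simp [hx', he, Pi.single_apply, hk]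
  have hsum : ∑ k, Ψ k (x' k) = ∑ k, Ψ k (x k) + (Ψ j (x j + dtilde) - Ψ j (x j)) := by
    have h1 : ∑ k, (Ψ k (x' k) - Ψ k (x k)) = Ψ j (x' j) - Ψ j (x j) := by
      apply Finset.sum_eq_single_of_mem j (Finset.mem_univ j)
      intro k _ hk
      rw [hxk k, if_neg hk]; ring
    have h2 : x' j = x j + dtilde := by rw [hxk j, if_pos rfl]
    rw [h2] at h1
    have h3 : ∑ k, (Ψ k (x' k) - Ψ k (x k)) = ∑ k, Ψ k (x' k) - ∑ k, Ψ k (x k) :=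
      Finset.sum_sub_distrib _ _
    linarith [h1, h3.symm ▸ h1]
  have habs : (gtilde - grad f x j) * dtilde ≥ -(|grad f x j - gtilde| * |dtilde|) := by
    have h1 := le_abs_self ((grad f x j - gtilde) * dtilde)
    rw [abs_mul] at h1
    nlinarith [h1]
  have hFx := hF x
  have hFx' := hF x'
  rw [hFx, hFx', hsum]
  nlinarith [hdesc, hstr, habs]
end

section
/- Progress of a single proximal coordinate update, second inequality: let j be a coordinate and suppose Γ_j ≥ L_j, where L_j is a constant such that |∇_j f(x + r·e_j) − ∇_j f(x)| ≤ L_j·|r| for all x ∈ ℝⁿ and r ∈ ℝ. Fix x ∈ ℝⁿ, let g := ∇_j f(x), let g̃ ∈ ℝ be arbitrary, set d̃ := d̂(g̃, x_j, Γ_j, Ψ_j), and let x' := x + d̃·e_j. Then F(x) − F(x') ≥ Ŵ(g, x_j, Γ_j, Ψ_j) − (1/Γ_j)·(g − g̃)². -/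
open Filter Topology intervalIntegral in
/-- Strong maximality: a maximizer of `W(·, g, x, Γ, Ψ)` beats any other point
by at least `Γ/2` times the squared distance. -/
lemma strong_max_aux {Ψ : ℝ → ℝ} (hΨ : ConvexOn ℝ Set.univ Ψ) {g x Γ : ℝ} (hΓ : 0 < Γ)
    {dt : ℝ} (hd : IsMaxOn (fun d : ℝ => W d g x Γ Ψ) Set.univ dt) (d : ℝ) :
    W d g x Γ Ψ + Γ / 2 * (d - dt) ^ 2 ≤ W dt g x Γ Ψ := by
  have key : ∀ t : ℝ, 0 < t → t < 1 →
      Γ / 2 * (1 - t) * (d - dt) ^ 2 ≤ W dt g x Γ Ψ - W d g x Γ Ψ := by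
    intro t ht0 ht1
    have hmax := hd (Set.mem_univ ((1 - t) * dt + t * d))
    have hconv := hΨ.2 (Set.mem_univ (x + dt)) (Set.mem_univ (x + d))
      (by linarith : (0:ℝ) ≤ 1 - t) ht0.le (by ring)
    have harg : (1 - t) • (x + dt) + t • (x + d) = x + ((1 - t) * dt + t * d) := by
      simp only [smul_eq_mul]; ring
    rw [harg] at hconv
    simp only [W, smul_eq_mul, Set.mem_univ, Set.mem_setOf_eq] at hmax hconv ⊢
    have hmul : t * (Γ / 2 * (1 - t) * (d - dt) ^ 2) ≤ t * (W dt g x Γ Ψ - W d g x Γ Ψ) := by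
      simp only [W]
      nlinarith [hmax, hconv]
    have := le_of_mul_le_mul_left hmul ht0
    simp only [W] at this
    linarith [this]
  have hev : ∀ᶠ t in 𝓝[>] (0:ℝ), Γ / 2 * (1 - t) * (d - dt) ^ 2 ≤
      W dt g x Γ Ψ - W d g x Γ Ψ := by
    filter_upwards [Ioo_mem_nhdsGT_of_mem (by constructor <;> norm_num :
      (0:ℝ) ∈ Set.Ico (0:ℝ) 1)] with t ht
    exact key t ht.1 ht.2
  have hlim : Tendsto (fun t : ℝ => Γ / 2 * (1 - t) * (d - dt) ^ 2) (𝓝[>] (0:ℝ))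
      (𝓝 (Γ / 2 * (d - dt) ^ 2)) := by
    have hc : ContinuousAt (fun t : ℝ => Γ / 2 * (1 - t) * (d - dt) ^ 2) 0 := by fun_prop
    have h2 : Filter.Tendsto (fun t : ℝ => Γ / 2 * (1 - t) * (d - dt) ^ 2) (𝓝[>] (0:ℝ))
        (𝓝 (Γ / 2 * (1 - 0) * (d - dt) ^ 2)) :=
      hc.tendsto.mono_left nhdsWithin_le_nhds
    simpa using h2
  have := le_of_tendsto hlim hev
  linarith

open intervalIntegral MeasureTheory in
/-- One-dimensional descent lemma. -/
lemma descent_aux {φ G : ℝ → ℝ} (hder : ∀ r, HasDerivAt φ (G r) r)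
    (hcont : Continuous G) {L : ℝ} (hL : ∀ r, |G r - G 0| ≤ L * |r|) (t : ℝ) :
    φ t ≤ φ 0 + G 0 * t + L / 2 * t ^ 2 := by
  have hint : ∀ a b : ℝ, IntervalIntegrable G volume a b := fun a b =>
    hcont.intervalIntegrable a b
  have heq : ∫ r in (0:ℝ)..t, G r = φ t - φ 0 :=
    integral_eq_sub_of_hasDerivAt (fun r _ => hder r) (hint 0 t)
  have heq2 : ∫ r in (0:ℝ)..t, (G r - G 0) = φ t - φ 0 - G 0 * t := by
    rw [intervalIntegral.integral_sub (hint 0 t) (intervalIntegrable_const), heq,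
      intervalIntegral.integral_const]
    simp [smul_eq_mul]
    ring
  have hbnd : ∫ r in (0:ℝ)..t, (G r - G 0) ≤ L / 2 * t ^ 2 := by
    rcases le_or_gt 0 t with h | h
    · have hi1 : IntervalIntegrable (fun r : ℝ => G r - G 0) volume 0 t :=
        ((hint 0 t).sub intervalIntegrable_const)
      have hi2 : IntervalIntegrable (fun r : ℝ => L * r) volume 0 t :=
        Continuous.intervalIntegrable (by fun_prop) 0 t
      have hmono : ∫ r in (0:ℝ)..t, (G r - G 0) ≤ ∫ r in (0:ℝ)..t, (L * r) := by
        apply integral_mono_on h hi1 hi2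
        intro r hr
        have h2 := hL r
        rw [abs_of_nonneg hr.1] at h2
        exact (le_abs_self _).trans h2
      have hval : ∫ r in (0:ℝ)..t, (L * r) = L / 2 * t ^ 2 := by
        rw [intervalIntegral.integral_const_mul, integral_id]
        ring
      linarith [hmono, hval]
    · have hi1 : IntervalIntegrable (fun r : ℝ => G 0 - G r) volume t 0 :=
        (intervalIntegrable_const.sub (hint t 0))
      have hi2 : IntervalIntegrable (fun r : ℝ => -(L * r)) volume t 0 :=
        Continuous.intervalIntegrable (by fun_prop) t 0
      have hmono : ∫ r in t..(0:ℝ), (G 0 - G r) ≤ ∫ r in t..(0:ℝ), (-(L * r)) := by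
        apply integral_mono_on h.le hi1 hi2
        intro r hr
        have h2 := hL r
        rw [abs_of_nonpos hr.2] at h2
        have h1 : G 0 - G r ≤ |G r - G 0| := by rw [abs_sub_comm]; exact le_abs_self _
        linarith
      have hval : ∫ r in t..(0:ℝ), (-(L * r)) = L / 2 * t ^ 2 := by
        rw [intervalIntegral.integral_neg, intervalIntegral.integral_const_mul, integral_id]
        ring
      have hneg : ∫ r in t..(0:ℝ), (G 0 - G r) = -∫ r in t..(0:ℝ), (G r - G 0) := by
        rw [← intervalIntegral.integral_neg]
        simp only [neg_sub]
      rw [intervalIntegral.integral_symm t 0]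
      linarith [hmono, hval, hneg]
  linarith [heq2 ▸ hbnd]

/-- Progress of a single proximal coordinate update, second inequality:
for `Γⱼ ≥ Lⱼ`, with `g = ∇ⱼ f(x)`, `g̃` arbitrary, `d̃ = d̂(g̃, xⱼ, Γⱼ, Ψⱼ)` and
`x' = x + d̃·eⱼ`, we have `F(x) - F(x') ≥ Ŵ(g, xⱼ, Γⱼ, Ψⱼ) - (1/Γⱼ)·(g - g̃)²`. -/
theorem single_update_progress_two {n : ℕ}
    (f : (Fin n → ℝ) → ℝ) (hf : Differentiable ℝ f) (hfc : ConvexOn ℝ Set.univ f)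
    (Ψ : Fin n → ℝ → ℝ) (hΨ : ∀ k, ConvexOn ℝ Set.univ (Ψ k))
    (F : (Fin n → ℝ) → ℝ) (hF : ∀ y, F y = f y + ∑ k, Ψ k (y k))
    (j : Fin n) (Lj Γj : ℝ)
    (hLj : ∀ (x : Fin n → ℝ) (r : ℝ),
      |grad f (x + r • (Pi.single j 1 : Fin n → ℝ)) j - grad f x j| ≤ Lj * |r|)
    (hΓpos : 0 < Γj) (hΓL : Γj ≥ Lj)
    (x : Fin n → ℝ) (gtilde dtilde : ℝ)
    (hd : IsMaxOn (fun d : ℝ => W d gtilde (x j) Γj (Ψ j)) Set.univ dtilde) :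
    F x - F (x + dtilde • (Pi.single j 1 : Fin n → ℝ)) ≥
      What (grad f x j) (x j) Γj (Ψ j) - 1 / Γj * (grad f x j - gtilde) ^ 2 := by
  set v : Fin n → ℝ := Pi.single j 1 with hv
  set g : ℝ := grad f x j with hg
  set G : ℝ → ℝ := fun r => grad f (x + r • v) j with hG
  -- derivative of the 1-dim restriction
  have hline : ∀ r : ℝ, HasDerivAt (fun r : ℝ => x + r • v) v r := by
    intro r
    simpa using ((hasDerivAt_id r).smul_const v).const_add x
  have hderφ : ∀ r : ℝ, HasDerivAt (fun r : ℝ => f (x + r • v)) (G r) r := by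
    intro r
    exact (hf _).hasFDerivAt.comp_hasDerivAt r (hline r)
  -- Lipschitz property of G
  have hGlip : ∀ a b : ℝ, |G a - G b| ≤ Lj * |a - b| := by
    intro a b
    have h := hLj (x + b • v) (a - b)
    have harg : x + b • v + (a - b) • v = x + a • v := by
      rw [add_assoc, ← add_smul]
      norm_num
    rw [harg] at h
    exact h
  have hL0 : 0 ≤ Lj := by
    have := (abs_nonneg _).trans (hGlip 1 0)
    simpa using this
  have hGcont : Continuous G := by
    have : LipschitzWith (Real.toNNReal Lj) G := by
      apply LipschitzWith.of_dist_le_mul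
      intro a b
      rw [Real.dist_eq, Real.dist_eq, Real.coe_toNNReal _ hL0]
      exact hGlip a b
    exact this.continuous
  have hG0 : G 0 = g := by simp [hG, hg]
  -- descent lemma
  have hdesc : f (x + dtilde • v) ≤ f x + g * dtilde + Lj / 2 * dtilde ^ 2 := by
    have := descent_aux hderφ hGcont (fun r => by simpa using hGlip r 0) dtilde
    simpa [hG0] using this
  -- the separable part changes only in coordinate j
  have hx' : ∀ k, (x + dtilde • v) k = if k = j then x j + dtilde else x k := by
    intro k
    by_cases h : k = j <;> simp [hv, Pi.single_apply, h]
  have hsum : ∑ k, (Ψ k ((x + dtilde • v) k) - Ψ k (x k)) =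
      Ψ j (x j + dtilde) - Ψ j (x j) := by
    rw [Finset.sum_eq_single j]
    · rw [hx' j]; simp
    · intro k _ hk
      rw [hx' k]; simp [hk]
    · simp
  have hsum' : ∑ k, Ψ k ((x + dtilde • v) k) =
      ∑ k, Ψ k (x k) + (Ψ j (x j + dtilde) - Ψ j (x j)) := by
    rw [← hsum, Finset.sum_sub_distrib]
    ring
  -- F x - F x' ≥ W dtilde g
  have hFdiff : F x - F (x + dtilde • v) ≥ W dtilde g (x j) Γj (Ψ j) := by
    rw [hF, hF, hsum']
    simp only [W]
    nlinarith [hdesc, sq_nonneg dtilde, hΓL]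
  -- What bound
  have hWhat : What g (x j) Γj (Ψ j) ≤ W dtilde g (x j) Γj (Ψ j)
      + 1 / Γj * (g - gtilde) ^ 2 := by
    apply ciSup_le
    intro d
    have h1 := strong_max_aux (hΨ j) hΓpos hd d
    have key : (g - gtilde) * (dtilde - d) ≤ Γj / 2 * (dtilde - d) ^ 2
        + 1 / Γj * (g - gtilde) ^ 2 := by
      have hfs : Γj * (1 / Γj * (g - gtilde) ^ 2) = (g - gtilde) ^ 2 := by
        field_simp
      have h2 : Γj * ((g - gtilde) * (dtilde - d)) ≤
          Γj * (Γj / 2 * (dtilde - d) ^ 2 + 1 / Γj * (g - gtilde) ^ 2) := by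
        nlinarith [sq_nonneg (Γj * (dtilde - d) - (g - gtilde))]
      exact le_of_mul_le_mul_left h2 hΓpos
    simp only [W] at h1 ⊢
    nlinarith [h1, key]
  linarith [hFdiff, hWhat]
end

section
/- Strongly convex progress lower bound: suppose f is strongly convex with parameter μ_f > 0 and F is strongly convex with parameter μ_F > 0 (i.e., F − (μ_F/2)‖·‖² is convex and f − (μ_f/2)‖·‖² is convex), the minimum value of F is 0, and Γ ≥ μ_f. Then for every x ∈ ℝⁿ, Σ_{k=1}^n Ŵ(∇_k f(x), x_k, Γ, Ψ_k) ≥ (μ_F/(μ_F + Γ − μ_f))·F(x). -/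
lemma W_le_aux {c Γ d : ℝ} (hΓ : 0 < Γ) : -(c * d) - Γ / 2 * d ^ 2 ≤ c ^ 2 / (2 * Γ) := by
  rw [le_div_iff₀ (by linarith : (0:ℝ) < 2 * Γ)]
  nlinarith [sq_nonneg (c + Γ * d)]

lemma W_bddAbove {Ψ : ℝ → ℝ} (hΨ : ConvexOn ℝ Set.univ Ψ) (g x Γ : ℝ) (hΓ : 0 < Γ) :
    BddAbove (Set.range fun d => W d g x Γ Ψ) := by
  refine ⟨(g + (Ψ x - Ψ (x - 1))) ^ 2 / (2 * Γ) + (g + (Ψ (x + 1) - Ψ x)) ^ 2 / (2 * Γ), ?_⟩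
  rintro _ ⟨d, rfl⟩
  have hmono := hΨ.slope_mono (Set.mem_univ x)
  have hC1 : 0 ≤ (g + (Ψ x - Ψ (x - 1))) ^ 2 / (2 * Γ) := by positivity
  have hC2 : 0 ≤ (g + (Ψ (x + 1) - Ψ x)) ^ 2 / (2 * Γ) := by positivity
  rcases lt_trichotomy d 0 with hd | hd | hd
  · have h1 := hmono (a := x + d) (b := x + 1)
      ⟨Set.mem_univ _, by simp only [Set.mem_singleton_iff]; intro h; exact hd.ne (by linarith)⟩
      ⟨Set.mem_univ _, by simp only [Set.mem_singleton_iff]; intro h; linarith⟩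
      (by linarith)
    rw [slope_def_field, slope_def_field] at h1
    have e1 : x + d - x = d := by ring
    have e2 : x + 1 - x = 1 := by ring
    rw [e1, e2, div_one] at h1
    have h2 : Ψ (x + d) - Ψ x ≥ (Ψ (x + 1) - Ψ x) * d := by
      rw [div_le_iff_of_neg hd] at h1
      linarith
    have := W_le_aux (c := g + (Ψ (x + 1) - Ψ x)) (d := d) hΓ
    simp only [W]
    nlinarith
  · simp only [W, hd]
    norm_num
    positivity
  · have h1 := hmono (a := x - 1) (b := x + d)
      ⟨Set.mem_univ _, by simp only [Set.mem_singleton_iff]; intro h; linarith⟩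
      ⟨Set.mem_univ _, by simp only [Set.mem_singleton_iff]; intro h; exact hd.ne' (by linarith)⟩
      (by linarith)
    rw [slope_def_field, slope_def_field] at h1
    have e1 : x - 1 - x = -1 := by ring
    have e2 : x + d - x = d := by ring
    rw [e1, e2] at h1
    have h1' : Ψ x - Ψ (x - 1) ≤ (Ψ (x + d) - Ψ x) / d := by
      have hneg : (Ψ (x - 1) - Ψ x) / (-1) = Ψ x - Ψ (x - 1) := by ring
      linarith [hneg ▸ h1]
    have h2 : (Ψ x - Ψ (x - 1)) * d ≤ Ψ (x + d) - Ψ x := by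
      rw [le_div_iff₀ hd] at h1'
      linarith
    have := W_le_aux (c := g + (Ψ x - Ψ (x - 1))) (d := d) hΓ
    simp only [W]
    nlinarith

lemma le_What {Ψ : ℝ → ℝ} (hΨ : ConvexOn ℝ Set.univ Ψ) (g x Γ : ℝ) (hΓ : 0 < Γ) (d : ℝ) :
    W d g x Γ Ψ ≤ What g x Γ Ψ :=
  le_ciSup (W_bddAbove hΨ g x Γ hΓ) d

lemma grad_ineq {E : Type*} [NormedAddCommGroup E] [NormedSpace ℝ E] {g : E → ℝ}
    {L : E →L[ℝ] ℝ} {x : E} (hg : ConvexOn ℝ Set.univ g) (hL : HasFDerivAt g L x) (y : E) :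
    g x + L (y - x) ≤ g y := by
  have hline : HasDerivAt (fun t : ℝ => x + t • (y - x)) (y - x) 0 := by
    simpa using ((hasDerivAt_id (0:ℝ)).smul_const (y - x)).const_add x
  have hφ : HasDerivAt (fun t : ℝ => g (x + t • (y - x))) (L (y - x)) 0 := by
    have h0 : HasFDerivAt g L (x + (0:ℝ) • (y - x)) := by simpa using hL
    exact h0.comp_hasDerivAt 0 hline
  have hφc : ConvexOn ℝ Set.univ (fun t : ℝ => g (x + t • (y - x))) := by
    refine ⟨convex_univ, fun t₁ _ t₂ _ a b ha hb hab => ?_⟩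
    have h := hg.2 (Set.mem_univ (x + t₁ • (y - x))) (Set.mem_univ (x + t₂ • (y - x))) ha hb hab
    have e : a • (x + t₁ • (y - x)) + b • (x + t₂ • (y - x))
        = x + (a • t₁ + b • t₂) • (y - x) := by
      have hba : a = 1 - b := by linarith
      subst hba; simp only [smul_eq_mul]; module
    rw [e] at h
    exact h
  have hslope := hφc.le_slope_of_hasDerivAt (Set.mem_univ (0:ℝ)) (Set.mem_univ 1) one_pos hφ
  rw [slope_def_field] at hslope
  have h1 : x + (1:ℝ) • (y - x) = y := by rw [one_smul]; abel
  have h0 : x + (0:ℝ) • (y - x) = x := by rw [zero_smul, add_zero]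
  rw [h1, h0] at hslope
  have hms : L (y - x) = L y - L x := map_sub L y x
  norm_num at hslope
  linarith [hms]

/-- Strongly convex progress lower bound: if `f` is `μ_f`-strongly convex, `F` is
`μ_F`-strongly convex, the minimum value of `F` is `0`, and `Γ ≥ μ_f`, then for every
`x`, `Σ_k Ŵ(∇_k f(x), x_k, Γ, Ψ_k) ≥ (μ_F/(μ_F + Γ - μ_f))·F(x)`. -/
theorem strongly_convex_progress {n : ℕ} (hn : 0 < n)
    (f : (Fin n → ℝ) → ℝ) (hf : Differentiable ℝ f) (hfc : ConvexOn ℝ Set.univ f)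
    (Ψ : Fin n → ℝ → ℝ) (hΨ : ∀ k, ConvexOn ℝ Set.univ (Ψ k))
    (F : (Fin n → ℝ) → ℝ) (hF : ∀ y, F y = f y + ∑ k, Ψ k (y k))
    (μf μF : ℝ) (hμf : 0 < μf) (hμF : 0 < μF)
    (hscf : ConvexOn ℝ Set.univ (fun y : Fin n → ℝ => f y - μf / 2 * ∑ k, y k ^ 2))
    (hscF : ConvexOn ℝ Set.univ (fun y : Fin n → ℝ => F y - μF / 2 * ∑ k, y k ^ 2))
    (hFnonneg : ∀ y, 0 ≤ F y) (hFattained : ∃ y, F y = 0)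
    (Γ : ℝ) (hΓpos : 0 < Γ) (hΓμ : Γ ≥ μf) (x : Fin n → ℝ) :
    ∑ k, What (grad f x k) (x k) Γ (Ψ k) ≥ μF / (μF + Γ - μf) * F x := by
  obtain ⟨w, hw0⟩ := hFattained
  have hβ : 0 < μF + Γ - μf := by linarith
  set α : ℝ := μF / (μF + Γ - μf) with hαdef
  have hα0 : 0 < α := div_pos hμF hβ
  have hα1 : α ≤ 1 := by rw [hαdef, div_le_one hβ]; linarith
  have hαid : μF * (1 - α) = (Γ - μf) * α := by
    rw [hαdef]; field_simp; ring
  set v : Fin n → ℝ := fun k => α * (w k - x k) with hvdef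
  set z : Fin n → ℝ := fun k => x k + v k with hzdef
  set S : ℝ := ∑ k, (x k - w k) ^ 2 with hSdef
  have hSd : ∑ k, v k ^ 2 = α ^ 2 * S := by
    rw [hSdef, Finset.mul_sum]
    exact Finset.sum_congr rfl fun k _ => by rw [hvdef]; ring
  have hLf_coord : fderiv ℝ f x v = ∑ k, grad f x k * v k := by
    conv_lhs => rw [← Finset.univ_sum_single v]
    rw [map_sum]
    refine Finset.sum_congr rfl fun k _ => ?_
    have hsingle : (Pi.single k (v k) : Fin n → ℝ) = v k • (Pi.single k 1 : Fin n → ℝ) := by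
      rw [← Pi.single_smul', smul_eq_mul, mul_one]
    rw [hsingle, map_smul, smul_eq_mul, mul_comm]
    rfl
  set Lq : (Fin n → ℝ) →L[ℝ] ℝ :=
    ∑ k, (2 * x k) • (ContinuousLinearMap.proj k : (Fin n → ℝ) →L[ℝ] ℝ) with hLqdef
  have hq : HasFDerivAt (fun y : Fin n → ℝ => ∑ k, y k ^ 2) Lq x := by
    rw [hLqdef]
    refine HasFDerivAt.fun_sum fun k _ => ?_
    have hp : HasFDerivAt (fun y : Fin n → ℝ => y k)
        (ContinuousLinearMap.proj k : (Fin n → ℝ) →L[ℝ] ℝ) x :=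
      (ContinuousLinearMap.proj k : (Fin n → ℝ) →L[ℝ] ℝ).hasFDerivAt
    have hm := hp.fun_mul hp
    convert! hm using 1
    · funext y; ring
    · ext u
      simp only [ContinuousLinearMap.smul_apply, ContinuousLinearMap.add_apply,
        ContinuousLinearMap.proj_apply, smul_eq_mul]
      ring
  have hLq_apply : Lq v = ∑ k, 2 * x k * v k := by
    rw [hLqdef]
    simp only [ContinuousLinearMap.sum_apply, ContinuousLinearMap.smul_apply,
      ContinuousLinearMap.proj_apply, smul_eq_mul]
  have hg' : HasFDerivAt (fun y : Fin n → ℝ => f y - μf / 2 * ∑ k, y k ^ 2)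
      (fderiv ℝ f x - (μf / 2) • Lq) x :=
    (hf x).hasFDerivAt.sub (hq.const_mul (μf / 2))
  have hzx : z - x = v := by funext k; simp [hzdef]
  have hf_ineq := grad_ineq hscf hg' z
  rw [hzx] at hf_ineq
  have happly : (fderiv ℝ f x - (μf / 2) • Lq) v
      = fderiv ℝ f x v - μf / 2 * (∑ k, 2 * x k * v k) := by
    rw [ContinuousLinearMap.sub_apply, ContinuousLinearMap.smul_apply, smul_eq_mul, hLq_apply]
  rw [happly] at hf_ineq
  have hq1 : (∑ k, z k ^ 2) - (∑ k, x k ^ 2) - (∑ k, 2 * x k * v k) = ∑ k, v k ^ 2 := by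
    rw [← Finset.sum_sub_distrib, ← Finset.sum_sub_distrib]
    exact Finset.sum_congr rfl fun k _ => by rw [hzdef]; ring
  have hq2 : (1 - α) * (∑ k, x k ^ 2) + α * (∑ k, w k ^ 2) - (∑ k, z k ^ 2)
      = α * (1 - α) * S := by
    rw [hSdef, Finset.mul_sum, Finset.mul_sum, Finset.mul_sum, ← Finset.sum_add_distrib,
      ← Finset.sum_sub_distrib]
    exact Finset.sum_congr rfl fun k _ => by rw [hzdef, hvdef]; ring
  have h5 : fderiv ℝ f x v ≤ f z - f x - μf / 2 * (∑ k, v k ^ 2) := by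
    have hmul : μf / 2 * ((∑ k, z k ^ 2) - (∑ k, x k ^ 2) - (∑ k, 2 * x k * v k))
        = μf / 2 * (∑ k, v k ^ 2) := by rw [hq1]
    linarith [hf_ineq, hmul]
  have hcc := hscF.2 (Set.mem_univ x) (Set.mem_univ w) (by linarith : (0:ℝ) ≤ 1 - α)
    hα0.le (by ring)
  have hzc : (1 - α) • x + α • w = z := by
    funext k
    simp only [hzdef, hvdef, Pi.add_apply, Pi.smul_apply, smul_eq_mul]
    ring
  rw [hzc] at hcc
  simp only [smul_eq_mul] at hcc
  have h6 : F z ≤ (1 - α) * F x - μF / 2 * (α * (1 - α) * S) := by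
    have hmul : μF / 2 * ((1 - α) * (∑ k, x k ^ 2) + α * (∑ k, w k ^ 2) - (∑ k, z k ^ 2))
        = μF / 2 * (α * (1 - α) * S) := by rw [hq2]
    have hαw : α * F w = 0 := by rw [hw0, mul_zero]
    linarith [hcc, hw0, hmul, hαw]
  have h2 : ∑ k, W (v k) (grad f x k) (x k) Γ (Ψ k)
      = -(∑ k, grad f x k * v k) - Γ / 2 * (∑ k, v k ^ 2)
        + (∑ k, Ψ k (x k)) - ∑ k, Ψ k (z k) := by
    rw [Finset.mul_sum, ← Finset.sum_neg_distrib, ← Finset.sum_sub_distrib,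
      ← Finset.sum_add_distrib, ← Finset.sum_sub_distrib]
    exact Finset.sum_congr rfl fun k _ => by simp only [W, hzdef]
  have e0 : μF / 2 * (α * (1 - α) * S) = (Γ - μf) / 2 * (α ^ 2 * S) := by
    linear_combination (S * α / 2) * hαid
  have h1 : ∑ k, What (grad f x k) (x k) Γ (Ψ k)
      ≥ ∑ k, W (v k) (grad f x k) (x k) Γ (Ψ k) :=
    Finset.sum_le_sum fun k _ => le_What (hΨ k) (grad f x k) (x k) Γ hΓpos (v k)
  have hFx := hF x
  have hFz := hF z
  calc ∑ k, What (grad f x k) (x k) Γ (Ψ k)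
      ≥ ∑ k, W (v k) (grad f x k) (x k) Γ (Ψ k) := h1
    _ = -(∑ k, grad f x k * v k) - Γ / 2 * (∑ k, v k ^ 2)
        + (∑ k, Ψ k (x k)) - ∑ k, Ψ k (z k) := h2
    _ ≥ F x - F z + (μf - Γ) / 2 * (∑ k, v k ^ 2) := by
        rw [← hLf_coord]
        linarith [h5, hFx, hFz]
    _ ≥ α * F x := by
        rw [hSd]
        have heq : F x - (1 - α) * F x = α * F x := by ring
        linarith [h6, e0, heq]
end

section
/- Amortized meta-theorem, strongly convex case: let Γ > 0 and let r, q ≥ 1 be integers. Let (x^t)_{t≥0} be a sequence in ℝⁿ with x⁰ = x°, let A : ℕ → ℝ be nonnegative with A(0) = 0, and set H(t) := F(x^t) + A(t). Assume (a) H(t) ≤ H(t−1) for all t ≥ 1, and (b) there exist α, β > 0 such that for all t ≥ 2r, Σ_{i=t−2r+1}^{t} [H(i−1) − H(i)] ≥ Σ_{i=t−2r+1}^{t−r} [ (α/n)·Σ_{k=1}^n Ŵ(∇_k f(x^{i−1}), x_k^{i−1}, Γ, Ψ_k) + (β/q)·A(i−1) ]. Suppose further that F is strongly convex with parameter μ_F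 > 0, f is strongly convex with parameter μ_f > 0 (i.e., F − (μ_F/2)‖·‖² and f − (μ_f/2)‖·‖² are convex), Γ ≥ μ_f, and the minimum value of F is 0. Then for all t ≥ 2r, F(x^t) ≤ [ 1 − min{ (α/(2n))·μ_F/(μ_F + Γ − μ_f) , β/(2q) } ]^{t−2r+1} · F(x°). -/
lemma psi_bound {Ψ : ℝ → ℝ} (hΨ : ConvexOn ℝ Set.univ Ψ) (x d : ℝ) :
    Ψ x - Ψ (x + d) ≤ (|Ψ x - Ψ (x-1)| + |Ψ (x+1) - Ψ x|) * |d| := by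
  rcases lt_trichotomy d 0 with hd | hd | hd
  · have h := hΨ.slope_mono_adjacent (Set.mem_univ (x+d)) (Set.mem_univ (x+1))
      (by linarith : x + d < x) (by linarith : x < x + 1)
    rw [show x - (x+d) = -d by ring, show x + 1 - x = 1 by ring] at h
    have h2 : (Ψ x - Ψ (x+d)) / (-d) ≤ Ψ (x+1) - Ψ x := by simpa using h
    have h3 : Ψ x - Ψ (x+d) ≤ (Ψ (x+1) - Ψ x) * (-d) := by
      rw [div_le_iff₀ (by linarith)] at h2; linarith
    have h4 := le_abs_self (Ψ (x+1) - Ψ x)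
    have h5 := abs_nonneg (Ψ x - Ψ (x-1))
    rw [abs_of_neg hd]
    nlinarith
  · simp [hd]
  · have h := hΨ.slope_mono_adjacent (Set.mem_univ (x-1)) (Set.mem_univ (x+d))
      (by linarith : x - 1 < x) (by linarith : x < x + d)
    rw [show x - (x-1) = 1 by ring, show x + d - x = d by ring] at h
    have h2 : Ψ x - Ψ (x-1) ≤ (Ψ (x+d) - Ψ x) / d := by simpa using h
    have h3 : (Ψ x - Ψ (x-1)) * d ≤ Ψ (x+d) - Ψ x := by
      rw [le_div_iff₀ (by linarith)] at h2; linarith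
    have h4 := neg_abs_le (Ψ x - Ψ (x-1))
    have h5 := abs_nonneg (Ψ (x+1) - Ψ x)
    rw [abs_of_pos hd]
    nlinarith

lemma W_le_What {Ψ : ℝ → ℝ} (hΨ : ConvexOn ℝ Set.univ Ψ) {Γ : ℝ} (hΓ : 0 < Γ)
    (g x d : ℝ) : W d g x Γ Ψ ≤ What g x Γ Ψ := by
  set K := |Ψ x - Ψ (x-1)| + |Ψ (x+1) - Ψ x| with hK
  have hKnn : 0 ≤ K := by positivity
  apply le_ciSup (f := fun d => W d g x Γ Ψ)
  refine ⟨(|g| + K)^2 / (2*Γ), ?_⟩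
  rintro _ ⟨e, rfl⟩
  have h1 := psi_bound hΨ x e
  have h2 : -(g*e) ≤ |g| * |e| := by
    rw [← abs_mul]; exact (neg_le_abs _)
  have h3 : 0 ≤ |e| := abs_nonneg e
  have h4 : |e|^2 = e^2 := sq_abs e
  have h5 : -(g*e) - Γ/2*e^2 + Ψ x - Ψ (x+e) ≤ (|g|+K)*|e| - Γ/2 * |e|^2 := by
    rw [hK]; rw [h4]; linarith
  show -(g*e) - Γ/2*e^2 + Ψ x - Ψ (x+e) ≤ (|g|+K)^2/(2*Γ)
  rw [le_div_iff₀ (by linarith : (0:ℝ) < 2*Γ)]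
  clear_value K
  nlinarith [mul_le_mul_of_nonneg_right h5 (by linarith : (0:ℝ) ≤ 2*Γ),
    sq_nonneg (Γ*|e| - (|g|+K))]

lemma first_order {n : ℕ} {g : (Fin n → ℝ) → ℝ} {g' : (Fin n → ℝ) →L[ℝ] ℝ}
    (hc : ConvexOn ℝ Set.univ g) {z : Fin n → ℝ} (hd : HasFDerivAt g g' z)
    (w : Fin n → ℝ) : g z + g' (w - z) ≤ g w := by
  set L : ℝ →ᵃ[ℝ] (Fin n → ℝ) := AffineMap.lineMap z w with hL
  have hφc : ConvexOn ℝ Set.univ (g ∘ L) := by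
    have := hc.comp_affineMap L
    simpa using this
  have hL0 : L 0 = z := AffineMap.lineMap_apply_zero z w
  have hL1 : L 1 = w := AffineMap.lineMap_apply_one z w
  have hLd : HasDerivAt (fun t : ℝ => L t) (w - z) 0 := by
    have : ∀ t : ℝ, L t = t • (w - z) + z := fun t => AffineMap.lineMap_apply_module' z w t
    simp_rw [this]
    simpa using (hasDerivAt_id (0:ℝ)).smul_const (w - z) |>.add_const z
  have hφd : HasDerivAt (g ∘ L) (g' (w - z)) 0 := by
    have hd' : HasFDerivAt g g' (L 0) := by rw [hL0]; exact hd
    have := hd'.comp_hasDerivAt (0:ℝ) hLd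
    simpa using this
  have hs := hφc.le_slope_of_hasDerivAt (Set.mem_univ (0:ℝ)) (Set.mem_univ (1:ℝ))
    zero_lt_one hφd
  have : slope (g ∘ L) 0 1 = g w - g z := by
    rw [slope_def_field]; simp [hL0, hL1]
  rw [this] at hs
  linarith

lemma key_lemma {n : ℕ} (f : (Fin n → ℝ) → ℝ) (hf : Differentiable ℝ f)
    (Ψ : Fin n → ℝ → ℝ) (hΨ : ∀ k, ConvexOn ℝ Set.univ (Ψ k))
    (F : (Fin n → ℝ) → ℝ) (hF : ∀ y, F y = f y + ∑ k, Ψ k (y k))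
    {Γ μf μF : ℝ} (hΓpos : 0 < Γ) (hμf : 0 < μf) (hμF : 0 < μF)
    (hscf : ConvexOn ℝ Set.univ (fun y : Fin n → ℝ => f y - μf / 2 * ∑ k, y k ^ 2))
    (hscF : ConvexOn ℝ Set.univ (fun y : Fin n → ℝ => F y - μF / 2 * ∑ k, y k ^ 2))
    (hΓμ : Γ ≥ μf) (xs : Fin n → ℝ) (hxs : F xs = 0) (z : Fin n → ℝ) :
    μF / (μF + Γ - μf) * F z ≤ ∑ k, What (grad f z k) (z k) Γ (Ψ k) := by
  have hden : 0 < μF + Γ - μf := by linarith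
  set γ : ℝ := μF / (μF + Γ - μf) with hγdef
  have hγ0 : 0 < γ := div_pos hμF hden
  have hγ1 : γ ≤ 1 := by rw [hγdef, div_le_one hden]; linarith
  have hγden : γ * (μF + Γ - μf) = μF := by rw [hγdef]; field_simp
  have hγid : μF * (1 - γ) = (Γ - μf) * γ := by linear_combination -hγden
  set d : Fin n → ℝ := fun k => γ * (xs k - z k) with hd
  set w : Fin n → ℝ := fun k => z k + d k with hw
  set E : ℝ := ∑ k, (xs k - z k) ^ 2 with hE
  have hEnn : 0 ≤ E := Finset.sum_nonneg fun k _ => sq_nonneg _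
  clear_value γ d w E
  have hdsq : ∑ k, d k ^ 2 = γ ^ 2 * E := by
    rw [hE, Finset.mul_sum]
    exact Finset.sum_congr rfl fun k _ => by rw [hd]; ring
  -- step A
  have hA : ∑ k, W (d k) (grad f z k) (z k) Γ (Ψ k)
      ≤ ∑ k, What (grad f z k) (z k) Γ (Ψ k) :=
    Finset.sum_le_sum fun k _ => W_le_What (hΨ k) hΓpos _ _ _
  -- step B : expand the sum of W
  have hB : ∑ k, W (d k) (grad f z k) (z k) Γ (Ψ k)
      = -(∑ k, grad f z k * d k) - Γ / 2 * (∑ k, d k ^ 2)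
        + (∑ k, Ψ k (z k)) - ∑ k, Ψ k (z k + d k) := by
    simp only [W, Finset.sum_add_distrib, Finset.sum_sub_distrib, Finset.sum_neg_distrib,
      Finset.mul_sum]
  -- step C : gradient sum
  have hC : (fderiv ℝ f z) d = ∑ k, grad f z k * d k := by
    conv_lhs => rw [← Finset.univ_sum_single d]
    rw [map_sum]
    refine Finset.sum_congr rfl fun k _ => ?_
    have hsingle : Pi.single k (d k) = d k • (Pi.single k 1 : Fin n → ℝ) := by
      funext j
      by_cases h : j = k <;> simp [Pi.single_apply, h]
    rw [hsingle, map_smul, grad, smul_eq_mul, mul_comm]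
  -- derivative of the quadratic
  have hQ : HasFDerivAt (fun y : Fin n → ℝ => ∑ k, y k ^ 2)
      (∑ k : Fin n, ((2 * z k) • ContinuousLinearMap.proj (R := ℝ) (φ := fun _ : Fin n => ℝ) k)) z := by
    apply HasFDerivAt.fun_sum
    intro k _
    have ha : HasFDerivAt (fun y : Fin n → ℝ => y k)
        (ContinuousLinearMap.proj (R := ℝ) (φ := fun _ : Fin n => ℝ) k) z :=
      hasFDerivAt_apply k z
    have h1 := ha.fun_mul ha
    have h2 : HasFDerivAt (fun y : Fin n → ℝ => y k ^ 2)
        (z k • ContinuousLinearMap.proj (R := ℝ) (φ := fun _ : Fin n => ℝ) k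
          + z k • ContinuousLinearMap.proj (R := ℝ) (φ := fun _ : Fin n => ℝ) k) z := by
      simpa [pow_two] using h1
    rw [mul_smul, two_smul]
    exact h2
  set DQ : (Fin n → ℝ) →L[ℝ] ℝ :=
    ∑ k : Fin n, ((2 * z k) • ContinuousLinearMap.proj (R := ℝ) (φ := fun _ : Fin n => ℝ) k)
    with hDQ
  have hDQ_apply : ∀ v : Fin n → ℝ, DQ v = ∑ k, 2 * z k * v k := by
    intro v
    rw [hDQ]
    simp [ContinuousLinearMap.sum_apply, ContinuousLinearMap.smul_apply,
      ContinuousLinearMap.proj_apply, smul_eq_mul]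
  clear_value DQ
  have hGf : HasFDerivAt (fun y : Fin n → ℝ => f y - μf / 2 * ∑ k, y k ^ 2)
      (fderiv ℝ f z - (μf / 2) • DQ) z := ((hf z).hasFDerivAt).sub (hQ.const_mul (μf / 2))
  have hfo := first_order hscf hGf w
  have hwz : w - z = d := by funext k; simp [hw, hd]
  have e1 : (fderiv ℝ f z - (μf / 2) • DQ) (w - z)
      = (fderiv ℝ f z) d - μf / 2 * DQ d := by
    rw [hwz]; simp [ContinuousLinearMap.sub_apply, ContinuousLinearMap.smul_apply, smul_eq_mul]
  rw [e1, hDQ_apply d] at hfo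
  have e3 : ∑ k, w k ^ 2 = ∑ k, z k ^ 2 + ((∑ k, 2 * z k * d k) + ∑ k, d k ^ 2) := by
    rw [← Finset.sum_add_distrib, ← Finset.sum_add_distrib]
    exact Finset.sum_congr rfl fun k _ => by simp only [hw]; ring
  have e4 : μf / 2 * ∑ k, w k ^ 2
      = μf / 2 * ∑ k, z k ^ 2 + μf / 2 * (∑ k, 2 * z k * d k) + μf / 2 * ∑ k, d k ^ 2 := by
    rw [e3]; ring
  have hfo' : f z + (fderiv ℝ f z) d + μf / 2 * (γ ^ 2 * E) ≤ f w := by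
    rw [← hdsq]; linarith only [hfo, e4]
  -- strong convexity of F
  have hb0 : (0:ℝ) ≤ 1 - γ := by linarith
  have hcomb := hscF.2 (Set.mem_univ z) (Set.mem_univ xs) hb0 hγ0.le (by ring)
  have hwc : (1 - γ) • z + γ • xs = w := by
    funext k
    simp only [hw, hd, Pi.add_apply, Pi.smul_apply, smul_eq_mul]
    ring
  rw [hwc] at hcomb
  simp only [smul_eq_mul] at hcomb
  have hiden : ∑ k, w k ^ 2
      = (1 - γ) * ∑ k, z k ^ 2 + γ * ∑ k, xs k ^ 2 - γ * (1 - γ) * E := by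
    rw [hE, Finset.mul_sum, Finset.mul_sum, Finset.mul_sum,
      ← Finset.sum_add_distrib, ← Finset.sum_sub_distrib]
    exact Finset.sum_congr rfl fun k _ => by simp only [hw, hd]; ring
  have e5 : μF / 2 * ∑ k, w k ^ 2
      = μF / 2 * ((1 - γ) * ∑ k, z k ^ 2) + μF / 2 * (γ * ∑ k, xs k ^ 2)
        - μF / 2 * (γ * (1 - γ) * E) := by
    rw [hiden]; ring
  have hFw : F w ≤ (1 - γ) * F z - μF / 2 * (γ * (1 - γ) * E) := by
    rw [hxs] at hcomb
    linarith only [hcomb, e5]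
  have hzero : μF / 2 * (γ * (1 - γ) * E) = (Γ - μf) / 2 * (γ ^ 2 * E) := by
    linear_combination (E * γ / 2) * hγid
  have hPw : ∑ k, Ψ k (z k + d k) = ∑ k, Ψ k (w k) :=
    Finset.sum_congr rfl fun k _ => by simp only [hw]
  have hFz := hF z
  have hFww := hF w
  refine le_trans ?_ hA
  rw [hB, hPw, hdsq, ← hC]
  linarith only [hfo', hFw, hzero, hFz, hFww]

lemma tele (H : ℕ → ℝ) (m : ℕ) : ∀ k : ℕ,
    ∑ j ∈ Finset.range k, (H (m + j) - H (m + j + 1)) = H m - H (m + k) := by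
  intro k
  induction k with
  | zero => simp
  | succ k ih =>
    rw [Finset.sum_range_succ, ih, show m + (k+1) = m+k+1 from by omega]
    ring

/-- Amortized meta-theorem, strongly convex case: if `H(t) = F(x^t) + A(t)` is
decreasing and satisfies the amortized progress inequality with parameters
`α, β > 0` over rounds of length `r` with interference parameter `q`, `F` is
`μ_F`-strongly convex, `f` is `μ_f`-strongly convex, `Γ ≥ μ_f` and the minimum value
of `F` is `0`, then for all `t ≥ 2r`,
`F(x^t) ≤ (1 - min{(α/(2n))·μ_F/(μ_F+Γ-μ_f), β/(2q)})^(t-2r+1) · F(x⁰)`. -/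
theorem meta_theorem_strongly_convex {n : ℕ} (hn : 0 < n)
    (f : (Fin n → ℝ) → ℝ) (hf : Differentiable ℝ f) (hfc : ConvexOn ℝ Set.univ f)
    (Ψ : Fin n → ℝ → ℝ) (hΨ : ∀ k, ConvexOn ℝ Set.univ (Ψ k))
    (F : (Fin n → ℝ) → ℝ) (hF : ∀ y, F y = f y + ∑ k, Ψ k (y k))
    (Γ : ℝ) (hΓpos : 0 < Γ) (r q : ℕ) (hr : 1 ≤ r) (hq : 1 ≤ q)
    (x : ℕ → Fin n → ℝ) (A : ℕ → ℝ) (hAnonneg : ∀ t, 0 ≤ A t) (hA0 : A 0 = 0)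
    (H : ℕ → ℝ) (hH : ∀ t, H t = F (x t) + A t)
    (hHdec : ∀ t : ℕ, 1 ≤ t → H t ≤ H (t - 1))
    (α β : ℝ) (hα : 0 < α) (hβ : 0 < β)
    (hprog : ∀ t : ℕ, 2 * r ≤ t →
      ∑ i ∈ Finset.Icc (t - 2 * r + 1) t, (H (i - 1) - H i) ≥
        ∑ i ∈ Finset.Icc (t - 2 * r + 1) (t - r),
          (α / n * ∑ k, What (grad f (x (i - 1)) k) (x (i - 1) k) Γ (Ψ k)
            + β / q * A (i - 1)))
    (μf μF : ℝ) (hμf : 0 < μf) (hμF : 0 < μF)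
    (hscf : ConvexOn ℝ Set.univ (fun y : Fin n → ℝ => f y - μf / 2 * ∑ k, y k ^ 2))
    (hscF : ConvexOn ℝ Set.univ (fun y : Fin n → ℝ => F y - μF / 2 * ∑ k, y k ^ 2))
    (hΓμ : Γ ≥ μf) (hFnonneg : ∀ y, 0 ≤ F y) (hFattained : ∃ y, F y = 0) :
    ∀ t : ℕ, 2 * r ≤ t →
      F (x t) ≤
        (1 - min (α / (2 * n) * (μF / (μF + Γ - μf))) (β / (2 * q))) ^ (t - 2 * r + 1)
          * F (x 0) := by
  obtain ⟨xs, hxs⟩ := hFattained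
  have hnR : (0:ℝ) < (n:ℝ) := by exact_mod_cast hn
  have hqR : (0:ℝ) < (q:ℝ) := by exact_mod_cast Nat.lt_of_lt_of_le Nat.zero_lt_one hq
  have hden : 0 < μF + Γ - μf := by linarith
  set c : ℝ := μF / (μF + Γ - μf) with hc
  have hc0 : 0 < c := div_pos hμF hden
  have hkey : ∀ z, c * F z ≤ ∑ k, What (grad f z k) (z k) Γ (Ψ k) := fun z =>
    key_lemma f hf Ψ hΨ F hF hΓpos hμf hμF hscf hscF hΓμ xs hxs z
  set θ1 : ℝ := α / n * c with hθ1
  set θ2 : ℝ := β / q with hθ2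
  have hθ1pos : 0 < θ1 := mul_pos (div_pos hα hnR) hc0
  have hθ2pos : 0 < θ2 := div_pos hβ hqR
  set θ : ℝ := min θ1 θ2 with hθ
  have hθpos : 0 < θ := lt_min hθ1pos hθ2pos
  have hHnn : ∀ t, 0 ≤ H t := fun t => by
    rw [hH]; exact add_nonneg (hFnonneg _) (hAnonneg _)
  have hmono_add : ∀ m k : ℕ, H (m + k) ≤ H m := by
    intro m k
    induction k with
    | zero => exact le_refl _
    | succ k ih =>
      have h1 := hHdec (m + k + 1) (by omega)
      rw [Nat.add_sub_cancel] at h1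
      exact le_trans (by rw [Nat.add_succ]; exact h1) ih
  have hmono : ∀ {s t : ℕ}, s ≤ t → H t ≤ H s := by
    intro s t hst
    obtain ⟨k, rfl⟩ := Nat.exists_eq_add_of_le hst
    exact hmono_add s k
  -- per-term lower bound
  have hterm : ∀ i : ℕ, θ * H i ≤
      α / n * (∑ k, What (grad f (x i) k) (x i k) Γ (Ψ k)) + β / q * A i := by
    intro i
    have h1 : α / n * (c * F (x i)) ≤
        α / n * ∑ k, What (grad f (x i) k) (x i k) Γ (Ψ k) :=
      mul_le_mul_of_nonneg_left (hkey (x i)) (div_pos hα hnR).le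
    have h3 : θ * H i = θ * F (x i) + θ * A i := by rw [hH]; ring
    have h4 : θ * F (x i) ≤ θ1 * F (x i) :=
      mul_le_mul_of_nonneg_right (min_le_left _ _) (hFnonneg _)
    have h5 : θ * A i ≤ θ2 * A i :=
      mul_le_mul_of_nonneg_right (min_le_right _ _) (hAnonneg _)
    have h6 : θ1 * F (x i) = α / n * (c * F (x i)) := by rw [hθ1]; ring
    have h7 : θ2 * A i = β / q * A i := by rw [hθ2]
    linarith
  -- window inequality
  have hwin : ∀ m : ℕ, θ * ∑ j ∈ Finset.range r, H (m + j) ≤ H m - H (m + 2*r) := by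
    intro m
    have hp := hprog (m + 2*r) (by omega)
    rw [show m + 2*r - 2*r + 1 = m + 1 from by omega,
        show m + 2*r - r = m + r from by omega] at hp
    have hL : ∑ i ∈ Finset.Icc (m+1) (m + 2*r), (H (i-1) - H i) = H m - H (m + 2*r) := by
      rw [← Finset.Ico_add_one_right_eq_Icc, Finset.sum_Ico_eq_sum_range,
        show m + 2*r + 1 - (m+1) = 2*r from by omega]
      calc ∑ j ∈ Finset.range (2*r), (H (m+1+j-1) - H (m+1+j))
          = ∑ j ∈ Finset.range (2*r), (H (m+j) - H (m+j+1)) :=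
            Finset.sum_congr rfl fun j _ => by
              rw [show m+1+j-1 = m+j from by omega, show m+1+j = m+j+1 from by omega]
        _ = H m - H (m+2*r) := tele H m (2*r)
    have hR : θ * ∑ j ∈ Finset.range r, H (m + j) ≤
        ∑ i ∈ Finset.Icc (m+1) (m+r),
          (α / n * ∑ k, What (grad f (x (i-1)) k) (x (i-1) k) Γ (Ψ k) + β / q * A (i-1)) := by
      rw [← Finset.Ico_add_one_right_eq_Icc, Finset.sum_Ico_eq_sum_range,
        show m + r + 1 - (m+1) = r from by omega, Finset.mul_sum]
      apply Finset.sum_le_sum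
      intro j _
      rw [show m+1+j-1 = m+j from by omega]
      exact hterm (m+j)
    rw [hL] at hp
    exact le_trans hR hp
  -- pairing
  have hpair : ∀ m : ℕ, ∑ j ∈ Finset.range (2*r), H (m+j) ≤
      2 * ∑ j ∈ Finset.range r, H (m+j) := by
    intro m
    rw [show 2*r = r + r from two_mul r, Finset.sum_range_add]
    have h1 : ∑ j ∈ Finset.range r, H (m + (r + j)) ≤ ∑ j ∈ Finset.range r, H (m + j) :=
      Finset.sum_le_sum fun j _ => hmono (by omega)
    linarith
  -- S recurrence
  have hSstep : ∀ m : ℕ, ∑ j ∈ Finset.range (2*r), H (m+1+j) ≤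
      (1 - θ/2) * ∑ j ∈ Finset.range (2*r), H (m+j) := by
    intro m
    obtain ⟨R, hR2⟩ : ∃ R, 2*r = R+1 := ⟨2*r - 1, by omega⟩
    have hw := hwin m
    have hp := hpair m
    have hq2 : θ/2 * ∑ j ∈ Finset.range (2*r), H (m+j) ≤ H m - H (m + 2*r) := by
      have h1 := mul_le_mul_of_nonneg_left hp (by linarith : (0:ℝ) ≤ θ/2)
      linarith
    have hSm : ∑ j ∈ Finset.range (2*r), H (m+j)
        = H m + ∑ j ∈ Finset.range R, H (m+1+j) := by
      rw [hR2, Finset.sum_range_succ']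
      rw [Nat.add_zero, add_comm]
      congr 1
      exact Finset.sum_congr rfl fun j _ => by rw [show m + (j+1) = m+1+j from by omega]
    have hSm1 : ∑ j ∈ Finset.range (2*r), H (m+1+j)
        = (∑ j ∈ Finset.range R, H (m+1+j)) + H (m+1+R) := by
      rw [hR2, Finset.sum_range_succ]
    rw [show m+1+R = m + 2*r from by omega] at hSm1
    linarith [hq2, hSm, hSm1]
  rcases eq_or_lt_of_le (hFnonneg (x 0)) with h0 | h0
  · intro t ht
    have hHt : H t ≤ 0 := by
      have h1 := hmono (Nat.zero_le t)
      rw [hH 0, hA0, ← h0, add_zero] at h1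
      exact h1
    have h2 : F (x t) ≤ H t := by rw [hH]; linarith [hAnonneg t]
    rw [← h0, mul_zero]
    linarith
  · have hθle : θ ≤ 1 := by
      by_contra hcon
      push_neg at hcon
      have hw0 := hwin 0
      have hsum : H 0 ≤ ∑ j ∈ Finset.range r, H (0 + j) := by
        have := Finset.single_le_sum (f := fun j => H (0 + j))
          (fun j _ => hHnn _) (Finset.mem_range.mpr (by omega : 0 < r))
        simpa using this
      have h1 : θ * H 0 ≤ H 0 - H (0 + 2*r) :=
        le_trans (mul_le_mul_of_nonneg_left hsum hθpos.le) hw0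
      have hH0 : H 0 = F (x 0) := by rw [hH, hA0, add_zero]
      have h2 : 1 * H 0 < θ * H 0 := by
        apply mul_lt_mul_of_pos_right hcon
        rw [hH0]; exact h0
      linarith [hHnn (0 + 2*r)]
    have hlamnn : (0:ℝ) ≤ 1 - θ/2 := by linarith
    have hSgeo : ∀ m : ℕ, ∑ j ∈ Finset.range (2*r), H (m+j) ≤
        (1 - θ/2)^m * ∑ j ∈ Finset.range (2*r), H j := by
      intro m
      induction m with
      | zero => simp
      | succ m ih =>
        have h1 : ∑ j ∈ Finset.range (2*r), H (m+1+j) ≤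
            (1 - θ/2) * ∑ j ∈ Finset.range (2*r), H (m+j) := hSstep m
        calc ∑ j ∈ Finset.range (2*r), H (m+1+j)
            ≤ (1 - θ/2) * ∑ j ∈ Finset.range (2*r), H (m+j) := h1
          _ ≤ (1 - θ/2) * ((1 - θ/2)^m * ∑ j ∈ Finset.range (2*r), H j) :=
              mul_le_mul_of_nonneg_left ih hlamnn
          _ = (1 - θ/2)^(m+1) * ∑ j ∈ Finset.range (2*r), H j := by ring
    have hS0 : ∑ j ∈ Finset.range (2*r), H j ≤ (2*r : ℝ) * H 0 := by
      calc ∑ j ∈ Finset.range (2*r), H j ≤ ∑ _j ∈ Finset.range (2*r), H 0 :=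
            Finset.sum_le_sum fun j _ => hmono (Nat.zero_le _)
        _ = (2*r : ℝ) * H 0 := by
            rw [Finset.sum_const, Finset.card_range, nsmul_eq_mul]
            push_cast; ring
    intro t ht
    have htm : t = (t - 2*r) + 2*r := by omega
    set m := t - 2*r with hm
    have hlow : (2*r : ℝ) * H t ≤ ∑ j ∈ Finset.range (2*r), H (m+1+j) := by
      calc (2*r : ℝ) * H t = ∑ _j ∈ Finset.range (2*r), H t := by
            rw [Finset.sum_const, Finset.card_range, nsmul_eq_mul]; push_cast; ring
        _ ≤ ∑ j ∈ Finset.range (2*r), H (m+1+j) :=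
            Finset.sum_le_sum fun j hj => hmono (by
              have := Finset.mem_range.mp hj
              omega)
    have h2rpos : (0:ℝ) < 2*r := by
      have : (1:ℝ) ≤ (r:ℝ) := by exact_mod_cast hr
      linarith
    have hchain : (2*r : ℝ) * H t ≤ (1 - θ/2)^(m+1) * ((2*r : ℝ) * H 0) := by
      calc (2*r : ℝ) * H t ≤ ∑ j ∈ Finset.range (2*r), H (m+1+j) := hlow
        _ ≤ (1 - θ/2)^(m+1) * ∑ j ∈ Finset.range (2*r), H j := hSgeo (m+1)
        _ ≤ (1 - θ/2)^(m+1) * ((2*r : ℝ) * H 0) :=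
            mul_le_mul_of_nonneg_left hS0 (pow_nonneg hlamnn _)
    have hHt : H t ≤ (1 - θ/2)^(m+1) * H 0 := by
      have h1 : (2*r : ℝ) * H t ≤ (2*r : ℝ) * ((1 - θ/2)^(m+1) * H 0) := by
        linarith [hchain]
      exact (mul_le_mul_iff_right₀ h2rpos).mp h1
    have hFt : F (x t) ≤ H t := by rw [hH]; linarith [hAnonneg t]
    have hH0F : H 0 = F (x 0) := by rw [hH, hA0, add_zero]
    have hρ : min (α / (2*(n:ℝ)) * c) (β / (2*(q:ℝ))) = θ/2 := by
      rw [hθ, hθ1, hθ2,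
        show α / (2*(n:ℝ)) * c = (α/(n:ℝ) * c)/2 from by ring,
        show β / (2*(q:ℝ)) = (β/(q:ℝ))/2 from by ring,
        min_div_div_right (by norm_num : (0:ℝ) ≤ 2)]
    rw [show t - 2*r + 1 = m + 1 from by omega, hρ]
    rw [hH0F] at hHt
    linarith
end

section
/- Doubling-interval bound for cyclic updates: let n ≥ 2 and let f : ℝⁿ → ℝ be differentiable and L-Lipschitz-smooth, i.e., ‖∇f(x + Δx) − ∇f(x)‖ ≤ L‖Δx‖ for all x, Δx ∈ ℝⁿ. Let (x^i)_{i≥0} be a sequence in ℝⁿ such that x^i = x^{i−1} + Δ_i·e_{k_i} for reals Δ_i, where the update order is cyclic: k_{i+n} = k_i for all i ≥ 1 and {k_1, …, k_n} = {1, …, n}. Then for every t ≥ 2n, Σ_{i=t−2n+1}^{t} Σ_{j=max{t−2n+1, i−n+1}}^{i} ( ∇_{k_i} f(x^{j−1}) − ∇_{k_i} f(x^{i−1}) )² ≤ 2n·⌈log₂ n⌉²·L²·Σ_{i=t−2n+1}^{t} (Δ_i)². -/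
def rup (s u : ℕ) : ℕ := 2^s * ((u + 2^s - 1) / 2^s)
def rdn (s v : ℕ) : ℕ := 2^s * (v / 2^s)

lemma pow_pos2 (s : ℕ) : 0 < 2^s := Nat.pow_pos (by norm_num)

lemma rup_zero (u : ℕ) : rup 0 u = u := by simp [rup]

lemma rdn_zero (v : ℕ) : rdn 0 v = v := by simp [rdn]

lemma le_rup (s u : ℕ) : u ≤ rup s u := by
  have hp := pow_pos2 s
  have h1 := Nat.div_add_mod (u + 2^s - 1) (2^s)
  have h2 : (u + 2^s - 1) % 2^s < 2^s := Nat.mod_lt _ hp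
  unfold rup; omega

lemma rup_lt (s u : ℕ) : rup s u < u + 2^s := by
  have hp := pow_pos2 s
  have h1 := Nat.div_add_mod (u + 2^s - 1) (2^s)
  have h2 : (u + 2^s - 1) % 2^s < 2^s := Nat.mod_lt _ hp
  unfold rup; omega

lemma rdn_le (s v : ℕ) : rdn s v ≤ v := by
  have hp := pow_pos2 s
  have h1 := Nat.div_add_mod v (2^s)
  unfold rdn; omega

lemma lt_rdn (s v : ℕ) : v < rdn s v + 2^s := by
  have hp := pow_pos2 s
  have h1 := Nat.div_add_mod v (2^s)
  have h2 : v % 2^s < 2^s := Nat.mod_lt _ hp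
  unfold rdn; omega

lemma dvd_rup (s u : ℕ) : 2^s ∣ rup s u := Dvd.intro _ rfl

lemma dvd_rdn (s v : ℕ) : 2^s ∣ rdn s v := Dvd.intro _ rfl

/-- minimality of rup -/
lemma rup_min {s u M : ℕ} (hd : 2^s ∣ M) (h : u ≤ M) : rup s u ≤ M := by
  obtain ⟨c, rfl⟩ := hd
  have hp := pow_pos2 s
  have h1 := Nat.div_add_mod (u + 2^s - 1) (2^s)
  have h2 : (u + 2^s - 1) % 2^s < 2^s := Nat.mod_lt _ hp
  unfold rup
  have h3 : (u + 2^s - 1) / 2^s ≤ c := by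
    by_contra hc
    push_neg at hc
    have : c + 1 ≤ (u + 2^s - 1) / 2^s := hc
    have h4 : 2^s * (c+1) ≤ 2^s * ((u + 2^s - 1) / 2^s) := Nat.mul_le_mul_left _ this
    have h5 : 2^s * (c+1) = 2^s * c + 2^s := by ring
    omega
  calc 2^s * ((u + 2^s - 1) / 2^s) ≤ 2^s * c := Nat.mul_le_mul_left _ h3

/-- maximality of rdn -/
lemma rdn_max {s v M : ℕ} (hd : 2^s ∣ M) (h : M ≤ v) : M ≤ rdn s v := by
  obtain ⟨c, rfl⟩ := hd
  have hp := pow_pos2 s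
  have h1 := Nat.div_add_mod v (2^s)
  have h2 : v % 2^s < 2^s := Nat.mod_lt _ hp
  unfold rdn
  have h3 : c ≤ v / 2^s := by
    by_contra hc
    push_neg at hc
    have : v / 2^s + 1 ≤ c := hc
    have h4 : 2^s * (v / 2^s + 1) ≤ 2^s * c := Nat.mul_le_mul_left _ this
    have h5 : 2^s * (v / 2^s + 1) = 2^s * (v / 2^s) + 2^s := by ring
    omega
  exact Nat.mul_le_mul_left _ h3

lemma rup_succ_le (s u : ℕ) : rup (s+1) u ≤ rup s u + 2^s := by
  rcases Nat.even_or_odd ((u + 2^s - 1) / 2^s) with he | ho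
  · obtain ⟨c, hc⟩ := he
    have hd : 2^(s+1) ∣ rup s u := by
      refine ⟨c, ?_⟩
      unfold rup
      rw [hc]; ring
    have := rup_min hd (le_rup s u)
    omega
  · obtain ⟨c, hc⟩ := ho
    have hd : 2^(s+1) ∣ rup s u + 2^s := by
      refine ⟨c+1, ?_⟩
      unfold rup
      rw [hc]; ring
    have := rup_min hd (le_of_lt (Nat.lt_of_le_of_lt (le_rup s u) (by omega)))
    omega

lemma rdn_rdn (s v : ℕ) : rdn (s+1) (rdn s v) = rdn (s+1) v := by
  unfold rdn
  have h1 : 2^s * (v / 2^s) / 2^(s+1) = v / 2^(s+1) := by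
    have : (2:ℕ)^(s+1) = 2^s * 2 := by ring
    rw [this, ← Nat.div_div_eq_div_mul, ← Nat.div_div_eq_div_mul,
      Nat.mul_div_cancel_left _ (pow_pos2 s)]
  rw [h1]

/-- two multiples of d within distance < d are equal -/
lemma dvd_eq_of_lt {d a b : ℕ} (ha : d ∣ a) (hb : d ∣ b) (h1 : a ≤ b) (h2 : b < a + d) : a = b := by
  have hd : d ∣ b - a := Nat.dvd_sub hb ha
  have := Nat.eq_zero_of_dvd_of_lt hd (by omega)
  omega

/-- a multiple of d in [a, a+2d) with a a multiple: equals a or a + d -/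
lemma dvd_eq_or_of_lt {d a b : ℕ} (hd0 : 0 < d) (ha : d ∣ a) (hb : d ∣ b) (h1 : a ≤ b) (h2 : b < a + d + d) :
    b = a ∨ b = a + d := by
  have hdd : d ∣ b - a := Nat.dvd_sub hb ha
  rcases Nat.lt_or_ge (b - a) d with h | h
  · left; have := Nat.eq_zero_of_dvd_of_lt hdd h; omega
  · right
    have hdd2 : d ∣ b - a - d := by
      have : b - a - d = b - (a + d) := by omega
      rw [this]
      exact Nat.dvd_sub hb (Dvd.dvd.add ha dvd_rfl)
    have := Nat.eq_zero_of_dvd_of_lt hdd2 (by omega)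
    omega


lemma L_nonneg {n : ℕ} (hn : 2 ≤ n) (f : (Fin n → ℝ) → ℝ) (L : ℝ)
    (hL : ∀ x y : Fin n → ℝ,
      Real.sqrt (∑ k, (grad f (x + y) k - grad f x k) ^ 2) ≤
        L * Real.sqrt (∑ k, y k ^ 2)) : 0 ≤ L := by
  have hn0 : 0 < n := by omega
  set y : Fin n → ℝ := Pi.single (⟨0, hn0⟩ : Fin n) (1:ℝ) with hy
  have h := hL 0 y
  have h1 : ∑ k, y k ^ 2 = 1 := by
    rw [hy, Finset.sum_eq_single (⟨0, hn0⟩ : Fin n)]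
    · simp
    · intro b _ hb; rw [Pi.single_apply, if_neg hb]; norm_num
    · intro hb; exact absurd (Finset.mem_univ _) hb
  rw [h1, Real.sqrt_one, mul_one] at h
  exact le_trans (Real.sqrt_nonneg _) h

lemma lip_sq {n : ℕ} (f : (Fin n → ℝ) → ℝ) (L : ℝ)
    (hL : ∀ x y : Fin n → ℝ,
      Real.sqrt (∑ k, (grad f (x + y) k - grad f x k) ^ 2) ≤
        L * Real.sqrt (∑ k, y k ^ 2)) (p q : Fin n → ℝ) :
    ∑ k, (grad f p k - grad f q k) ^ 2 ≤ L ^ 2 * ∑ k, (p k - q k) ^ 2 := by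
  have h := hL q (p - q)
  have he : q + (p - q) = p := by abel
  rw [he] at h
  have hA : (0:ℝ) ≤ ∑ k, (grad f p k - grad f q k) ^ 2 :=
    Finset.sum_nonneg (fun k _ => sq_nonneg _)
  have hB : (0:ℝ) ≤ ∑ k, (p - q) k ^ 2 :=
    Finset.sum_nonneg (fun k _ => sq_nonneg _)
  calc ∑ k, (grad f p k - grad f q k) ^ 2
      = Real.sqrt (∑ k, (grad f p k - grad f q k) ^ 2) ^ 2 := (Real.sq_sqrt hA).symm
    _ ≤ (L * Real.sqrt (∑ k, (p - q) k ^ 2)) ^ 2 := by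
        apply pow_le_pow_left₀ (Real.sqrt_nonneg _) h
    _ = L ^ 2 * ∑ k, (p - q) k ^ 2 := by rw [mul_pow, Real.sq_sqrt hB]
    _ = L ^ 2 * ∑ k, (p k - q k) ^ 2 := by simp [Pi.sub_apply]

lemma idx_red {n : ℕ} (hn : 0 < n) (idx : ℕ → Fin n)
    (hcyc : ∀ i : ℕ, 1 ≤ i → idx (i + n) = idx i) :
    ∀ i, 1 ≤ i → idx i = idx ((i - 1) % n + 1) := by
  intro i
  induction i using Nat.strong_induction_on with
  | _ i ih =>
    intro hi
    rcases Nat.lt_or_ge i (n+1) with h | h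
    · have h0 : (i-1) % n = i - 1 := Nat.mod_eq_of_lt (by omega)
      rw [h0]; congr 1; omega
    · have h1 : idx ((i - n) + n) = idx (i - n) := hcyc (i-n) (by omega)
      have h2 : (i - n) + n = i := by omega
      rw [h2] at h1
      rw [h1, ih (i-n) (by omega) (by omega)]
      have h3 : i - n - 1 = i - 1 - n := by omega
      have h4 : (i - 1 - n) % n = ((i - 1 - n) + n) % n := (Nat.add_mod_right _ n).symm
      have h5 : i - 1 - n + n = i - 1 := by omega
      rw [h3, h4, h5]

lemma idx_inj {n : ℕ} (hn : 0 < n) (idx : ℕ → Fin n)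
    (hcyc : ∀ i : ℕ, 1 ≤ i → idx (i + n) = idx i)
    (hcover : ∀ c : Fin n, ∃ i : ℕ, 1 ≤ i ∧ i ≤ n ∧ idx i = c)
    (w : ℕ) (hw : 1 ≤ w) :
    ∀ i i', w ≤ i → i ≤ w + (n-1) → w ≤ i' → i' ≤ w + (n-1) → idx i = idx i' → i = i' := by
  have hred := idx_red hn idx hcyc
  set e : Fin n → Fin n := fun r => idx (r.1 + 1) with he
  have hsurj : Function.Surjective e := by
    intro c
    obtain ⟨i, hi1, hi2, hi3⟩ := hcover c
    exact ⟨⟨i - 1, by omega⟩, by simp only [he]; rw [show i - 1 + 1 = i by omega]; exact hi3⟩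
  have hinj : Function.Injective e := Finite.injective_iff_surjective.mpr hsurj
  intro i i' h1 h2 h3 h4 heq
  have hi : 1 ≤ i := by omega
  have hi' : 1 ≤ i' := by omega
  rw [hred i hi, hred i' hi'] at heq
  have m1 : (i - 1) % n < n := Nat.mod_lt _ hn
  have m2 : (i' - 1) % n < n := Nat.mod_lt _ hn
  have heq2 : e ⟨(i-1) % n, m1⟩ = e ⟨(i'-1) % n, m2⟩ := heq
  have heq3 : (i-1) % n = (i'-1) % n := by
    have := hinj heq2
    exact Fin.mk.inj_iff.mp this
  -- conclude i = i'
  rcases Nat.le_total i i' with hle | hle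
  · have hd : n ∣ (i' - 1) - (i - 1) := (Nat.modEq_iff_dvd' (by omega)).mp heq3
    have := Nat.eq_zero_of_dvd_of_lt hd
    rcases Nat.eq_zero_or_pos ((i'-1) - (i-1)) with h0 | h0
    · omega
    · have hge := Nat.le_of_dvd h0 hd
      omega
  · have hd : n ∣ (i - 1) - (i' - 1) := (Nat.modEq_iff_dvd' (by omega)).mp heq3.symm
    rcases Nat.eq_zero_or_pos ((i-1) - (i'-1)) with h0 | h0
    · omega
    · have hge := Nat.le_of_dvd h0 hd
      omega


lemma path_sum {n : ℕ} (x : ℕ → Fin n → ℝ) (idx : ℕ → Fin n) (Δ : ℕ → ℝ)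
    (hx : ∀ i : ℕ, 1 ≤ i → x i = x (i - 1) + Δ i • (Pi.single (idx i) 1 : Fin n → ℝ)) :
    ∀ A B : ℕ, A ≤ B → x B = x A + ∑ m ∈ Finset.Ioc A B, Δ m • (Pi.single (idx m) 1 : Fin n → ℝ) := by
  intro A B hAB
  induction B, hAB using Nat.le_induction with
  | base => simp
  | succ B hAB ih =>
    have h1 : x (B+1) = x B + Δ (B+1) • (Pi.single (idx (B+1)) 1 : Fin n → ℝ) := by
      have := hx (B+1) (by omega)
      simpa using this
    rw [h1, ih, Finset.sum_Ioc_succ_top hAB]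
    abel

lemma path_norm {n : ℕ} (hn : 0 < n) (x : ℕ → Fin n → ℝ) (idx : ℕ → Fin n) (Δ : ℕ → ℝ)
    (hx : ∀ i : ℕ, 1 ≤ i → x i = x (i - 1) + Δ i • (Pi.single (idx i) 1 : Fin n → ℝ))
    (A B : ℕ)
    (hinj : ∀ i i', A + 1 ≤ i → i ≤ A + 1 + (n-1) → A + 1 ≤ i' → i' ≤ A + 1 + (n-1) →
      idx i = idx i' → i = i')
    (hAB : A ≤ B) (hBA : B - A ≤ n) :
    ∑ k, (x A k - x B k) ^ 2 ≤ ∑ m ∈ Finset.Ioc A B, Δ m ^ 2 := by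
  have hps := path_sum x idx Δ hx A B hAB
  have hcoord : ∀ k, x A k - x B k = -(∑ m ∈ Finset.Ioc A B, Δ m * ((Pi.single (idx m) (1:ℝ) : Fin n → ℝ) k)) := by
    intro k
    have : x B k = x A k + ∑ m ∈ Finset.Ioc A B, Δ m * ((Pi.single (idx m) (1:ℝ) : Fin n → ℝ) k) := by
      rw [hps]
      simp [Finset.sum_apply, Pi.smul_apply, smul_eq_mul]
    rw [this]; ring
  have hinj' : ∀ m ∈ Finset.Ioc A B, ∀ m' ∈ Finset.Ioc A B, idx m = idx m' → m = m' := by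
    intro m hm m' hm' h
    simp only [Finset.mem_Ioc] at hm hm'
    exact hinj m m' (by omega) (by omega) (by omega) (by omega) h
  set h : Fin n → ℝ := fun k => ∑ m ∈ Finset.Ioc A B, Δ m * ((Pi.single (idx m) (1:ℝ) : Fin n → ℝ) k) with hh
  have step1 : ∑ k, (x A k - x B k) ^ 2 = ∑ k, h k ^ 2 := by
    apply Finset.sum_congr rfl
    intro k _
    rw [hcoord k]; ring
  have hzero : ∀ k, k ∉ (Finset.Ioc A B).image idx → h k = 0 := by
    intro k hk
    simp only [hh]
    apply Finset.sum_eq_zero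
    intro m hm
    have : idx m ≠ k := by
      intro hc; exact hk (hc ▸ Finset.mem_image_of_mem idx hm)
    rw [Pi.single_apply, if_neg (fun hc => this hc.symm), mul_zero]
  have step2 : ∑ k, h k ^ 2 = ∑ k ∈ (Finset.Ioc A B).image idx, h k ^ 2 := by
    symm
    apply Finset.sum_subset (Finset.subset_univ _)
    intro k _ hk
    rw [hzero k hk]; ring
  have step3 : ∑ k ∈ (Finset.Ioc A B).image idx, h k ^ 2 = ∑ m ∈ Finset.Ioc A B, h (idx m) ^ 2 :=
    Finset.sum_image (fun m hm m' hm' hmm => hinj' m hm m' hm' hmm)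
  have step4 : ∀ m ∈ Finset.Ioc A B, h (idx m) = Δ m := by
    intro m hm
    simp only [hh]
    rw [Finset.sum_eq_single m]
    · rw [Pi.single_apply, if_pos rfl, mul_one]
    · intro m' hm' hne
      have : idx m' ≠ idx m := fun hc => hne (hinj' m' hm' m hm hc)
      rw [Pi.single_apply, if_neg (fun hc => this hc.symm), mul_zero]
    · intro hm'; exact absurd hm hm'
  rw [step1, step2, step3]
  apply le_of_eq
  apply Finset.sum_congr rfl
  intro m hm
  rw [step4 m hm]


lemma collapse_sum {n : ℕ} (idx : ℕ → Fin n) (F : Fin n → ℝ) (hF : ∀ k, 0 ≤ F k)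
    (w : ℕ) (I : Finset ℕ) (hI : I ⊆ Finset.Icc w (w + (n-1)))
    (hinj : ∀ i i', w ≤ i → i ≤ w + (n-1) → w ≤ i' → i' ≤ w + (n-1) →
      idx i = idx i' → i = i') :
    ∑ i ∈ I, F (idx i) ≤ ∑ k, F k := by
  calc ∑ i ∈ I, F (idx i)
      ≤ ∑ i ∈ Finset.Icc w (w + (n-1)), F (idx i) :=
        Finset.sum_le_sum_of_subset_of_nonneg hI (fun i _ _ => hF _)
    _ = ∑ k ∈ (Finset.Icc w (w + (n-1))).image idx, F k := by
        symm
        apply Finset.sum_image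
        intro i hi i' hi' hii
        simp only [Finset.coe_Icc, Set.mem_Icc] at hi hi'
        exact hinj i i' hi.1 hi.2 hi'.1 hi'.2 hii
    _ ≤ ∑ k, F k :=
        Finset.sum_le_sum_of_subset_of_nonneg (Finset.subset_univ _) (fun k _ _ => hF _)



/-- Doubling-interval bound for cyclic updates: for `n ≥ 2`, an `L`-Lipschitz-smooth
differentiable `f` (in the Euclidean norm), and a cyclically updated sequence
`x^i = x^{i-1} + Δᵢ·e_{kᵢ}`, for every `t ≥ 2n`,
`Σ_{i=t-2n+1}^{t} Σ_{j=max{t-2n+1, i-n+1}}^{i} (∇_{kᵢ} f(x^{j-1}) - ∇_{kᵢ} f(x^{i-1}))²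
  ≤ 2n·⌈log₂ n⌉²·L²·Σ_{i=t-2n+1}^{t} Δᵢ²`. -/
theorem doubling_interval_bound {n : ℕ} (hn : 2 ≤ n)
    (f : (Fin n → ℝ) → ℝ) (hf : Differentiable ℝ f) (L : ℝ)
    (hL : ∀ x y : Fin n → ℝ,
      Real.sqrt (∑ k, (grad f (x + y) k - grad f x k) ^ 2) ≤
        L * Real.sqrt (∑ k, y k ^ 2))
    (x : ℕ → Fin n → ℝ) (idx : ℕ → Fin n) (Δ : ℕ → ℝ)
    (hx : ∀ i : ℕ, 1 ≤ i → x i = x (i - 1) + Δ i • (Pi.single (idx i) 1 : Fin n → ℝ))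
    (hcyc : ∀ i : ℕ, 1 ≤ i → idx (i + n) = idx i)
    (hcover : ∀ c : Fin n, ∃ i : ℕ, 1 ≤ i ∧ i ≤ n ∧ idx i = c) :
    ∀ t : ℕ, 2 * n ≤ t →
      ∑ i ∈ Finset.Icc (t - 2 * n + 1) t,
          ∑ j ∈ Finset.Icc (max (t - 2 * n + 1) (i - n + 1)) i,
            (grad f (x (j - 1)) (idx i) - grad f (x (i - 1)) (idx i)) ^ 2 ≤
        2 * n * (Nat.clog 2 n : ℝ) ^ 2 * L ^ 2 *
          ∑ i ∈ Finset.Icc (t - 2 * n + 1) t, Δ i ^ 2 := by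
  intro t ht
  have hn0 : 0 < n := by omega
  set K := Nat.clog 2 n with hK
  have hK1 : 1 ≤ K := Nat.clog_pos (by norm_num) hn
  have hnK : n ≤ 2 ^ K := Nat.le_pow_clog (by norm_num) n
  have hKn : 2 ^ (K - 1) < n := by
    by_contra h; push_neg at h
    rw [← Nat.clog_le_iff_le_pow (by norm_num)] at h
    omega
  set lo := t - 2 * n + 1 with hlo
  have hlo1 : 1 ≤ lo := by omega
  have hL0 : 0 ≤ L := L_nonneg hn f L hL
  set W := Finset.Icc lo t with hW
  set SΔ := ∑ i ∈ W, Δ i ^ 2 with hSΔ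
  have hSΔ0 : 0 ≤ SΔ := Finset.sum_nonneg fun i _ => sq_nonneg _
  have hLS0 : 0 ≤ L ^ 2 * SΔ := mul_nonneg (sq_nonneg _) hSΔ0
  have hwinj : ∀ w : ℕ, 1 ≤ w → ∀ i i', w ≤ i → i ≤ w + (n-1) → w ≤ i' → i' ≤ w + (n-1) →
      idx i = idx i' → i = i' := fun w hw => idx_inj hn0 idx hcyc hcover w hw
  have key : ∀ (A B w : ℕ), 1 ≤ w → ∀ I : Finset ℕ, I ⊆ Finset.Icc w (w + (n-1)) →
      A ≤ B → B - A ≤ n →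
      ∑ i ∈ I, (grad f (x A) (idx i) - grad f (x B) (idx i)) ^ 2
        ≤ L ^ 2 * ∑ m ∈ Finset.Ioc A B, Δ m ^ 2 := by
    intro A B w hw I hI hAB hBA
    have h1 : ∑ i ∈ I, (grad f (x A) (idx i) - grad f (x B) (idx i)) ^ 2
        ≤ ∑ k, (grad f (x A) k - grad f (x B) k) ^ 2 :=
      collapse_sum idx (fun k => (grad f (x A) k - grad f (x B) k) ^ 2)
        (fun k => sq_nonneg _) w I hI (hwinj w hw)
    have h2 := lip_sq f L hL (x A) (x B)
    have h3 : ∑ k, (x A k - x B k)^2 ≤ ∑ m ∈ Finset.Ioc A B, Δ m ^ 2 :=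
      path_norm hn0 x idx Δ hx A B (fun i i' => hwinj (A+1) (by omega) i i') hAB hBA
    calc ∑ i ∈ I, (grad f (x A) (idx i) - grad f (x B) (idx i)) ^ 2
        ≤ ∑ k, (grad f (x A) k - grad f (x B) k) ^ 2 := h1
      _ ≤ L^2 * ∑ k, (x A k - x B k)^2 := h2
      _ ≤ L^2 * ∑ m ∈ Finset.Ioc A B, Δ m ^ 2 :=
          mul_le_mul_of_nonneg_left h3 (sq_nonneg L)
  -- the decomposition summands
  set a : ℕ → ℕ → ℕ → ℝ := fun s i j =>
    if 2^(s+1) ≤ i - j then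
      grad f (x (rup s (j-1))) (idx i) - grad f (x (rup (s+1) (j-1))) (idx i) else 0 with ha
  set b : ℕ → ℕ → ℕ → ℝ := fun s i j =>
    if 2^s ≤ i - j ∧ i - j < 2^(s+1) then
      grad f (x (rup s (j-1))) (idx i) - grad f (x (rdn s (i-1))) (idx i) else 0 with hb
  set c : ℕ → ℕ → ℕ → ℝ := fun s i j =>
    if 2^(s+1) ≤ i - j then
      grad f (x (rdn (s+1) (i-1))) (idx i) - grad f (x (rdn s (i-1))) (idx i) else 0 with hc
  have decomp : ∀ i j, j ≤ i → i - j ≤ n - 1 →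
      grad f (x (j-1)) (idx i) - grad f (x (i-1)) (idx i)
        = (∑ s ∈ Finset.range K, a s i j) + (∑ s ∈ Finset.range K, (b s i j + c s i j)) := by
    intro i j hji hijn
    rcases eq_or_lt_of_le hji with heq | hlt
    · subst heq
      have hz : ∀ s ∈ Finset.range K, a s j j = 0 := by
        intro s _
        have hp : 0 < 2^(s+1) := Nat.pow_pos (by norm_num)
        simp only [ha]
        rw [if_neg (by omega)]
      have hz2 : ∀ s ∈ Finset.range K, b s j j + c s j j = 0 := by
        intro s _
        have hp : 0 < 2^(s+1) := Nat.pow_pos (by norm_num)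
        have hp2 : 0 < 2^s := Nat.pow_pos (by norm_num)
        simp only [hb, hc]
        rw [if_neg (by omega), if_neg (by omega)]
        norm_num
      rw [Finset.sum_eq_zero hz, Finset.sum_eq_zero hz2]
      simp
    · set D := i - j with hD
      have hD1 : 1 ≤ D := by omega
      set S := Nat.log 2 D with hS
      have hS1 : 2^S ≤ D := Nat.pow_log_le_self 2 (by omega)
      have hS2 : D < 2^(S+1) := Nat.lt_pow_succ_log_self (by norm_num) D
      have hSK : S < K := by
        have h1 : 2^S < 2^K := by
          calc 2^S ≤ D := hS1
            _ ≤ n - 1 := hijn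
            _ < 2^K := by omega
        exact (Nat.pow_lt_pow_iff_right (by norm_num)).mp h1
      have hind : ∀ s, (2^(s+1) ≤ D ↔ s < S) := by
        intro s
        rw [← Nat.le_log_iff_pow_le (by norm_num) (by omega)]
        omega
      -- sum of a
      have hA : ∑ s ∈ Finset.range K, a s i j
          = grad f (x (j-1)) (idx i) - grad f (x (rup S (j-1))) (idx i) := by
        have e1 : ∑ s ∈ Finset.range S, a s i j = ∑ s ∈ Finset.range K, a s i j := by
          apply Finset.sum_subset (Finset.range_subset_range.mpr (le_of_lt hSK))
          intro s _ hs
          simp only [Finset.mem_range, not_lt] at hs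
          simp only [ha]
          rw [if_neg]
          rw [← hD, hind s]; omega
        rw [← e1]
        have e2 : ∀ s ∈ Finset.range S, a s i j =
            grad f (x (rup s (j-1))) (idx i) - grad f (x (rup (s+1) (j-1))) (idx i) := by
          intro s hs
          simp only [Finset.mem_range] at hs
          simp only [ha]
          rw [if_pos]
          rw [← hD, hind s]; omega
        rw [Finset.sum_congr rfl e2, Finset.sum_range_sub' (fun s => grad f (x (rup s (j-1))) (idx i)) S]
        rw [rup_zero]
      have hC : ∑ s ∈ Finset.range K, c s i j
          = grad f (x (rdn S (i-1))) (idx i) - grad f (x (i-1)) (idx i) := by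
        have e1 : ∑ s ∈ Finset.range S, c s i j = ∑ s ∈ Finset.range K, c s i j := by
          apply Finset.sum_subset (Finset.range_subset_range.mpr (le_of_lt hSK))
          intro s _ hs
          simp only [Finset.mem_range, not_lt] at hs
          simp only [hc]
          rw [if_neg]
          rw [← hD, hind s]; omega
        rw [← e1]
        have e2 : ∀ s ∈ Finset.range S, c s i j =
            grad f (x (rdn (s+1) (i-1))) (idx i) - grad f (x (rdn s (i-1))) (idx i) := by
          intro s hs
          simp only [Finset.mem_range] at hs
          simp only [hc]
          rw [if_pos]
          rw [← hD, hind s]; omega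
        rw [Finset.sum_congr rfl e2, Finset.sum_range_sub (fun s => grad f (x (rdn s (i-1))) (idx i)) S]
        rw [rdn_zero]
      have hB : ∑ s ∈ Finset.range K, b s i j
          = grad f (x (rup S (j-1))) (idx i) - grad f (x (rdn S (i-1))) (idx i) := by
        rw [Finset.sum_eq_single_of_mem S (Finset.mem_range.mpr hSK)]
        · simp only [hb]
          rw [if_pos]
          exact ⟨by rw [← hD]; exact hS1, by rw [← hD]; exact hS2⟩
        · intro s _ hsne
          simp only [hb]
          rw [if_neg]
          intro hcon
          rw [← hD] at hcon
          have c1 : s ≤ S := by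
            have := hcon.1
            rw [← Nat.le_log_iff_pow_le (by norm_num) (by omega)] at this
            exact this
          have c2 : S ≤ s := by
            by_contra hc2
            push_neg at hc2
            have : 2^(s+1) ≤ 2^S := Nat.pow_le_pow_right (by norm_num) (by omega)
            omega
          omega
      have hsplit : ∑ s ∈ Finset.range K, (b s i j + c s i j)
          = (∑ s ∈ Finset.range K, b s i j) + ∑ s ∈ Finset.range K, c s i j :=
        Finset.sum_add_distrib
      rw [hA, hsplit, hB, hC]
      ring
  -- square bound via Cauchy-Schwarz
  have sqsum : ∀ (T : Finset ℕ) (gg : ℕ → ℝ), (∑ i ∈ T, gg i)^2 ≤ (T.card : ℝ) * ∑ i ∈ T, gg i ^ 2 := by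
    intro T gg
    have h := Finset.sum_mul_sq_le_sq_mul_sq T (fun _ => (1:ℝ)) gg
    simp only [one_mul, one_pow] at h
    rw [Finset.sum_const, nsmul_eq_mul, mul_one] at h
    exact h
  have sqbd : ∀ i j, j ≤ i → i - j ≤ n - 1 →
      (grad f (x (j-1)) (idx i) - grad f (x (i-1)) (idx i)) ^ 2 ≤
        2 * (K:ℝ) * ∑ s ∈ Finset.range K, (a s i j ^ 2 + (b s i j ^ 2 + c s i j ^ 2)) := by
    intro i j hji hijn
    rw [decomp i j hji hijn]
    set P := ∑ s ∈ Finset.range K, a s i j with hP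
    set Q := ∑ s ∈ Finset.range K, (b s i j + c s i j) with hQ
    have h1 : (P + Q)^2 ≤ 2*P^2 + 2*Q^2 := by nlinarith [sq_nonneg (P - Q)]
    have csP : P^2 ≤ (K:ℝ) * ∑ s ∈ Finset.range K, a s i j ^ 2 := by
      have := sqsum (Finset.range K) (fun s => a s i j)
      rw [Finset.card_range] at this
      exact this
    have csQ : Q^2 ≤ (K:ℝ) * ∑ s ∈ Finset.range K, (b s i j + c s i j) ^ 2 := by
      have := sqsum (Finset.range K) (fun s => b s i j + c s i j)
      rw [Finset.card_range] at this
      exact this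
    have hbc : ∀ s, b s i j * c s i j = 0 := by
      intro s
      by_cases h : 2^(s+1) ≤ i - j
      · simp only [hb]
        rw [if_neg (fun hcon => by omega)]
        ring
      · simp only [hc]
        rw [if_neg h]
        ring
    have hsplit : ∑ s ∈ Finset.range K, (b s i j + c s i j) ^ 2
        = ∑ s ∈ Finset.range K, (b s i j ^ 2 + c s i j ^ 2) := by
      apply Finset.sum_congr rfl
      intro s _
      have e : (b s i j + c s i j)^2 = b s i j ^2 + c s i j ^2 + 2*(b s i j * c s i j) := by ring
      rw [e, hbc s]
      ring
    rw [hsplit] at csQ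
    have hfin : ∑ s ∈ Finset.range K, (a s i j ^ 2 + (b s i j ^ 2 + c s i j ^ 2))
        = (∑ s ∈ Finset.range K, a s i j ^ 2) + ∑ s ∈ Finset.range K, (b s i j ^2 + c s i j ^2) :=
      Finset.sum_add_distrib
    rw [hfin]
    have hK0 : (0:ℝ) ≤ (K:ℝ) := Nat.cast_nonneg K
    calc (P + Q)^2 ≤ 2*P^2 + 2*Q^2 := h1
      _ ≤ 2*((K:ℝ) * ∑ s ∈ Finset.range K, a s i j ^ 2)
          + 2*((K:ℝ) * ∑ s ∈ Finset.range K, (b s i j ^2 + c s i j ^2)) := by linarith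
      _ = 2 * (K:ℝ) * ((∑ s ∈ Finset.range K, a s i j ^ 2)
          + ∑ s ∈ Finset.range K, (b s i j ^2 + c s i j ^2)) := by ring
  -- swap i and j sums
  have swapij : ∀ (F : ℕ → ℕ → ℝ),
      (∑ i ∈ W, ∑ j ∈ Finset.Icc (max lo (i - n + 1)) i, F i j)
        = ∑ j ∈ W, ∑ i ∈ Finset.Icc j (min (j + (n-1)) t), F i j := by
    intro F
    apply Finset.sum_comm'
    intro i j
    simp only [hW, Finset.mem_Icc]
    omega
  -- bound A
  have boundA : ∀ s : ℕ, 2^s ≤ n →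
      ∑ i ∈ W, ∑ j ∈ Finset.Icc (max lo (i - n + 1)) i, a s i j ^ 2
        ≤ ((2^s : ℕ) : ℝ) * (L ^ 2 * SΔ) := by
    intro s hsn
    have hps : (2:ℕ)^(s+1) = 2 * 2^s := by rw [pow_succ]; ring
    have hp2 : 0 < 2^s := pow_pos2 s
    rw [swapij (fun i j => a s i j ^ 2)]
    set EA : ℕ → Finset ℕ := fun j =>
      if j + 2^(s+1) ≤ t then Finset.Ioc (rup s (j-1)) (rup (s+1) (j-1)) else ∅ with hEA
    have perj : ∀ j ∈ W, ∑ i ∈ Finset.Icc j (min (j + (n-1)) t), a s i j ^ 2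
        ≤ L^2 * ∑ m ∈ EA j, Δ m ^ 2 := by
      intro j hj
      simp only [hW, Finset.mem_Icc] at hj
      have e1 : ∀ i ∈ Finset.Icc j (min (j + (n-1)) t), a s i j ^ 2 =
          if 2^(s+1) ≤ i - j then
            (grad f (x (rup s (j-1))) (idx i) - grad f (x (rup (s+1) (j-1))) (idx i))^2 else 0 := by
        intro i _
        simp only [ha]
        by_cases hcond : 2^(s+1) ≤ i - j
        · rw [if_pos hcond, if_pos hcond]
        · rw [if_neg hcond, if_neg hcond]; norm_num
      rw [Finset.sum_congr rfl e1, ← Finset.sum_filter]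
      by_cases hjt : j + 2^(s+1) ≤ t
      · have hsub : (Finset.Icc j (min (j + (n-1)) t)).filter (fun i => 2^(s+1) ≤ i - j)
            ⊆ Finset.Icc (j + 2^(s+1)) (j + 2^(s+1) + (n-1)) := by
          intro i hi
          simp only [Finset.mem_filter, Finset.mem_Icc] at hi ⊢
          omega
        have hAB : rup s (j-1) ≤ rup (s+1) (j-1) :=
          rup_min (dvd_trans (pow_dvd_pow 2 (Nat.le_succ s)) (dvd_rup (s+1) (j-1)))
            (le_rup (s+1) (j-1))
        have hBA : rup (s+1) (j-1) - rup s (j-1) ≤ n := by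
          have := rup_succ_le s (j-1)
          omega
        have hk := key (rup s (j-1)) (rup (s+1) (j-1)) (j + 2^(s+1)) (by omega) _ hsub hAB hBA
        simp only [hEA, if_pos hjt]
        exact hk
      · have hempty : (Finset.Icc j (min (j + (n-1)) t)).filter (fun i => 2^(s+1) ≤ i - j) = ∅ := by
          apply Finset.filter_false_of_mem
          intro i hi
          simp only [Finset.mem_Icc] at hi
          omega
        rw [hempty]
        simp only [hEA, if_neg hjt]
        simp
    have hEAsub : ∀ j ∈ W, EA j ⊆ W := by
      intro j hj m hm
      simp only [hW, Finset.mem_Icc] at hj ⊢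
      simp only [hEA] at hm
      by_cases hjt : j + 2^(s+1) ≤ t
      · rw [if_pos hjt] at hm
        simp only [Finset.mem_Ioc] at hm
        have h1 := le_rup s (j-1)
        have h2 := rup_lt (s+1) (j-1)
        omega
      · rw [if_neg hjt] at hm; exact absurd hm (Finset.notMem_empty m)
    have count : ∑ j ∈ W, ∑ m ∈ EA j, Δ m ^ 2 ≤ ((2^s:ℕ):ℝ) * SΔ := by
      have e1 : ∀ j ∈ W, ∑ m ∈ EA j, Δ m ^2 = ∑ m ∈ W, if m ∈ EA j then Δ m ^2 else 0 := by
        intro j hj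
        rw [Finset.sum_ite_mem, Finset.inter_eq_right.mpr (hEAsub j hj)]
      rw [Finset.sum_congr rfl e1, Finset.sum_comm]
      have e2 : ∀ m ∈ W, (∑ j ∈ W, if m ∈ EA j then Δ m ^2 else 0) ≤ ((2^s:ℕ):ℝ) * Δ m ^2 := by
        intro m hm
        rw [← Finset.sum_filter, Finset.sum_const, nsmul_eq_mul]
        have hcard : (W.filter (fun j => m ∈ EA j)).card ≤ 2^s := by
          have hsub2 : W.filter (fun j => m ∈ EA j) ⊆
              Finset.Icc (rup (s+1) m + 2 - 2^(s+1)) (rup (s+1) m + 1 - 2^s) := by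
            intro j hj
            simp only [Finset.mem_filter, hW, Finset.mem_Icc] at hj
            obtain ⟨⟨hj1, hj2⟩, hmE⟩ := hj
            simp only [hEA] at hmE
            by_cases hjt : j + 2^(s+1) ≤ t
            swap
            · rw [if_neg hjt] at hmE; exact absurd hmE (Finset.notMem_empty m)
            rw [if_pos hjt] at hmE
            simp only [Finset.mem_Ioc] at hmE
            obtain ⟨hm1, hm2⟩ := hmE
            have f1 : j - 1 ≤ rup s (j-1) := le_rup s (j-1)
            have f2 : rup s (j-1) < (j-1) + 2^s := rup_lt s (j-1)
            have f3 : rup (s+1) (j-1) ≤ rup s (j-1) + 2^s := rup_succ_le s (j-1)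
            have f5 : rup (s+1) m ≤ rup (s+1) (j-1) :=
              rup_min (dvd_rup (s+1) (j-1)) (by omega)
            have g2 : m ≤ rup (s+1) m := le_rup (s+1) m
            have f6 : rup (s+1) m = rup (s+1) (j-1) :=
              dvd_eq_of_lt (dvd_rup (s+1) m) (dvd_rup (s+1) (j-1)) f5 (by omega)
            have d1 : 2^s ∣ rup (s+1) (j-1) - rup s (j-1) :=
              Nat.dvd_sub (dvd_trans (pow_dvd_pow 2 (Nat.le_succ s)) (dvd_rup (s+1) (j-1)))
                (dvd_rup s (j-1))
            have d2 := Nat.le_of_dvd (by omega) d1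
            simp only [Finset.mem_Icc]
            omega
          calc (W.filter (fun j => m ∈ EA j)).card ≤ _ := Finset.card_le_card hsub2
            _ ≤ 2^s := by
                rw [Nat.card_Icc]
                omega
        exact mul_le_mul_of_nonneg_right (Nat.cast_le.mpr hcard) (sq_nonneg _)
      calc ∑ m ∈ W, ∑ j ∈ W, (if m ∈ EA j then Δ m ^2 else 0)
          ≤ ∑ m ∈ W, ((2^s:ℕ):ℝ) * Δ m ^2 := Finset.sum_le_sum e2
        _ = ((2^s:ℕ):ℝ) * SΔ := by rw [hSΔ, Finset.mul_sum]
    calc ∑ j ∈ W, ∑ i ∈ Finset.Icc j (min (j + (n-1)) t), a s i j ^2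
        ≤ ∑ j ∈ W, L^2 * ∑ m ∈ EA j, Δ m ^2 := Finset.sum_le_sum perj
      _ = L^2 * ∑ j ∈ W, ∑ m ∈ EA j, Δ m ^2 := by rw [Finset.mul_sum]
      _ ≤ L^2 * (((2^s:ℕ):ℝ) * SΔ) := mul_le_mul_of_nonneg_left count (sq_nonneg L)
      _ = ((2^s:ℕ):ℝ) * (L^2 * SΔ) := by ring
  have zeroA : ∀ s : ℕ, n ≤ 2^(s+1) →
      ∑ i ∈ W, ∑ j ∈ Finset.Icc (max lo (i - n + 1)) i, a s i j ^ 2 = 0 := by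
    intro s hs
    apply Finset.sum_eq_zero; intro i hi
    apply Finset.sum_eq_zero; intro j hj
    simp only [hW, Finset.mem_Icc] at hi hj
    simp only [ha]
    rw [if_neg (by omega)]
    norm_num
  have boundB : ∀ s : ℕ, 2^s ≤ n →
      ∑ i ∈ W, ∑ j ∈ Finset.Icc (max lo (i - n + 1)) i, b s i j ^ 2
        ≤ ((2^s : ℕ) : ℝ) * (L ^ 2 * SΔ) := by
    intro s hsn
    have hps : (2:ℕ)^(s+1) = 2 * 2^s := by rw [pow_succ]; ring
    have hp2 : 0 < 2^s := pow_pos2 s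
    rw [swapij (fun i j => b s i j ^ 2)]
    set EB : ℕ → Finset ℕ := fun j =>
      if rup s (j-1) + 2^s ≤ t - 1 then Finset.Ioc (rup s (j-1)) (rup s (j-1) + 2^s) else ∅ with hEB
    have perj : ∀ j ∈ W, ∑ i ∈ Finset.Icc j (min (j + (n-1)) t), b s i j ^ 2
        ≤ L^2 * ∑ m ∈ EB j, Δ m ^ 2 := by
      intro j hj
      simp only [hW, Finset.mem_Icc] at hj
      have e1 : ∀ i ∈ Finset.Icc j (min (j + (n-1)) t), b s i j ^ 2 =
          if 2^s ≤ i - j ∧ i - j < 2^(s+1) then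
            (grad f (x (rup s (j-1))) (idx i) - grad f (x (rdn s (i-1))) (idx i))^2 else 0 := by
        intro i _
        simp only [hb]
        by_cases hcond : 2^s ≤ i - j ∧ i - j < 2^(s+1)
        · rw [if_pos hcond, if_pos hcond]
        · rw [if_neg hcond, if_neg hcond]; norm_num
      rw [Finset.sum_congr rfl e1, ← Finset.sum_filter]
      -- split the filtered set by the value of rdn s (i-1)
      set F1 := (Finset.Icc j (min (j + (n-1)) t)).filter (fun i => 2^s ≤ i - j ∧ i - j < 2^(s+1)) with hF1
      have hvals : ∀ i ∈ F1, rdn s (i-1) = rup s (j-1) ∨ rdn s (i-1) = rup s (j-1) + 2^s := by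
        intro i hi
        simp only [hF1, Finset.mem_filter, Finset.mem_Icc] at hi
        obtain ⟨⟨hi1, hi2⟩, hi3, hi4⟩ := hi
        have f1 : j - 1 ≤ rup s (j-1) := le_rup s (j-1)
        have f2 : rup s (j-1) < (j-1) + 2^s := rup_lt s (j-1)
        have f3 : rup s (j-1) ≤ i - 1 := by omega
        have f4 : rup s (j-1) ≤ rdn s (i-1) := rdn_max (dvd_rup s (j-1)) f3
        have f5 : rdn s (i-1) ≤ i - 1 := rdn_le s (i-1)
        rcases dvd_eq_or_of_lt hp2 (dvd_rup s (j-1)) (dvd_rdn s (i-1)) f4 (by omega) with h | h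
        · left; omega
        · right; omega
      have hsplitF : ∑ i ∈ F1, (grad f (x (rup s (j-1))) (idx i) - grad f (x (rdn s (i-1))) (idx i))^2
          = (∑ i ∈ F1.filter (fun i => rdn s (i-1) = rup s (j-1) + 2^s),
              (grad f (x (rup s (j-1))) (idx i) - grad f (x (rdn s (i-1))) (idx i))^2)
            + ∑ i ∈ F1.filter (fun i => ¬ rdn s (i-1) = rup s (j-1) + 2^s),
              (grad f (x (rup s (j-1))) (idx i) - grad f (x (rdn s (i-1))) (idx i))^2 :=
        (Finset.sum_filter_add_sum_filter_not F1 _ _).symm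
      have hzero2 : ∑ i ∈ F1.filter (fun i => ¬ rdn s (i-1) = rup s (j-1) + 2^s),
          (grad f (x (rup s (j-1))) (idx i) - grad f (x (rdn s (i-1))) (idx i))^2 = 0 := by
        apply Finset.sum_eq_zero
        intro i hi
        simp only [Finset.mem_filter] at hi
        have := hvals i hi.1
        have heq : rdn s (i-1) = rup s (j-1) := by tauto
        rw [heq, sub_self]
        norm_num
      rw [hsplitF, hzero2, add_zero]
      set F2 := F1.filter (fun i => rdn s (i-1) = rup s (j-1) + 2^s) with hF2
      have hcongr : ∀ i ∈ F2, (grad f (x (rup s (j-1))) (idx i) - grad f (x (rdn s (i-1))) (idx i))^2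
          = (grad f (x (rup s (j-1))) (idx i) - grad f (x (rup s (j-1) + 2^s)) (idx i))^2 := by
        intro i hi
        simp only [hF2, Finset.mem_filter] at hi
        rw [hi.2]
      rw [Finset.sum_congr rfl hcongr]
      by_cases hjt : rup s (j-1) + 2^s ≤ t - 1
      · have hsub : F2 ⊆ Finset.Icc (j + 2^s) (j + 2^s + (n-1)) := by
          intro i hi
          simp only [hF2, hF1, Finset.mem_filter, Finset.mem_Icc] at hi
          simp only [Finset.mem_Icc]
          omega
        have hk := key (rup s (j-1)) (rup s (j-1) + 2^s) (j + 2^s) (by omega) _ hsub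
          (by omega) (by omega)
        simp only [hEB, if_pos hjt]
        exact hk
      · have hempty : F2 = ∅ := by
          rw [Finset.eq_empty_iff_forall_notMem]
          intro i hi
          simp only [hF2, hF1, Finset.mem_filter, Finset.mem_Icc] at hi
          have f5 : rdn s (i-1) ≤ i - 1 := rdn_le s (i-1)
          omega
        rw [hempty]
        simp only [hEB, if_neg hjt]
        simp
    have hEBsub : ∀ j ∈ W, EB j ⊆ W := by
      intro j hj m hm
      simp only [hW, Finset.mem_Icc] at hj ⊢
      simp only [hEB] at hm
      by_cases hjt : rup s (j-1) + 2^s ≤ t - 1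
      · rw [if_pos hjt] at hm
        simp only [Finset.mem_Ioc] at hm
        have h1 := le_rup s (j-1)
        omega
      · rw [if_neg hjt] at hm; exact absurd hm (Finset.notMem_empty m)
    have count : ∑ j ∈ W, ∑ m ∈ EB j, Δ m ^ 2 ≤ ((2^s:ℕ):ℝ) * SΔ := by
      have e1 : ∀ j ∈ W, ∑ m ∈ EB j, Δ m ^2 = ∑ m ∈ W, if m ∈ EB j then Δ m ^2 else 0 := by
        intro j hj
        rw [Finset.sum_ite_mem, Finset.inter_eq_right.mpr (hEBsub j hj)]
      rw [Finset.sum_congr rfl e1, Finset.sum_comm]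
      have e2 : ∀ m ∈ W, (∑ j ∈ W, if m ∈ EB j then Δ m ^2 else 0) ≤ ((2^s:ℕ):ℝ) * Δ m ^2 := by
        intro m hm
        rw [← Finset.sum_filter, Finset.sum_const, nsmul_eq_mul]
        have hcard : (W.filter (fun j => m ∈ EB j)).card ≤ 2^s := by
          have hsub2 : W.filter (fun j => m ∈ EB j) ⊆
              Finset.Icc (rdn s (m-1) + 2 - 2^s) (rdn s (m-1) + 1) := by
            intro j hj
            simp only [Finset.mem_filter, hW, Finset.mem_Icc] at hj
            obtain ⟨⟨hj1, hj2⟩, hmE⟩ := hj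
            simp only [hEB] at hmE
            by_cases hjt : rup s (j-1) + 2^s ≤ t - 1
            swap
            · rw [if_neg hjt] at hmE; exact absurd hmE (Finset.notMem_empty m)
            rw [if_pos hjt] at hmE
            simp only [Finset.mem_Ioc] at hmE
            obtain ⟨hm1, hm2⟩ := hmE
            have f1 : j - 1 ≤ rup s (j-1) := le_rup s (j-1)
            have f2 : rup s (j-1) < (j-1) + 2^s := rup_lt s (j-1)
            have f3 : rup s (j-1) ≤ rdn s (m-1) := rdn_max (dvd_rup s (j-1)) (by omega)
            have f4 : rdn s (m-1) ≤ m - 1 := rdn_le s (m-1)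
            have f6 : rup s (j-1) = rdn s (m-1) :=
              dvd_eq_of_lt (dvd_rup s (j-1)) (dvd_rdn s (m-1)) f3 (by omega)
            simp only [Finset.mem_Icc]
            omega
          calc (W.filter (fun j => m ∈ EB j)).card ≤ _ := Finset.card_le_card hsub2
            _ ≤ 2^s := by
                rw [Nat.card_Icc]
                omega
        exact mul_le_mul_of_nonneg_right (Nat.cast_le.mpr hcard) (sq_nonneg _)
      calc ∑ m ∈ W, ∑ j ∈ W, (if m ∈ EB j then Δ m ^2 else 0)
          ≤ ∑ m ∈ W, ((2^s:ℕ):ℝ) * Δ m ^2 := Finset.sum_le_sum e2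
        _ = ((2^s:ℕ):ℝ) * SΔ := by rw [hSΔ, Finset.mul_sum]
    calc ∑ j ∈ W, ∑ i ∈ Finset.Icc j (min (j + (n-1)) t), b s i j ^2
        ≤ ∑ j ∈ W, L^2 * ∑ m ∈ EB j, Δ m ^2 := Finset.sum_le_sum perj
      _ = L^2 * ∑ j ∈ W, ∑ m ∈ EB j, Δ m ^2 := by rw [Finset.mul_sum]
      _ ≤ L^2 * (((2^s:ℕ):ℝ) * SΔ) := mul_le_mul_of_nonneg_left count (sq_nonneg L)
      _ = ((2^s:ℕ):ℝ) * (L^2 * SΔ) := by ring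
  have zeroB : ∀ s : ℕ, n ≤ 2^s →
      ∑ i ∈ W, ∑ j ∈ Finset.Icc (max lo (i - n + 1)) i, b s i j ^ 2 = 0 := by
    intro s hs
    apply Finset.sum_eq_zero; intro i hi
    apply Finset.sum_eq_zero; intro j hj
    simp only [hW, Finset.mem_Icc] at hi hj
    simp only [hb]
    rw [if_neg (fun hcon => by omega)]
    norm_num
  have boundC : ∀ s : ℕ, 2^(s+1) ≤ n →
      ∑ i ∈ W, ∑ j ∈ Finset.Icc (max lo (i - n + 1)) i, c s i j ^ 2
        ≤ (((n - 2^(s+1)) : ℕ) : ℝ) * (L ^ 2 * SΔ) := by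
    intro s hsn
    have hps : (2:ℕ)^(s+1) = 2 * 2^s := by rw [pow_succ]; ring
    have hp2 : 0 < 2^s := pow_pos2 s
    -- inner sum over j is a cardinality times a fixed term
    set D : ℕ → ℝ := fun i => if lo + 2^(s+1) ≤ i then
        (grad f (x (rdn (s+1) (i-1))) (idx i) - grad f (x (rdn s (i-1))) (idx i))^2 else 0 with hD
    have hD0 : ∀ i, 0 ≤ D i := by
      intro i
      simp only [hD]
      by_cases h : lo + 2^(s+1) ≤ i
      · rw [if_pos h]; exact sq_nonneg _
      · rw [if_neg h]
    have peri : ∀ i ∈ W, ∑ j ∈ Finset.Icc (max lo (i - n + 1)) i, c s i j ^ 2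
        ≤ (((n - 2^(s+1)) : ℕ) : ℝ) * D i := by
      intro i hi
      simp only [hW, Finset.mem_Icc] at hi
      have e1 : ∀ j ∈ Finset.Icc (max lo (i - n + 1)) i, c s i j ^ 2 =
          if 2^(s+1) ≤ i - j then
            (grad f (x (rdn (s+1) (i-1))) (idx i) - grad f (x (rdn s (i-1))) (idx i))^2 else 0 := by
        intro j _
        simp only [hc]
        by_cases hcond : 2^(s+1) ≤ i - j
        · rw [if_pos hcond, if_pos hcond]
        · rw [if_neg hcond, if_neg hcond]; norm_num
      rw [Finset.sum_congr rfl e1, ← Finset.sum_filter, Finset.sum_const, nsmul_eq_mul]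
      by_cases hcase : lo + 2^(s+1) ≤ i
      · have hcard : ((Finset.Icc (max lo (i - n + 1)) i).filter (fun j => 2^(s+1) ≤ i - j)).card
            ≤ n - 2^(s+1) := by
          have hsub : (Finset.Icc (max lo (i - n + 1)) i).filter (fun j => 2^(s+1) ≤ i - j)
              ⊆ Finset.Icc (max lo (i - n + 1)) (i - 2^(s+1)) := by
            intro j hj
            simp only [Finset.mem_filter, Finset.mem_Icc] at hj ⊢
            omega
          calc _ ≤ (Finset.Icc (max lo (i - n + 1)) (i - 2^(s+1))).card :=
                Finset.card_le_card hsub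
            _ ≤ n - 2^(s+1) := by
                rw [Nat.card_Icc]
                omega
        simp only [hD, if_pos hcase]
        exact mul_le_mul_of_nonneg_right (Nat.cast_le.mpr hcard) (sq_nonneg _)
      · have hempty : (Finset.Icc (max lo (i - n + 1)) i).filter (fun j => 2^(s+1) ≤ i - j) = ∅ := by
          apply Finset.filter_false_of_mem
          intro j hj
          simp only [Finset.mem_Icc] at hj
          omega
        rw [hempty]
        simp only [hD, if_neg hcase]
        simp
    -- now bound the sum of D over W via fibering by rdn s (i-1)
    set φ : ℕ → ℕ := fun i => rdn s (i-1) with hφ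
    set EC : ℕ → Finset ℕ := fun cc =>
      if lo ≤ rdn (s+1) cc ∧ cc ≤ t - 1 then Finset.Ioc (rdn (s+1) cc) cc else ∅ with hEC
    have fiber : ∀ cc ∈ W.image φ, ∑ i ∈ W.filter (fun i => φ i = cc), D i
        ≤ L^2 * ∑ m ∈ EC cc, Δ m ^ 2 := by
      intro cc hcc
      by_cases hcond : lo ≤ rdn (s+1) cc ∧ cc ≤ t - 1
      · have hDle : ∀ i ∈ W.filter (fun i => φ i = cc), D i ≤
            (grad f (x (rdn (s+1) cc)) (idx i) - grad f (x cc) (idx i))^2 := by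
          intro i hi
          simp only [Finset.mem_filter, hφ] at hi
          have hrr : rdn (s+1) (i-1) = rdn (s+1) cc := by
            rw [← hi.2, rdn_rdn]
          simp only [hD]
          by_cases h : lo + 2^(s+1) ≤ i
          · rw [if_pos h, hrr, hi.2]
          · rw [if_neg h]
            exact sq_nonneg _
        have hsub : W.filter (fun i => φ i = cc) ⊆ Finset.Icc (cc+1) ((cc+1) + (n-1)) := by
          intro i hi
          simp only [Finset.mem_filter, hφ, hW, Finset.mem_Icc] at hi
          obtain ⟨⟨hi1, hi2⟩, hieq⟩ := hi
          have g1 : rdn s (i-1) ≤ i - 1 := rdn_le s (i-1)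
          have g2 : i - 1 < rdn s (i-1) + 2^s := lt_rdn s (i-1)
          simp only [Finset.mem_Icc]
          omega
        have hk := key (rdn (s+1) cc) cc (cc+1) (by omega) _ hsub
          (rdn_le (s+1) cc) (by have := lt_rdn (s+1) cc; omega)
        simp only [hEC, if_pos hcond]
        calc ∑ i ∈ W.filter (fun i => φ i = cc), D i
            ≤ ∑ i ∈ W.filter (fun i => φ i = cc),
              (grad f (x (rdn (s+1) cc)) (idx i) - grad f (x cc) (idx i))^2 :=
              Finset.sum_le_sum hDle
          _ ≤ L^2 * ∑ m ∈ Finset.Ioc (rdn (s+1) cc) cc, Δ m ^ 2 := hk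
      · have hz : ∀ i ∈ W.filter (fun i => φ i = cc), D i = 0 := by
          intro i hi
          simp only [Finset.mem_filter, hφ, hW, Finset.mem_Icc] at hi
          obtain ⟨⟨hi1, hi2⟩, hieq⟩ := hi
          simp only [hD]
          rw [if_neg]
          intro hcon
          apply hcond
          have hrr : rdn (s+1) (i-1) = rdn (s+1) cc := by
            rw [← hieq, rdn_rdn]
          have g1 : i - 1 < rdn (s+1) (i-1) + 2^(s+1) := lt_rdn (s+1) (i-1)
          have g2 : rdn s (i-1) ≤ i - 1 := rdn_le s (i-1)
          constructor
          · omega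
          · omega
        rw [Finset.sum_eq_zero hz]
        simp only [hEC, if_neg hcond]
        simp
    have hECsub : ∀ cc, EC cc ⊆ W := by
      intro cc m hm
      simp only [hEC] at hm
      by_cases hcond : lo ≤ rdn (s+1) cc ∧ cc ≤ t - 1
      · rw [if_pos hcond] at hm
        simp only [Finset.mem_Ioc] at hm
        simp only [hW, Finset.mem_Icc]
        omega
      · rw [if_neg hcond] at hm; exact absurd hm (Finset.notMem_empty m)
    have hdisj : (↑(W.image φ) : Set ℕ).PairwiseDisjoint EC := by
      intro c1 hc1 c2 hc2 hne
      simp only [Finset.coe_image, Set.mem_image] at hc1 hc2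
      apply Finset.disjoint_left.mpr
      intro m hm1 hm2
      simp only [hEC] at hm1 hm2
      by_cases h1 : lo ≤ rdn (s+1) c1 ∧ c1 ≤ t - 1
      swap
      · rw [if_neg h1] at hm1; exact absurd hm1 (Finset.notMem_empty m)
      by_cases h2 : lo ≤ rdn (s+1) c2 ∧ c2 ≤ t - 1
      swap
      · rw [if_neg h2] at hm2; exact absurd hm2 (Finset.notMem_empty m)
      rw [if_pos h1] at hm1
      rw [if_pos h2] at hm2
      simp only [Finset.mem_Ioc] at hm1 hm2
      obtain ⟨i1, hi1W, hi1⟩ := hc1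
      obtain ⟨i2, hi2W, hi2⟩ := hc2
      have hd1 : 2^s ∣ c1 := by rw [← hi1]; exact dvd_rdn s (i1-1)
      have hd2 : 2^s ∣ c2 := by rw [← hi2]; exact dvd_rdn s (i2-1)
      have hB1 : c1 < rdn (s+1) c1 + 2^(s+1) := lt_rdn (s+1) c1
      have hB2 : c2 < rdn (s+1) c2 + 2^(s+1) := lt_rdn (s+1) c2
      have hBd1 : 2^(s+1) ∣ rdn (s+1) c1 := dvd_rdn (s+1) c1
      have hBd2 : 2^(s+1) ∣ rdn (s+1) c2 := dvd_rdn (s+1) c2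
      have hBeq : rdn (s+1) c1 = rdn (s+1) c2 := by
        rcases Nat.le_total (rdn (s+1) c1) (rdn (s+1) c2) with hle | hle
        · exact dvd_eq_of_lt hBd1 hBd2 hle (by omega)
        · exact (dvd_eq_of_lt hBd2 hBd1 hle (by omega)).symm
      have hc1v : c1 = rdn (s+1) c1 + 2^s := by
        rcases dvd_eq_or_of_lt hp2
          (dvd_trans (pow_dvd_pow 2 (Nat.le_succ s)) hBd1) hd1
          (rdn_le (s+1) c1) (by omega) with h | h
        · omega
        · omega
      have hc2v : c2 = rdn (s+1) c2 + 2^s := by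
        rcases dvd_eq_or_of_lt hp2
          (dvd_trans (pow_dvd_pow 2 (Nat.le_succ s)) hBd2) hd2
          (rdn_le (s+1) c2) (by omega) with h | h
        · omega
        · omega
      exact hne (by omega)
    have sumD : ∑ i ∈ W, D i ≤ L^2 * SΔ := by
      rw [← Finset.sum_fiberwise_of_maps_to (fun i hi => Finset.mem_image_of_mem φ hi) D]
      calc ∑ cc ∈ W.image φ, ∑ i ∈ W.filter (fun i => φ i = cc), D i
          ≤ ∑ cc ∈ W.image φ, L^2 * ∑ m ∈ EC cc, Δ m ^ 2 := Finset.sum_le_sum fiber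
        _ = L^2 * ∑ cc ∈ W.image φ, ∑ m ∈ EC cc, Δ m ^ 2 := by rw [Finset.mul_sum]
        _ ≤ L^2 * SΔ := by
            apply mul_le_mul_of_nonneg_left _ (sq_nonneg L)
            rw [← Finset.sum_biUnion hdisj]
            apply Finset.sum_le_sum_of_subset_of_nonneg
            · intro m hm
              simp only [Finset.mem_biUnion] at hm
              obtain ⟨cc, _, hmc⟩ := hm
              exact hECsub cc hmc
            · intro m _ _
              exact sq_nonneg _
    calc ∑ i ∈ W, ∑ j ∈ Finset.Icc (max lo (i - n + 1)) i, c s i j ^ 2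
        ≤ ∑ i ∈ W, (((n - 2^(s+1)) : ℕ) : ℝ) * D i := Finset.sum_le_sum peri
      _ = (((n - 2^(s+1)) : ℕ) : ℝ) * ∑ i ∈ W, D i := by rw [Finset.mul_sum]
      _ ≤ (((n - 2^(s+1)) : ℕ) : ℝ) * (L^2 * SΔ) :=
          mul_le_mul_of_nonneg_left sumD (Nat.cast_nonneg _)
  have zeroC : ∀ s : ℕ, n ≤ 2^(s+1) →
      ∑ i ∈ W, ∑ j ∈ Finset.Icc (max lo (i - n + 1)) i, c s i j ^ 2 = 0 := by
    intro s hs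
    apply Finset.sum_eq_zero; intro i hi
    apply Finset.sum_eq_zero; intro j hj
    simp only [hW, Finset.mem_Icc] at hi hj
    simp only [hc]
    rw [if_neg (by omega)]
    norm_num
  -- per scale bound
  have perS : ∀ s ∈ Finset.range K,
      (∑ i ∈ W, ∑ j ∈ Finset.Icc (max lo (i - n + 1)) i, a s i j ^ 2)
      + ((∑ i ∈ W, ∑ j ∈ Finset.Icc (max lo (i - n + 1)) i, b s i j ^ 2)
      + (∑ i ∈ W, ∑ j ∈ Finset.Icc (max lo (i - n + 1)) i, c s i j ^ 2))
        ≤ (n:ℝ) * (L^2 * SΔ) := by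
    intro s hs
    simp only [Finset.mem_range] at hs
    have hsK : 2^s ≤ 2^(K-1) := Nat.pow_le_pow_right (by norm_num) (by omega)
    have hsn : 2^s ≤ n := by omega
    rcases le_or_gt (2^(s+1)) n with h | h
    · have hA := boundA s hsn
      have hB := boundB s hsn
      have hC := boundC s h
      have hcast : ((2^s:ℕ):ℝ) + ((2^s:ℕ):ℝ) + (((n - 2^(s+1)):ℕ):ℝ) = (n:ℝ) := by
        rw [Nat.cast_sub h]
        push_cast [pow_succ]
        ring
      nlinarith [hLS0]
    · have hA := zeroA s (le_of_lt h)
      have hC := zeroC s (le_of_lt h)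
      have hB := boundB s hsn
      have hcast : ((2^s:ℕ):ℝ) ≤ (n:ℝ) := Nat.cast_le.mpr hsn
      nlinarith [hLS0]
  -- rearrangement and conclusion
  have swap1 : ∀ (Y : ℕ → ℕ → ℕ → ℝ),
      (∑ i ∈ W, ∑ j ∈ Finset.Icc (max lo (i - n + 1)) i, ∑ s ∈ Finset.range K, Y s i j)
        = ∑ s ∈ Finset.range K, ∑ i ∈ W, ∑ j ∈ Finset.Icc (max lo (i - n + 1)) i, Y s i j := by
    intro Y
    have e1 : ∀ i ∈ W, (∑ j ∈ Finset.Icc (max lo (i - n + 1)) i, ∑ s ∈ Finset.range K, Y s i j)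
        = ∑ s ∈ Finset.range K, ∑ j ∈ Finset.Icc (max lo (i - n + 1)) i, Y s i j :=
      fun i _ => Finset.sum_comm
    rw [Finset.sum_congr rfl e1]
    exact Finset.sum_comm
  calc ∑ i ∈ W, ∑ j ∈ Finset.Icc (max lo (i - n + 1)) i,
        (grad f (x (j - 1)) (idx i) - grad f (x (i - 1)) (idx i)) ^ 2
      ≤ ∑ i ∈ W, ∑ j ∈ Finset.Icc (max lo (i - n + 1)) i,
          (2 * (K:ℝ) * ∑ s ∈ Finset.range K, (a s i j ^ 2 + (b s i j ^ 2 + c s i j ^ 2))) := by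
        apply Finset.sum_le_sum
        intro i hi
        apply Finset.sum_le_sum
        intro j hj
        simp only [hW, Finset.mem_Icc] at hi hj
        exact sqbd i j (by omega) (by omega)
    _ = 2 * (K:ℝ) * ∑ s ∈ Finset.range K, ∑ i ∈ W, ∑ j ∈ Finset.Icc (max lo (i - n + 1)) i,
          (a s i j ^ 2 + (b s i j ^ 2 + c s i j ^ 2)) := by
        simp only [← Finset.mul_sum]
        rw [swap1 (fun s i j => a s i j ^ 2 + (b s i j ^ 2 + c s i j ^ 2))]
    _ = 2 * (K:ℝ) * ∑ s ∈ Finset.range K,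
          ((∑ i ∈ W, ∑ j ∈ Finset.Icc (max lo (i - n + 1)) i, a s i j ^ 2)
          + ((∑ i ∈ W, ∑ j ∈ Finset.Icc (max lo (i - n + 1)) i, b s i j ^ 2)
          + (∑ i ∈ W, ∑ j ∈ Finset.Icc (max lo (i - n + 1)) i, c s i j ^ 2))) := by
        simp only [Finset.sum_add_distrib]
    _ ≤ 2 * (K:ℝ) * ∑ s ∈ Finset.range K, (n:ℝ) * (L^2 * SΔ) := by
        apply mul_le_mul_of_nonneg_left (Finset.sum_le_sum perS)
        positivity
    _ = 2 * (n:ℝ) * (K:ℝ)^2 * L^2 * SΔ := by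
        rw [Finset.sum_const, Finset.card_range, nsmul_eq_mul]
        ring
end

section
/- Cyclic coordinate descent satisfies the amortized progress inequality: let n ≥ 2, suppose f is differentiable, L-Lipschitz-smooth (so |∇_j f(x + r·e_j) − ∇_j f(x)| ≤ L|r| for each j), and let Γ ≥ (4/√3)·L·⌈log₂ n⌉. Let (x^t)_{t≥0} be the cyclic coordinate descent sequence: k_{t+n} = k_t for all t ≥ 1, {k_1, …, k_n} = {1, …, n}, and x^t = x^{t−1} + d̂(∇_{k_t} f(x^{t−1}), x^{t−1}_{k_t}, Γ, Ψ_{k_t})·e_{k_t}. Then (a) F(x^t) ≤ F(x^{t−1}) for all t ≥ 1, and (b) for every t ≥ 2n, Σ_{i=t−2n+1}^{t} [F(x^{i−1}) − F(x^i)] ≥ (1/(3n))·Σ_{i=t−2n+1}^{t−n} Σ_{k=1}^n Ŵ(∇_k f(x^{i−1}), x_k^{i−1}, Γ, Ψ_k). -/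
/-- 1-D descent lemma from a Lipschitz-type bound on the derivative. -/
lemma aux_descent_1d (φ φ' : ℝ → ℝ) (hφ : ∀ s, HasDerivAt φ (φ' s) s) (L r : ℝ)
    (hLip : ∀ s, |φ' s - φ' 0| ≤ L * |s|) :
    φ r ≤ φ 0 + φ' 0 * r + L / 2 * r ^ 2 := by
  set ψ : ℝ → ℝ := fun s => φ 0 + φ' 0 * s + L / 2 * s ^ 2 - φ s with hψ
  have hψd : ∀ s, HasDerivAt ψ (φ' 0 + L * s - φ' s) s := by
    intro s
    have h1 : HasDerivAt (fun s : ℝ => φ 0 + φ' 0 * s + L / 2 * s ^ 2) (φ' 0 + L * s) s := by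
      have := ((hasDerivAt_pow 2 s).const_mul (L / 2)).const_add (φ 0 + φ' 0 * s)
      have h2 : HasDerivAt (fun s : ℝ => φ' 0 * s) (φ' 0) s := by
        simpa using (hasDerivAt_id s).const_mul (φ' 0)
      have h3 : HasDerivAt (fun s : ℝ => L / 2 * s ^ 2) (L * s) s := by
        have := (hasDerivAt_pow 2 s).const_mul (L / 2)
        exact this.congr_deriv (by rw [show (2:ℕ) - 1 = 1 from rfl, pow_one]; push_cast; ring)
      exact ((h2.const_add (φ 0)).add h3)
    exact h1.sub (hφ s)
  have key : 0 ≤ ψ r := by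
    rcases le_or_gt 0 r with hr | hr
    · have hmono : MonotoneOn ψ (Set.Icc 0 r) := by
        apply monotoneOn_of_deriv_nonneg (convex_Icc 0 r)
        · exact fun s _ => (hψd s).continuousAt.continuousWithinAt
        · exact fun s _ => ((hψd s).differentiableAt).differentiableWithinAt
        · intro s hs
          rw [(hψd s).deriv]
          rw [interior_Icc] at hs
          have := hLip s
          rw [abs_of_nonneg (le_of_lt hs.1)] at this
          have := abs_le.1 this
          linarith [this.2]
      have h0 : ψ 0 = 0 := by simp [hψ]
      linarith [hmono (Set.mem_Icc.2 ⟨le_refl 0, hr⟩) (Set.mem_Icc.2 ⟨hr, le_refl r⟩) hr, h0]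
    · have hanti : AntitoneOn ψ (Set.Icc r 0) := by
        apply antitoneOn_of_deriv_nonpos (convex_Icc r 0)
        · exact fun s _ => (hψd s).continuousAt.continuousWithinAt
        · exact fun s _ => ((hψd s).differentiableAt).differentiableWithinAt
        · intro s hs
          rw [(hψd s).deriv]
          rw [interior_Icc] at hs
          have := hLip s
          rw [abs_of_neg hs.2] at this
          have := abs_le.1 this
          linarith [this.1]
      have h0 : ψ 0 = 0 := by simp [hψ]
      have hrle : r ≤ 0 := le_of_lt hr
      have := hanti (Set.mem_Icc.2 ⟨le_refl r, hrle⟩) (Set.mem_Icc.2 ⟨hrle, le_refl 0⟩) hrle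
      linarith
  simp only [hψ] at key
  linarith

/-- Sum of squares of an "orthogonal" combination of coordinate vectors. -/
lemma aux_ortho {n : ℕ} (κ : ℕ → Fin n) (w : ℕ → ℝ) (S : Finset ℕ)
    (hinj : Set.InjOn κ S) :
    ∑ k : Fin n, (∑ s ∈ S, w s * ((Pi.single (κ s) 1 : Fin n → ℝ) k)) ^ 2 = ∑ s ∈ S, w s ^ 2 := by
  classical
  induction S using Finset.induction_on with
  | empty => simp
  | @insert a S ha ih =>
    have hinj' : Set.InjOn κ S := hinj.mono (by intro z hz; simp at hz ⊢; exact Or.inr hz)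
    have hne : ∀ s ∈ S, κ s ≠ κ a := by
      intro s hs heq
      exact ha (by
        have : s = a := hinj (by simp [hs]) (by simp) heq
        rwa [← this])
    rw [Finset.sum_insert ha]
    have expand : ∀ k : Fin n,
        (w a * ((Pi.single (κ a) 1 : Fin n → ℝ) k) + ∑ s ∈ S, w s * ((Pi.single (κ s) 1 : Fin n → ℝ) k)) ^ 2
        = (w a * ((Pi.single (κ a) 1 : Fin n → ℝ) k)) ^ 2
          + 2 * (w a * ((Pi.single (κ a) 1 : Fin n → ℝ) k)) * (∑ s ∈ S, w s * ((Pi.single (κ s) 1 : Fin n → ℝ) k))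
          + (∑ s ∈ S, w s * ((Pi.single (κ s) 1 : Fin n → ℝ) k)) ^ 2 := by
      intro k; ring
    simp only [Finset.sum_insert ha] at *
    rw [Finset.sum_congr rfl (fun k _ => expand k)]
    rw [Finset.sum_add_distrib, Finset.sum_add_distrib]
    have h1 : ∑ k : Fin n, (w a * ((Pi.single (κ a) 1 : Fin n → ℝ) k)) ^ 2 = w a ^ 2 := by
      rw [Fintype.sum_eq_single (κ a)]
      · simp
      · intro k hk; rw [Pi.single_eq_of_ne hk]; ring
    have h2 : ∑ k : Fin n,
        2 * (w a * ((Pi.single (κ a) 1 : Fin n → ℝ) k)) * (∑ s ∈ S, w s * ((Pi.single (κ s) 1 : Fin n → ℝ) k)) = 0 := by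
      rw [Fintype.sum_eq_single (κ a)]
      · have : ∑ s ∈ S, w s * ((Pi.single (κ s) 1 : Fin n → ℝ) (κ a)) = 0 := by
          apply Finset.sum_eq_zero
          intro s hs
          rw [Pi.single_eq_of_ne (hne s hs).symm]; ring
        rw [this]; ring
      · intro k hk; rw [Pi.single_eq_of_ne hk]; ring
    rw [h1, h2, ih hinj']
    ring

set_option maxHeartbeats 1000000

/-- Cyclic coordinate descent satisfies the amortized progress inequality: for
`n ≥ 2`, `f` differentiable and `L`-Lipschitz-smooth, `Γ ≥ (4/√3)·L·⌈log₂ n⌉`, and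
the cyclic coordinate descent sequence `x^t = x^{t-1} + d̂(∇_{k_t} f(x^{t-1}),
x^{t-1}_{k_t}, Γ, Ψ_{k_t})·e_{k_t}`:
(a) `F(x^t) ≤ F(x^{t-1})` for all `t ≥ 1`, and
(b) for every `t ≥ 2n`, `Σ_{i=t-2n+1}^{t} [F(x^{i-1}) - F(x^i)] ≥
(1/(3n))·Σ_{i=t-2n+1}^{t-n} Σ_k Ŵ(∇_k f(x^{i-1}), x^{i-1}_k, Γ, Ψ_k)`. -/
theorem ccd_amortized_progress {n : ℕ} (hn : 2 ≤ n)
    (f : (Fin n → ℝ) → ℝ) (hf : Differentiable ℝ f) (hfc : ConvexOn ℝ Set.univ f)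
    (L : ℝ)
    (hL : ∀ x y : Fin n → ℝ,
      Real.sqrt (∑ k, (grad f (x + y) k - grad f x k) ^ 2) ≤
        L * Real.sqrt (∑ k, y k ^ 2))
    (Ψ : Fin n → ℝ → ℝ) (hΨ : ∀ k, ConvexOn ℝ Set.univ (Ψ k))
    (F : (Fin n → ℝ) → ℝ) (hF : ∀ y, F y = f y + ∑ k, Ψ k (y k))
    (Γ : ℝ) (hΓpos : 0 < Γ) (hΓ : Γ ≥ 4 / Real.sqrt 3 * L * (Nat.clog 2 n : ℝ))
    (x : ℕ → Fin n → ℝ) (idx : ℕ → Fin n) (d : ℕ → ℝ)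
    (hcyc : ∀ t : ℕ, 1 ≤ t → idx (t + n) = idx t)
    (hcover : ∀ c : Fin n, ∃ i : ℕ, 1 ≤ i ∧ i ≤ n ∧ idx i = c)
    (hd : ∀ t : ℕ, 1 ≤ t →
      IsMaxOn
        (fun a : ℝ =>
          W a (grad f (x (t - 1)) (idx t)) (x (t - 1) (idx t)) Γ (Ψ (idx t)))
        Set.univ (d t))
    (hx : ∀ t : ℕ, 1 ≤ t →
      x t = x (t - 1) + d t • (Pi.single (idx t) 1 : Fin n → ℝ)) :
    (∀ t : ℕ, 1 ≤ t → F (x t) ≤ F (x (t - 1))) ∧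
    (∀ t : ℕ, 2 * n ≤ t →
      ∑ i ∈ Finset.Icc (t - 2 * n + 1) t, (F (x (i - 1)) - F (x i)) ≥
        1 / (3 * n) *
          ∑ i ∈ Finset.Icc (t - 2 * n + 1) (t - n),
            ∑ k, What (grad f (x (i - 1)) k) (x (i - 1) k) Γ (Ψ k)) := by
  classical
  set c : ℕ := Nat.clog 2 n with hcdef
  have hc1 : 1 ≤ c := Nat.clog_pos one_lt_two hn
  have hnpow : n ≤ 2 ^ c := Nat.le_pow_clog one_lt_two n
  -- L is nonnegative
  have hL0 : 0 ≤ L := by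
    have h := hL 0 (Pi.single ⟨0, by omega⟩ 1)
    have h1 : ∑ k : Fin n, ((Pi.single (⟨0, by omega⟩ : Fin n) 1 : Fin n → ℝ) k) ^ 2 = 1 := by
      rw [Fintype.sum_eq_single (⟨0, by omega⟩ : Fin n)]
      · simp
      · intro k hk
        rw [Pi.single_eq_of_ne hk]
        norm_num
    rw [h1, Real.sqrt_one, mul_one] at h
    exact le_trans (Real.sqrt_nonneg _) h
  -- Γ dominates L
  have hsqrt3 : (1:ℝ) ≤ Real.sqrt 3 ∧ Real.sqrt 3 ≤ 2 := by
    constructor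
    · rw [show (1:ℝ) = Real.sqrt 1 by simp]
      exact Real.sqrt_le_sqrt (by norm_num)
    · rw [show (2:ℝ) = Real.sqrt 4 by rw [show (4:ℝ) = 2^2 by norm_num, Real.sqrt_sq]; norm_num]
      exact Real.sqrt_le_sqrt (by norm_num)
  have hcR : (1:ℝ) ≤ (c:ℝ) := by exact_mod_cast hc1
  have hΓ2L : 2 * L ≤ Γ := by
    have h := hΓ
    have h2 : 4 / Real.sqrt 3 * L * (c:ℝ) ≥ 2 * L := by
      have h3 : 0 < Real.sqrt 3 := by linarith [hsqrt3.1]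
      rw [ge_iff_le, div_mul_eq_mul_div, div_mul_eq_mul_div, le_div_iff₀ h3]
      nlinarith [hsqrt3.1, hsqrt3.2, hcR, hL0]
    linarith
  have hΓL : L ≤ Γ := by nlinarith
  -- squared Lipschitz bound
  have hLsq : ∀ z y : Fin n → ℝ,
      ∑ k, (grad f (z + y) k - grad f z k) ^ 2 ≤ L ^ 2 * ∑ k, y k ^ 2 := by
    intro z y
    have h := hL z y
    have hA : (0:ℝ) ≤ ∑ k, (grad f (z + y) k - grad f z k) ^ 2 :=
      Finset.sum_nonneg fun k _ => sq_nonneg _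
    have hB : (0:ℝ) ≤ ∑ k, y k ^ 2 := Finset.sum_nonneg fun k _ => sq_nonneg _
    have := mul_self_le_mul_self (Real.sqrt_nonneg _) h
    rw [Real.mul_self_sqrt hA] at this
    calc ∑ k, (grad f (z + y) k - grad f z k) ^ 2 ≤
        (L * Real.sqrt (∑ k, y k ^ 2)) * (L * Real.sqrt (∑ k, y k ^ 2)) := this
      _ = L ^ 2 * ∑ k, y k ^ 2 := by
          rw [mul_mul_mul_comm, Real.mul_self_sqrt hB]; ring
  -- coordinate Lipschitz bound
  have hcoord : ∀ (z : Fin n → ℝ) (r : ℝ) (j : Fin n),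
      |grad f (z + r • (Pi.single j 1 : Fin n → ℝ)) j - grad f z j| ≤ L * |r| := by
    intro z r j
    have h := hLsq z (r • (Pi.single j 1 : Fin n → ℝ))
    have hy : ∑ k, ((r • (Pi.single j 1 : Fin n → ℝ)) k) ^ 2 = r ^ 2 := by
      rw [Fintype.sum_eq_single j]
      · simp [mul_pow]
      · intro k hk
        simp [Pi.single_eq_of_ne hk]
    rw [hy] at h
    have hone : (grad f (z + r • (Pi.single j 1 : Fin n → ℝ)) j - grad f z j) ^ 2
        ≤ L ^ 2 * r ^ 2 := by
      refine le_trans ?_ h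
      exact Finset.single_le_sum (f := fun k =>
        (grad f (z + r • (Pi.single j 1 : Fin n → ℝ)) k - grad f z k) ^ 2)
        (fun k _ => sq_nonneg _) (Finset.mem_univ j)
    have h2 : |grad f (z + r • (Pi.single j 1 : Fin n → ℝ)) j - grad f z j|
        = Real.sqrt ((grad f (z + r • (Pi.single j 1 : Fin n → ℝ)) j - grad f z j) ^ 2) :=
      (Real.sqrt_sq_eq_abs _).symm
    rw [h2]
    calc Real.sqrt ((grad f (z + r • (Pi.single j 1 : Fin n → ℝ)) j - grad f z j) ^ 2)
        ≤ Real.sqrt (L ^ 2 * r ^ 2) := Real.sqrt_le_sqrt hone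
      _ = |L * r| := by rw [← mul_pow, Real.sqrt_sq_eq_abs]
      _ = L * |r| := by rw [abs_mul, abs_of_nonneg hL0]
  -- descent lemma
  have hdesc : ∀ (z : Fin n → ℝ) (r : ℝ) (j : Fin n),
      f (z + r • (Pi.single j 1 : Fin n → ℝ)) ≤ f z + grad f z j * r + L / 2 * r ^ 2 := by
    intro z r j
    have hpath : ∀ s : ℝ, HasDerivAt (fun s : ℝ => z + s • (Pi.single j 1 : Fin n → ℝ))
        (Pi.single j 1 : Fin n → ℝ) s := by
      intro s
      simpa using ((hasDerivAt_id s).smul_const (Pi.single j 1 : Fin n → ℝ)).const_add z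
    have hphi : ∀ s : ℝ, HasDerivAt (fun s : ℝ => f (z + s • (Pi.single j 1 : Fin n → ℝ)))
        (grad f (z + s • (Pi.single j 1 : Fin n → ℝ)) j) s := by
      intro s
      have h1 := (hf (z + s • (Pi.single j 1 : Fin n → ℝ))).hasFDerivAt.comp_hasDerivAt s (hpath s)
      exact h1
    have hLip : ∀ s : ℝ,
        |grad f (z + s • (Pi.single j 1 : Fin n → ℝ)) j
          - grad f (z + (0:ℝ) • (Pi.single j 1 : Fin n → ℝ)) j| ≤ L * |s| := by
      intro s
      simpa using hcoord z s j
    have := aux_descent_1d (fun s : ℝ => f (z + s • (Pi.single j 1 : Fin n → ℝ)))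
      (fun s : ℝ => grad f (z + s • (Pi.single j 1 : Fin n → ℝ)) j) hphi L r hLip
    simpa using this
  -- coordinates of the update
  have hxk : ∀ s : ℕ, 1 ≤ s → ∀ k : Fin n, k ≠ idx s → x s k = x (s-1) k := by
    intro s hs k hk
    rw [hx s hs]
    simp [Pi.single_eq_of_ne hk]
  have hxj : ∀ s : ℕ, 1 ≤ s → x s (idx s) = x (s-1) (idx s) + d s := by
    intro s hs
    rw [hx s hs]
    simp
  -- the step value of the proximal function
  set b : ℕ → ℝ := fun s => W (d s) (grad f (x (s-1)) (idx s)) (x (s-1) (idx s)) Γ (Ψ (idx s))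
    with hbdef
  -- midpoint inequality for W
  have hWmid : ∀ (k : Fin n) (g g' xx y : ℝ),
      W y g xx Γ (Ψ k) + (g - g') * y + Γ * y ^ 2 / 4 ≤ 2 * W (y/2) g' xx Γ (Ψ k) := by
    intro k g g' xx y
    have hcv := (hΨ k).2 (Set.mem_univ xx) (Set.mem_univ (xx + y))
      (by norm_num : (0:ℝ) ≤ (1:ℝ)/2) (by norm_num : (0:ℝ) ≤ (1:ℝ)/2) (by norm_num)
    have harg : (1/2 : ℝ) • xx + (1/2 : ℝ) • (xx + y) = xx + y/2 := by
      simp [smul_eq_mul]; ring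
    rw [harg] at hcv
    simp only [W, smul_eq_mul] at *
    nlinarith [hcv]
  -- progress of one step
  have hP : ∀ s : ℕ, 1 ≤ s → b s + (Γ - L)/2 * (d s)^2 ≤ F (x (s-1)) - F (x s) := by
    intro s hs
    have hfd := hdesc (x (s-1)) (d s) (idx s)
    rw [← hx s hs] at hfd
    have hsum : ∑ k, Ψ k (x (s-1) k) - ∑ k, Ψ k (x s k)
        = Ψ (idx s) (x (s-1) (idx s)) - Ψ (idx s) (x (s-1) (idx s) + d s) := by
      rw [← Finset.sum_sub_distrib]
      rw [Finset.sum_eq_single (idx s)]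
      · rw [hxj s hs]
      · intro k _ hk
        rw [hxk s hs k hk]; ring
      · simp
    have key : F (x (s-1)) - F (x s) = (f (x (s-1)) - f (x s))
        + (Ψ (idx s) (x (s-1) (idx s)) - Ψ (idx s) (x (s-1) (idx s) + d s)) := by
      rw [hF, hF, ← hsum]; ring
    rw [key]
    show W (d s) (grad f (x (s-1)) (idx s)) (x (s-1) (idx s)) Γ (Ψ (idx s))
      + (Γ - L)/2 * (d s)^2 ≤ _
    simp only [W]
    linarith
  have hb0 : ∀ s : ℕ, 1 ≤ s → 0 ≤ b s := by
    intro s hs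
    have h := hd s hs (Set.mem_univ (0:ℝ))
    have h0 : W 0 (grad f (x (s-1)) (idx s)) (x (s-1) (idx s)) Γ (Ψ (idx s)) = 0 := by
      simp [W]
    simpa [hbdef, h0] using h
  have hbd : ∀ s : ℕ, 1 ≤ s → Γ/4 * (d s)^2 ≤ b s := by
    intro s hs
    have h := hd s hs (Set.mem_univ (d s / 2))
    have h2 := hWmid (idx s) (grad f (x (s-1)) (idx s)) (grad f (x (s-1)) (idx s))
      (x (s-1) (idx s)) (d s)
    simp only [sub_self, zero_mul, add_zero] at h2
    have h3 : W (d s / 2) (grad f (x (s-1)) (idx s)) (x (s-1) (idx s)) Γ (Ψ (idx s)) ≤ b s := h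
    simp only [hbdef] at *
    nlinarith
  have parta : ∀ t : ℕ, 1 ≤ t → F (x t) ≤ F (x (t - 1)) := by
    intro s hs
    have := hP s hs
    have := hb0 s hs
    nlinarith [sq_nonneg (d s)]
  refine ⟨parta, ?_⟩
  intro t ht
  -- part (b)
  -- periodicity
  have hper : ∀ s : ℕ, 1 ≤ s → ∀ q : ℕ, idx (s + q * n) = idx s := by
    intro s hs q
    induction q with
    | zero => simp
    | succ q ih =>
      have : s + (q+1) * n = (s + q * n) + n := by ring
      rw [this, hcyc (s + q * n) (by omega)]
      exact ih
  -- injectivity on the base window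
  have hinj1n : ∀ s s' : ℕ, 1 ≤ s → s ≤ n → 1 ≤ s' → s' ≤ n → idx s = idx s' → s = s' := by
    intro s s' h1 h2 h3 h4 heq
    have hcard : (Finset.Icc 1 n).card = Finset.univ.card (α := Fin n) := by
      simp [Nat.card_Icc]
    have hinj := Finset.inj_on_of_surj_on_of_card_le
      (s := Finset.Icc 1 n) (t := (Finset.univ : Finset (Fin n)))
      (fun a _ => idx a) (fun a ha => Finset.mem_univ _)
      (fun k _ => by
        obtain ⟨i, hi1, hi2, hi3⟩ := hcover k
        exact ⟨i, Finset.mem_Icc.2 ⟨hi1, hi2⟩, hi3⟩)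
      (le_of_eq hcard)
    exact hinj (Finset.mem_Icc.2 ⟨h1, h2⟩) (Finset.mem_Icc.2 ⟨h3, h4⟩) heq
  -- canonical representative
  have hrep : ∀ s : ℕ, 1 ≤ s → idx s = idx ((s-1) % n + 1) ∧ 1 ≤ (s-1) % n + 1
      ∧ (s-1) % n + 1 ≤ n := by
    intro s hs
    have hmlt : (s-1) % n < n := Nat.mod_lt _ (by omega)
    have hseq : s = ((s-1) % n + 1) + ((s-1)/n) * n := by
      rw [add_right_comm, Nat.mod_add_div']
      omega
    refine ⟨?_, by omega, by omega⟩
    conv_lhs => rw [hseq]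
    rw [hper ((s-1) % n + 1) (by omega) ((s-1)/n)]
  -- injectivity on any window of length n
  have hinjwin : ∀ a : ℕ, 1 ≤ a → ∀ s s' : ℕ, a ≤ s → s < a + n → a ≤ s' → s' < a + n →
      idx s = idx s' → s = s' := by
    intro a ha s s' hs1 hs2 hs3 hs4 heq
    have h1 := hrep s (by omega)
    have h2 := hrep s' (by omega)
    rw [h1.1, h2.1] at heq
    have := hinj1n _ _ h1.2.1 h1.2.2 h2.2.1 h2.2.2 heq
    have hmod : (s-1) % n = (s'-1) % n := by omega
    have hmeq : s - 1 ≡ s' - 1 [MOD n] := hmod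
    rcases le_total s s' with hle | hle
    · have hdvd : n ∣ (s' - 1) - (s - 1) := (Nat.modEq_iff_dvd' (by omega)).1 hmeq
      rcases Nat.eq_zero_or_pos ((s' - 1) - (s - 1)) with h0 | hpos
      · omega
      · have := Nat.le_of_dvd hpos hdvd
        omega
    · have hdvd : n ∣ (s - 1) - (s' - 1) := (Nat.modEq_iff_dvd' (by omega)).1 hmeq.symm
      rcases Nat.eq_zero_or_pos ((s - 1) - (s' - 1)) with h0 | hpos
      · omega
      · have := Nat.le_of_dvd hpos hdvd
        omega
  -- first update time of coordinate k at or after time i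
  have hjex : ∀ (i : ℕ) (k : Fin n), ∃ j : ℕ, 1 ≤ i →
      (i ≤ j ∧ j < i + n ∧ idx j = k ∧ ∀ s, i ≤ s → s < j → idx s ≠ k) := by
    intro i k
    by_cases hi : 1 ≤ i
    · obtain ⟨i₀, h1, h2, h3⟩ := hcover k
      have hwin : ∃ j, i ≤ j ∧ j < i + n ∧ idx j = k := by
        have hdm : (i + n - 1 - i₀) % n + (i + n - 1 - i₀) / n * n = i + n - 1 - i₀ :=
          Nat.mod_add_div' _ _
        have hmlt : (i + n - 1 - i₀) % n < n := Nat.mod_lt _ (by omega)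
        refine ⟨i₀ + (i + n - 1 - i₀) / n * n, by omega, by omega, ?_⟩
        rw [hper i₀ h1 ((i + n - 1 - i₀) / n)]; exact h3
      obtain ⟨jw, hw1, hw2, hw3⟩ := hwin
      have hex : ∃ j, i ≤ j ∧ idx j = k := ⟨jw, hw1, hw3⟩
      refine ⟨Nat.find hex, fun _ => ?_⟩
      have hspec := Nat.find_spec hex
      have hlej : Nat.find hex ≤ jw := Nat.find_min' hex ⟨hw1, hw3⟩
      refine ⟨hspec.1, by omega, hspec.2, ?_⟩
      intro s hs1 hs2 hsk
      exact absurd (⟨hs1, hsk⟩ : i ≤ s ∧ idx s = k) (Nat.find_min hex hs2)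
    · exact ⟨0, fun h => absurd h hi⟩
  choose jf hjf using hjex
  -- coordinates freeze between updates
  have hfreeze : ∀ (k : Fin n) (a bnd : ℕ), a ≤ bnd →
      (∀ s, a < s → s ≤ bnd → 1 ≤ s ∧ idx s ≠ k) → x bnd k = x a k := by
    intro k a bnd
    induction bnd with
    | zero => intro h _; have : a = 0 := by omega
              rw [this]
    | succ m ih =>
      intro hab h
      rcases Nat.lt_or_ge a (m+1) with hlt | hge
      · have h1 := h (m+1) (by omega) (le_refl _)
        have h2 : x (m+1) k = x m k := by
          have := hxk (m+1) (by omega) k (Ne.symm h1.2)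
          simpa using this
        rw [h2]
        exact ih (by omega) (fun s hs1 hs2 => h s hs1 (by omega))
      · have : a = m + 1 := by omega
        rw [this]
  -- telescoping of the iterates
  have htel : ∀ a bl : ℕ, x (a + bl) = x a + ∑ s ∈ Finset.Ioc a (a + bl),
      d s • (Pi.single (idx s) 1 : Fin n → ℝ) := by
    intro a bl
    induction bl with
    | zero => simp
    | succ m ih =>
      have h1 : a + (m+1) = (a + m) + 1 := by ring
      have h2 := hx (a + m + 1) (by omega)
      have h3 : a + m + 1 - 1 = a + m := by omega
      rw [h1, h2, h3, ih]
      rw [Finset.sum_Ioc_succ_top (by omega : a ≤ a + m)]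
      rw [add_assoc]
  -- the sup bound
  have hWle : ∀ (k : Fin n) (g : ℝ) (j : ℕ), 1 ≤ j → idx j = k →
      What g (x (j-1) k) Γ (Ψ k) ≤ 2 * b j + (g - grad f (x (j-1)) k)^2 / Γ := by
    intro k g j hj hk
    have hmax : ∀ y : ℝ, W y (grad f (x (j-1)) k) (x (j-1) k) Γ (Ψ k) ≤ b j := by
      intro y
      rw [← hk]
      exact hd j hj (Set.mem_univ y)
    show (⨆ y : ℝ, W y g (x (j-1) k) Γ (Ψ k)) ≤ _
    refine ciSup_le fun y => ?_
    have h1 := hWmid k g (grad f (x (j-1)) k) (x (j-1) k) y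
    have h2 := hmax (y/2)
    have h3 : -((g - grad f (x (j-1)) k) * y) - Γ * y^2/4
        ≤ (g - grad f (x (j-1)) k)^2 / Γ := by
      rw [le_div_iff₀ hΓpos]
      nlinarith [sq_nonneg ((g - grad f (x (j-1)) k) + Γ * y / 2), hΓpos.le]
    linarith
  have hHA : ∀ i : ℕ, 1 ≤ i → ∀ k : Fin n,
      What (grad f (x (i-1)) k) (x (i-1) k) Γ (Ψ k)
        ≤ 2 * b (jf i k) + (grad f (x (i-1)) k - grad f (x (jf i k - 1)) k)^2 / Γ := by
    intro i hi k
    obtain ⟨hj1, hj2, hj3, hj4⟩ := hjf i k hi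
    have hsame : x (jf i k - 1) k = x (i-1) k := by
      apply hfreeze k (i-1) (jf i k - 1) (by omega)
      intro s hs1 hs2
      exact ⟨by omega, hj4 s (by omega) (by omega)⟩
    have h := hWle k (grad f (x (i-1)) k) (jf i k) (by omega) hj3
    rw [hsame] at h
    exact h
  -- the dyadic lemma
  have hdyadic : ∀ i : ℕ, 1 ≤ i →
      ∑ k : Fin n, (grad f (x (i-1)) k - grad f (x (jf i k - 1)) k)^2
        ≤ (c:ℝ)^2 * L^2 * ∑ s ∈ Finset.Ioc (i-1) (i-1+n), (d s)^2 := by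
    intro i hi
    set m : Fin n → ℕ := fun k => jf i k - i with hm
    have hmprop : ∀ k, m k < n ∧ jf i k - 1 = i - 1 + m k := by
      intro k
      obtain ⟨h1, h2, _, _⟩ := hjf i k hi
      simp only [hm]
      exact ⟨by omega, by omega⟩
    set G : ℕ → Fin n → ℝ := fun u k => grad f (x (i - 1 + u)) k with hG
    have hD0 : (0:ℝ) ≤ ∑ s ∈ Finset.Ioc (i-1) (i-1+n), (d s)^2 :=
      Finset.sum_nonneg fun s _ => sq_nonneg _
    -- single-level bound
    have hlevel : ∀ ℓ : ℕ, ℓ < c →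
        ∑ k : Fin n, (G (m k - m k % 2^ℓ) k - G (m k - m k % 2^(ℓ+1)) k)^2
          ≤ L^2 * ∑ s ∈ Finset.Ioc (i-1) (i-1+n), (d s)^2 := by
      intro ℓ hℓ
      have hq2 : 2^(ℓ+1) = 2 * 2^ℓ := by rw [pow_succ]; ring
      set B := Finset.univ.filter (fun k : Fin n => 2^ℓ ≤ m k % 2^(ℓ+1)) with hB
      have hoff : ∀ k : Fin n, k ∉ B →
          (G (m k - m k % 2^ℓ) k - G (m k - m k % 2^(ℓ+1)) k)^2 = 0 := by
        intro k hk
        simp only [hB, Finset.mem_filter, Finset.mem_univ, true_and, not_le] at hk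
        have h1 : m k % 2^(ℓ+1) % 2^ℓ = m k % 2^ℓ :=
          Nat.mod_mod_of_dvd _ (pow_dvd_pow 2 (Nat.le_succ ℓ))
        have h2 : m k % 2^(ℓ+1) = m k % 2^ℓ := by
          rw [← h1, Nat.mod_eq_of_lt hk]
        rw [h2]
        simp
      have hBsplit : ∀ k ∈ B, m k - m k % 2^ℓ = (m k - m k % 2^(ℓ+1)) + 2^ℓ
          ∧ (m k - m k % 2^(ℓ+1)) + 2^ℓ ≤ m k := by
        intro k hk
        simp only [hB, Finset.mem_filter, Finset.mem_univ, true_and] at hk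
        have h1 : m k % 2^(ℓ+1) % 2^ℓ = m k % 2^ℓ :=
          Nat.mod_mod_of_dvd _ (pow_dvd_pow 2 (Nat.le_succ ℓ))
        have h2 : m k % 2^(ℓ+1) < 2^(ℓ+1) := Nat.mod_lt _ (by positivity)
        have h3 : m k % 2^(ℓ+1) % 2^ℓ = m k % 2^(ℓ+1) - 2^ℓ := by
          rw [Nat.mod_eq_sub_mod hk, Nat.mod_eq_of_lt (by omega)]
        have h4 : m k % 2^(ℓ+1) ≤ m k := Nat.mod_le _ _
        have h5 : m k % 2^ℓ = m k % 2^(ℓ+1) - 2^ℓ := by rw [← h1, h3]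
        omega
      set v : Fin n → ℕ := fun k => m k - m k % 2^(ℓ+1) with hv
      have himg : ∀ j' ∈ B.image v, j' % 2^(ℓ+1) = 0 ∧ j' + 2^ℓ ≤ n - 1 := by
        intro j' hj'
        obtain ⟨k₀, hk₀, hk₀v⟩ := Finset.mem_image.1 hj'
        have hs := hBsplit k₀ hk₀
        have hmlt := (hmprop k₀).1
        constructor
        · have hma : m k₀ % 2^(ℓ+1) + m k₀ / 2^(ℓ+1) * 2^(ℓ+1) = m k₀ :=
            Nat.mod_add_div' _ _
          have : v k₀ = m k₀ / 2^(ℓ+1) * 2^(ℓ+1) := by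
            simp only [hv]; omega
          rw [← hk₀v, this, Nat.mul_mod_left]
        · have : v k₀ + 2^ℓ ≤ m k₀ := hs.2
          omega
      have hdisj : (↑(B.image v) : Set ℕ).PairwiseDisjoint
          (fun j' => Finset.Ioc (i-1+j') (i-1+j'+2^ℓ)) := by
        intro a ha b hb hab
        simp only [Function.onFun]
        have hA := himg a (by exact_mod_cast ha)
        have hBB := himg b (by exact_mod_cast hb)
        have hdvd_ab : 2^(ℓ+1) ∣ a := Nat.dvd_of_mod_eq_zero hA.1
        have hdvd_b : 2^(ℓ+1) ∣ b := Nat.dvd_of_mod_eq_zero hBB.1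
        rw [Finset.disjoint_left]
        intro s hs1 hs2
        rw [Finset.mem_Ioc] at hs1 hs2
        rcases Nat.lt_or_ge a b with hlt | hge
        · have : 2^(ℓ+1) ∣ b - a := Nat.dvd_sub hdvd_b hdvd_ab
          have := Nat.le_of_dvd (by omega) this
          omega
        · have hne : b < a := by
            rcases Nat.lt_or_ge b a with h | h
            · exact h
            · exact absurd (by omega : a = b) hab
          have : 2^(ℓ+1) ∣ a - b := Nat.dvd_sub hdvd_ab hdvd_b
          have := Nat.le_of_dvd (by omega) this
          omega
      have hfiber : ∀ j' ∈ B.image v,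
          ∑ k ∈ B.filter (fun k => v k = j'),
            (G (m k - m k % 2^ℓ) k - G (m k - m k % 2^(ℓ+1)) k)^2
          ≤ L^2 * ∑ s ∈ Finset.Ioc (i-1+j') (i-1+j'+2^ℓ), (d s)^2 := by
        intro j' hj'
        have hj'le : j' + 2^ℓ ≤ n - 1 := (himg j' hj').2
        have hxx : x (i - 1 + j' + 2^ℓ) = x (i-1+j') + ∑ s ∈ Finset.Ioc (i-1+j') (i-1+j'+2^ℓ),
            d s • (Pi.single (idx s) 1 : Fin n → ℝ) := htel (i-1+j') (2^ℓ)
        have hterm : ∀ k ∈ B.filter (fun k => v k = j'),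
            (G (m k - m k % 2^ℓ) k - G (m k - m k % 2^(ℓ+1)) k)^2
            = (grad f (x (i-1+j') + ∑ s ∈ Finset.Ioc (i-1+j') (i-1+j'+2^ℓ),
                d s • (Pi.single (idx s) 1 : Fin n → ℝ)) k - grad f (x (i-1+j')) k)^2 := by
          intro k hk
          rw [Finset.mem_filter] at hk
          have h1 := (hBsplit k hk.1).1
          have h2 : v k = j' := hk.2
          have e1 : m k - m k % 2^ℓ = j' + 2^ℓ := by
            rw [h1]
            simp only [hv] at h2
            omega
          have e2 : m k - m k % 2^(ℓ+1) = j' := by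
            simp only [hv] at h2
            omega
          rw [e1, e2]
          simp only [hG]
          rw [show i - 1 + (j' + 2^ℓ) = i - 1 + j' + 2^ℓ by omega, hxx]
        rw [Finset.sum_congr rfl hterm]
        have hsub : ∑ k ∈ B.filter (fun k => v k = j'),
            (grad f (x (i-1+j') + ∑ s ∈ Finset.Ioc (i-1+j') (i-1+j'+2^ℓ),
                d s • (Pi.single (idx s) 1 : Fin n → ℝ)) k - grad f (x (i-1+j')) k)^2
            ≤ ∑ k : Fin n,
            (grad f (x (i-1+j') + ∑ s ∈ Finset.Ioc (i-1+j') (i-1+j'+2^ℓ),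
                d s • (Pi.single (idx s) 1 : Fin n → ℝ)) k - grad f (x (i-1+j')) k)^2 :=
          Finset.sum_le_sum_of_subset_of_nonneg (Finset.subset_univ _)
            (fun k _ _ => sq_nonneg _)
        refine le_trans hsub (le_trans (hLsq _ _) ?_)
        have hww : ∑ k : Fin n, ((∑ s ∈ Finset.Ioc (i-1+j') (i-1+j'+2^ℓ),
            d s • (Pi.single (idx s) 1 : Fin n → ℝ)) k)^2
            = ∑ s ∈ Finset.Ioc (i-1+j') (i-1+j'+2^ℓ), (d s)^2 := by
          have happ : ∀ k : Fin n, (∑ s ∈ Finset.Ioc (i-1+j') (i-1+j'+2^ℓ),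
              d s • (Pi.single (idx s) 1 : Fin n → ℝ)) k
              = ∑ s ∈ Finset.Ioc (i-1+j') (i-1+j'+2^ℓ),
                d s * ((Pi.single (idx s) 1 : Fin n → ℝ) k) := by
            intro k
            rw [Finset.sum_apply]
            simp
          rw [Finset.sum_congr rfl (fun k _ => by rw [happ k])]
          apply aux_ortho
          intro s hs s' hs' heq
          rw [Finset.mem_coe, Finset.mem_Ioc] at hs hs'
          exact hinjwin i hi s s' (by omega) (by omega) (by omega) (by omega) heq
        rw [hww]
      calc ∑ k : Fin n, (G (m k - m k % 2^ℓ) k - G (m k - m k % 2^(ℓ+1)) k)^2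
          = ∑ k ∈ B, (G (m k - m k % 2^ℓ) k - G (m k - m k % 2^(ℓ+1)) k)^2 :=
            (Finset.sum_subset (Finset.subset_univ B)
              (fun k _ hk => hoff k hk)).symm
        _ = ∑ j' ∈ B.image v, ∑ k ∈ B.filter (fun k => v k = j'),
              (G (m k - m k % 2^ℓ) k - G (m k - m k % 2^(ℓ+1)) k)^2 :=
            (Finset.sum_fiberwise_of_maps_to
              (fun k hk => Finset.mem_image_of_mem v hk) _).symm
        _ ≤ ∑ j' ∈ B.image v, L^2 * ∑ s ∈ Finset.Ioc (i-1+j') (i-1+j'+2^ℓ), (d s)^2 :=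
            Finset.sum_le_sum hfiber
        _ = L^2 * ∑ j' ∈ B.image v, ∑ s ∈ Finset.Ioc (i-1+j') (i-1+j'+2^ℓ), (d s)^2 :=
            (Finset.mul_sum _ _ _).symm
        _ ≤ L^2 * ∑ s ∈ Finset.Ioc (i-1) (i-1+n), (d s)^2 := by
            apply mul_le_mul_of_nonneg_left _ (sq_nonneg L)
            rw [← Finset.sum_biUnion hdisj]
            apply Finset.sum_le_sum_of_subset_of_nonneg
            · intro s hs
              rw [Finset.mem_biUnion] at hs
              obtain ⟨j', hj', hs⟩ := hs
              rw [Finset.mem_Ioc] at hs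
              have := (himg j' hj').2
              rw [Finset.mem_Ioc]
              omega
            · intro s _ _
              exact sq_nonneg _
    -- telescoping and Cauchy-Schwarz
    have htele : ∀ k : Fin n, grad f (x (i-1)) k - grad f (x (jf i k - 1)) k
        = -(∑ ℓ ∈ Finset.range c, (G (m k - m k % 2^ℓ) k - G (m k - m k % 2^(ℓ+1)) k)) := by
      intro k
      have h0 := Finset.sum_range_sub' (fun ℓ => G (m k - m k % 2^ℓ) k) c
      have e0 : m k - m k % 2^0 = m k := by
        rw [pow_zero, Nat.mod_one]
        omega
      have e1 : m k - m k % 2^c = 0 := by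
        rw [Nat.mod_eq_of_lt (by have := (hmprop k).1; omega)]
        omega
      rw [e0, e1] at h0
      rw [h0]
      simp only [hG]
      rw [(hmprop k).2]
      simp
    calc ∑ k : Fin n, (grad f (x (i-1)) k - grad f (x (jf i k - 1)) k)^2
        = ∑ k : Fin n, (∑ ℓ ∈ Finset.range c,
            (G (m k - m k % 2^ℓ) k - G (m k - m k % 2^(ℓ+1)) k))^2 := by
          refine Finset.sum_congr rfl fun k _ => ?_
          rw [htele k, neg_sq]
      _ ≤ ∑ k : Fin n, (c:ℝ) * ∑ ℓ ∈ Finset.range c,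
            (G (m k - m k % 2^ℓ) k - G (m k - m k % 2^(ℓ+1)) k)^2 := by
          apply Finset.sum_le_sum
          intro k _
          have := sq_sum_le_card_mul_sum_sq
            (s := Finset.range c)
            (f := fun ℓ => G (m k - m k % 2^ℓ) k - G (m k - m k % 2^(ℓ+1)) k)
          simpa [Finset.card_range] using this
      _ = (c:ℝ) * ∑ ℓ ∈ Finset.range c, ∑ k : Fin n,
            (G (m k - m k % 2^ℓ) k - G (m k - m k % 2^(ℓ+1)) k)^2 := by
          rw [← Finset.mul_sum, Finset.sum_comm]
      _ ≤ (c:ℝ) * ∑ ℓ ∈ Finset.range c,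
            (L^2 * ∑ s ∈ Finset.Ioc (i-1) (i-1+n), (d s)^2) := by
          apply mul_le_mul_of_nonneg_left _ (by positivity)
          apply Finset.sum_le_sum
          intro ℓ hℓ
          exact hlevel ℓ (Finset.mem_range.1 hℓ)
      _ = (c:ℝ)^2 * L^2 * ∑ s ∈ Finset.Ioc (i-1) (i-1+n), (d s)^2 := by
          rw [Finset.sum_const, Finset.card_range, nsmul_eq_mul]
          ring
  -- final assembly
  have hn0R : (0:ℝ) ≤ (n:ℝ) := Nat.cast_nonneg n
  have hnpos : (0:ℝ) < (n:ℝ) := by exact_mod_cast (by omega : 0 < n)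
  set T := t - 2*n with hTdef
  have hIcc1 : Finset.Icc (t - 2*n + 1) t = Finset.Icc (T+1) (T+2*n) := by
    congr 1 <;> omega
  have hIcc2 : Finset.Icc (t - 2*n + 1) (t - n) = Finset.Icc (T+1) (T+n) := by
    congr 1 <;> omega
  rw [hIcc1, hIcc2]
  set SP := ∑ s ∈ Finset.Icc (T+1) (T+2*n), (F (x (s-1)) - F (x s)) with hSP
  set Sb := ∑ s ∈ Finset.Icc (T+1) (T+2*n), b s with hSb
  set Sd := ∑ s ∈ Finset.Icc (T+1) (T+2*n), (d s)^2 with hSdd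
  set A := ∑ i ∈ Finset.Icc (T+1) (T+n), ∑ k : Fin n,
    What (grad f (x (i-1)) k) (x (i-1) k) Γ (Ψ k) with hA
  have hSd0 : 0 ≤ Sd := Finset.sum_nonneg fun s _ => sq_nonneg _
  have hSPb : Sb + (Γ-L)/2 * Sd ≤ SP := by
    rw [hSP, hSb, hSdd, Finset.mul_sum, ← Finset.sum_add_distrib]
    refine Finset.sum_le_sum fun s hs => ?_
    rw [Finset.mem_Icc] at hs
    exact hP s (by omega)
  have hSbd : Γ/4 * Sd ≤ Sb := by
    rw [hSb, hSdd, Finset.mul_sum]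
    refine Finset.sum_le_sum fun s hs => ?_
    rw [Finset.mem_Icc] at hs
    exact hbd s (by omega)
  -- counting bound
  have hcount : ∑ i ∈ Finset.Icc (T+1) (T+n), ∑ k : Fin n, b (jf i k) ≤ (n:ℝ) * Sb := by
    have hmaps : ∀ p ∈ (Finset.Icc (T+1) (T+n)) ×ˢ (Finset.univ : Finset (Fin n)),
        jf p.1 p.2 ∈ Finset.Icc (T+1) (T+2*n) := by
      intro p hp
      rw [Finset.mem_product, Finset.mem_Icc] at hp
      obtain ⟨h1, h2, _, _⟩ := hjf p.1 p.2 (by omega)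
      rw [Finset.mem_Icc]
      omega
    have hprod : ∑ i ∈ Finset.Icc (T+1) (T+n), ∑ k : Fin n, b (jf i k)
        = ∑ p ∈ (Finset.Icc (T+1) (T+n)) ×ˢ (Finset.univ : Finset (Fin n)), b (jf p.1 p.2) := by
      rw [Finset.sum_product]
    rw [hprod, ← Finset.sum_fiberwise_of_maps_to' hmaps b]
    have hinner : ∀ j' ∈ Finset.Icc (T+1) (T+2*n),
        ∑ p ∈ ((Finset.Icc (T+1) (T+n)) ×ˢ (Finset.univ : Finset (Fin n))).filter
          (fun p => jf p.1 p.2 = j'), b j' ≤ (n:ℝ) * b j' := by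
      intro j' hj'
      rw [Finset.sum_const, nsmul_eq_mul]
      rw [Finset.mem_Icc] at hj'
      have hcard : (((Finset.Icc (T+1) (T+n)) ×ˢ (Finset.univ : Finset (Fin n))).filter
          (fun p => jf p.1 p.2 = j')).card ≤ n := by
        have hinj : Set.InjOn (fun p : ℕ × Fin n => p.1)
            (((Finset.Icc (T+1) (T+n)) ×ˢ (Finset.univ : Finset (Fin n))).filter
              (fun p => jf p.1 p.2 = j')) := by
          intro p hp p' hp' heq
          simp only [Finset.coe_filter, Set.mem_setOf_eq, Finset.mem_product,
            Finset.mem_Icc] at hp hp'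
          have hi1 : 1 ≤ p.1 := by omega
          have hi1' : 1 ≤ p'.1 := by omega
          have e1 : idx (jf p.1 p.2) = p.2 := (hjf p.1 p.2 hi1).2.2.1
          have e2 : idx (jf p'.1 p'.2) = p'.2 := (hjf p'.1 p'.2 hi1').2.2.1
          have : p.2 = p'.2 := by
            rw [← e1, ← e2, hp.2, hp'.2]
          exact Prod.ext heq this
        have hmapsto : ∀ p ∈ ((Finset.Icc (T+1) (T+n)) ×ˢ (Finset.univ : Finset (Fin n))).filter
            (fun p => jf p.1 p.2 = j'), (fun p : ℕ × Fin n => p.1) p ∈ Finset.Icc (T+1) (T+n) := by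
          intro p hp
          rw [Finset.mem_filter, Finset.mem_product] at hp
          exact hp.1.1
        have := Finset.card_le_card_of_injOn _ hmapsto hinj
        simpa [Nat.card_Icc] using this
      have hb' : 0 ≤ b j' := hb0 j' (by omega)
      exact mul_le_mul_of_nonneg_right (by exact_mod_cast hcard) hb'
    refine le_trans (Finset.sum_le_sum hinner) ?_
    rw [hSb, Finset.mul_sum]
  -- gradient-difference bound
  have hdelta : ∑ i ∈ Finset.Icc (T+1) (T+n), ∑ k : Fin n,
      (grad f (x (i-1)) k - grad f (x (jf i k - 1)) k)^2
      ≤ (c:ℝ)^2 * L^2 * ((n:ℝ) * Sd) := by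
    have hone : ∀ i ∈ Finset.Icc (T+1) (T+n), ∑ k : Fin n,
        (grad f (x (i-1)) k - grad f (x (jf i k - 1)) k)^2
        ≤ (c:ℝ)^2 * L^2 * Sd := by
      intro i hi
      rw [Finset.mem_Icc] at hi
      refine le_trans (hdyadic i (by omega)) ?_
      apply mul_le_mul_of_nonneg_left _ (by positivity)
      apply Finset.sum_le_sum_of_subset_of_nonneg
      · intro s hs
        rw [Finset.mem_Ioc] at hs
        rw [Finset.mem_Icc]
        omega
      · intro s _ _
        exact sq_nonneg _
    calc ∑ i ∈ Finset.Icc (T+1) (T+n), ∑ k : Fin n,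
          (grad f (x (i-1)) k - grad f (x (jf i k - 1)) k)^2
        ≤ ∑ i ∈ Finset.Icc (T+1) (T+n), (c:ℝ)^2 * L^2 * Sd := Finset.sum_le_sum hone
      _ = (c:ℝ)^2 * L^2 * ((n:ℝ) * Sd) := by
          rw [Finset.sum_const, nsmul_eq_mul, Nat.card_Icc]
          rw [show T + n + 1 - (T+1) = n by omega]
          ring
  -- main bound on A
  have hAbound : A ≤ 2*((n:ℝ)*Sb) + (n:ℝ)*((c:ℝ)^2*L^2/Γ*Sd) := by
    have step1 : A ≤ ∑ i ∈ Finset.Icc (T+1) (T+n), ∑ k : Fin n,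
        (2 * b (jf i k) + (grad f (x (i-1)) k - grad f (x (jf i k - 1)) k)^2 / Γ) := by
      rw [hA]
      refine Finset.sum_le_sum fun i hi => ?_
      rw [Finset.mem_Icc] at hi
      exact Finset.sum_le_sum fun k _ => hHA i (by omega) k
    have step2 : ∑ i ∈ Finset.Icc (T+1) (T+n), ∑ k : Fin n,
        (2 * b (jf i k) + (grad f (x (i-1)) k - grad f (x (jf i k - 1)) k)^2 / Γ)
        = 2 * (∑ i ∈ Finset.Icc (T+1) (T+n), ∑ k : Fin n, b (jf i k))
          + (∑ i ∈ Finset.Icc (T+1) (T+n), ∑ k : Fin n,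
              (grad f (x (i-1)) k - grad f (x (jf i k - 1)) k)^2) / Γ := by
      rw [Finset.mul_sum, Finset.sum_div, ← Finset.sum_add_distrib]
      refine Finset.sum_congr rfl fun i _ => ?_
      rw [Finset.mul_sum, Finset.sum_div, ← Finset.sum_add_distrib]
    have step3 : (∑ i ∈ Finset.Icc (T+1) (T+n), ∑ k : Fin n,
        (grad f (x (i-1)) k - grad f (x (jf i k - 1)) k)^2) / Γ
        ≤ ((c:ℝ)^2 * L^2 * ((n:ℝ) * Sd)) / Γ :=
      (div_le_div_iff_of_pos_right hΓpos).2 hdelta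
    have heq : ((c:ℝ)^2 * L^2 * ((n:ℝ) * Sd)) / Γ = (n:ℝ)*((c:ℝ)^2*L^2/Γ*Sd) := by
      ring
    refine le_trans step1 ?_
    rw [step2, ← heq]
    exact add_le_add (by linarith [hcount]) step3
  -- numeric inequality
  have hnum : 4*(c:ℝ)^2*L^2 ≤ Γ*(7*Γ - 6*L) := by
    have h3pos : (0:ℝ) < Real.sqrt 3 := by linarith [hsqrt3.1]
    have h43 : 4 * L * (c:ℝ) ≤ Real.sqrt 3 * Γ := by
      rw [ge_iff_le, div_mul_eq_mul_div, div_mul_eq_mul_div, div_le_iff₀ h3pos] at hΓ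
      linarith [hΓ]
    have hs3 : Real.sqrt 3 * Real.sqrt 3 = 3 := Real.mul_self_sqrt (by norm_num)
    have key1 : (4*L*(c:ℝ))*(4*L*(c:ℝ)) ≤ (Real.sqrt 3*Γ)*(Real.sqrt 3*Γ) :=
      mul_self_le_mul_self (by positivity) h43
    have key2 : 6*L*Γ ≤ 3*Γ*Γ := by nlinarith [hΓ2L, hΓpos.le, hL0]
    nlinarith [key1, hs3, key2, sq_nonneg (L*(c:ℝ))]
  have hdiv : (c:ℝ)^2*L^2/Γ * Sd ≤ (7*Γ-6*L)/4 * Sd := by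
    apply mul_le_mul_of_nonneg_right _ hSd0
    rw [div_le_div_iff₀ hΓpos (by norm_num : (0:ℝ) < 4)]
    nlinarith [hnum]
  -- conclude
  have e1 : (n:ℝ) * ((c:ℝ)^2*L^2/Γ * Sd) ≤ (n:ℝ) * ((7*Γ-6*L)/4 * Sd) :=
    mul_le_mul_of_nonneg_left hdiv hn0R
  have e2 : (n:ℝ) * (Γ/4 * Sd) ≤ (n:ℝ) * Sb :=
    mul_le_mul_of_nonneg_left hSbd hn0R
  have e3 : 3*(n:ℝ)*(Sb + (Γ-L)/2*Sd) ≤ 3*(n:ℝ)*SP := by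
    apply mul_le_mul_of_nonneg_left hSPb
    positivity
  have hfin : A ≤ 3*(n:ℝ)*SP := by nlinarith [hAbound, e1, e2, e3]
  rw [ge_iff_le]
  have hq1 : 1/(3*(n:ℝ)) * A ≤ 1/(3*(n:ℝ)) * (3*(n:ℝ)*SP) := by
    apply mul_le_mul_of_nonneg_left hfin
    positivity
  have hq2 : 1/(3*(n:ℝ)) * (3*(n:ℝ)*SP) = SP := by
    field_simp
  linarith
end

section
/- κ_max gradient-difference bound: let f : ℝⁿ → ℝ be differentiable and L-Lipschitz-smooth. Let x^{τ₁}, x^{τ₁+1}, …, x^{τ₂} be a finite sequence in ℝⁿ with x^{τ} = x^{τ−1} + Δ_τ·e_{k_τ} for reals Δ_τ, and suppose each coordinate k ∈ {1, …, n} satisfies #{τ ∈ (τ₁, τ₂] : k_τ = k} ≤ κ_max. Then Σ_{k=1}^n ( ∇_k f(x^{τ₂}) − ∇_k f(x^{τ₁}) )² ≤ L²·κ_max·Σ_{τ=τ₁+1}^{τ₂} (Δ_τ)². -/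
/-- `κ_max` gradient-difference bound: for an `L`-Lipschitz-smooth differentiable `f`
and a finite single-coordinate-update sequence `x^τ = x^{τ-1} + Δ_τ·e_{k_τ}`
(for `τ₁ < τ ≤ τ₂`) in which each coordinate is updated at most `κ_max` times,
`Σ_k (∇_k f(x^{τ₂}) - ∇_k f(x^{τ₁}))² ≤ L²·κ_max·Σ_{τ=τ₁+1}^{τ₂} Δ_τ²`. -/
theorem kappa_max_gradient_difference_bound {n : ℕ}
    (f : (Fin n → ℝ) → ℝ) (hf : Differentiable ℝ f) (L : ℝ) (hL0 : 0 ≤ L)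
    (hL : ∀ x y : Fin n → ℝ,
      Real.sqrt (∑ k, (grad f (x + y) k - grad f x k) ^ 2) ≤
        L * Real.sqrt (∑ k, y k ^ 2))
    (τ₁ τ₂ : ℕ) (hτ : τ₁ ≤ τ₂)
    (x : ℕ → Fin n → ℝ) (idx : ℕ → Fin n) (Δ : ℕ → ℝ)
    (hx : ∀ τ : ℕ, τ₁ < τ → τ ≤ τ₂ →
      x τ = x (τ - 1) + Δ τ • (Pi.single (idx τ) 1 : Fin n → ℝ))
    (κmax : ℕ)
    (hκ : ∀ c : Fin n,
      ((Finset.Ioc τ₁ τ₂).filter fun τ => idx τ = c).card ≤ κmax) :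
    ∑ k, (grad f (x τ₂) k - grad f (x τ₁) k) ^ 2 ≤
      L ^ 2 * κmax * ∑ τ ∈ Finset.Ioc τ₁ τ₂, Δ τ ^ 2 := by
  set y : Fin n → ℝ := x τ₂ - x τ₁ with hy
  -- telescoping
  have htel : ∀ m, τ₁ ≤ m → m ≤ τ₂ →
      x m = x τ₁ + ∑ τ ∈ Finset.Ioc τ₁ m, Δ τ • (Pi.single (idx τ) 1 : Fin n → ℝ) := by
    intro m hm
    induction m, hm using Nat.le_induction with
    | base => intro _; simp
    | succ m hm ih =>
      intro hm2
      rw [Finset.sum_Ioc_succ_top (by omega), hx (m+1) (by omega) hm2]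
      simp only [Nat.add_sub_cancel]
      rw [ih (by omega)]
      simp [add_assoc]
  have hyval : y = ∑ τ ∈ Finset.Ioc τ₁ τ₂, Δ τ • (Pi.single (idx τ) 1 : Fin n → ℝ) := by
    rw [hy, htel τ₂ hτ le_rfl]; abel
  -- coordinates of y
  have hyk : ∀ k : Fin n, y k =
      ∑ τ ∈ (Finset.Ioc τ₁ τ₂).filter (fun τ => idx τ = k), Δ τ := by
    intro k
    rw [hyval, Finset.sum_apply, Finset.sum_filter]
    refine Finset.sum_congr rfl fun τ _ => ?_
    by_cases h : idx τ = k <;> simp [h, Pi.single_apply]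
  -- main bound from Lipschitz
  have h1 : ∑ k, (grad f (x τ₂) k - grad f (x τ₁) k) ^ 2 ≤ L ^ 2 * ∑ k, y k ^ 2 := by
    have := hL (x τ₁) y
    rw [show x τ₁ + y = x τ₂ by rw [hy]; ring] at this
    have hnn : (0:ℝ) ≤ ∑ k, (grad f (x τ₂) k - grad f (x τ₁) k) ^ 2 := by positivity
    have hnn2 : (0:ℝ) ≤ ∑ k, y k ^ 2 := by positivity
    calc ∑ k, (grad f (x τ₂) k - grad f (x τ₁) k) ^ 2
        = Real.sqrt (∑ k, (grad f (x τ₂) k - grad f (x τ₁) k) ^ 2) ^ 2 := by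
          rw [Real.sq_sqrt hnn]
      _ ≤ (L * Real.sqrt (∑ k, y k ^ 2)) ^ 2 := by
          apply pow_le_pow_left₀ (Real.sqrt_nonneg _) this
      _ = L ^ 2 * ∑ k, y k ^ 2 := by
          rw [mul_pow, Real.sq_sqrt hnn2]
  refine h1.trans ?_
  rw [mul_assoc]
  apply mul_le_mul_of_nonneg_left ?_ (by positivity)
  -- Σ_k y k ^ 2 ≤ κmax * Σ Δ²
  have h2 : ∀ k : Fin n, y k ^ 2 ≤
      (κmax : ℝ) * ∑ τ ∈ (Finset.Ioc τ₁ τ₂).filter (fun τ => idx τ = k), Δ τ ^ 2 := by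
    intro k
    rw [hyk k]
    refine (sq_sum_le_card_mul_sum_sq).trans ?_
    apply mul_le_mul_of_nonneg_right ?_ (by positivity)
    exact_mod_cast hκ k
  calc ∑ k, y k ^ 2
      ≤ ∑ k, (κmax : ℝ) * ∑ τ ∈ (Finset.Ioc τ₁ τ₂).filter (fun τ => idx τ = k), Δ τ ^ 2 :=
        Finset.sum_le_sum fun k _ => h2 k
    _ = (κmax : ℝ) * ∑ k, ∑ τ ∈ (Finset.Ioc τ₁ τ₂).filter (fun τ => idx τ = k), Δ τ ^ 2 := by
        rw [Finset.mul_sum]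
    _ = (κmax : ℝ) * ∑ τ ∈ Finset.Ioc τ₁ τ₂, Δ τ ^ 2 := by
        rw [Finset.sum_fiberwise (Finset.Ioc τ₁ τ₂) idx (fun τ => Δ τ ^ 2)]
end
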